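/- arXiv:2409.03898 — 3 statements merged into one kernel-verified Lean document; each statement's English description precedes it below -/
import Mathlib

section
/- There exist g ∈ ℤ⁺ and a constant c > 0 such that for infinitely many n there is a DAG G on n nodes for which, with unbounded fast memory (r ≥ n): OPT_IO^(1) = 0 while OPT_IO^(2) ≥ c·n; i.e., every minimum-cost 1-processor pebbling uses no I/O moves, yet every minimum-cost 2-processor pebbling uses at least c·n I/O moves. -/
open scoped Classical

/-- A relation is a DAG edge relation if its transitive closure is irreflexive
(i.e., the directed graph is acyclic). -/
def IsDag {V : Type*} (E : V → V → Prop) : Prop := Irreflexive (Relation.TransGen E)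

namespace MPP

variable {V : Type*} [DecidableEq V] {k : ℕ}

/-- A configuration of multiprocessor red-blue pebbling: a set of red pebbles
for each of the `k` processors, and a set of blue pebbles. -/
structure Conf (V : Type*) (k : ℕ) where
  red : Fin k → Finset V
  blue : Finset V

/-- Moves of multiprocessor red-blue pebbling. `save`/`load` are the parallel I/O
moves (R1-M)/(R2-M), `compute` is (R3-M), and the removals are (R4-M). -/
inductive Move (V : Type*) (k : ℕ) where
  | save (m : ℕ) (f : Fin m → Fin k) (v : Fin m → V)
  | load (m : ℕ) (f : Fin m → Fin k) (v : Fin m → V)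
  | compute (m : ℕ) (f : Fin m → Fin k) (v : Fin m → V)
  | removeRed (j : Fin k) (x : V)
  | removeBlue (x : V)

/-- Add, for each `i`, the node `v i` to the red pebbles of processor `f i`. -/
def addRed (C : Conf V k) {m : ℕ} (f : Fin m → Fin k) (v : Fin m → V) :
    Fin k → Finset V :=
  fun j => C.red j ∪ (Finset.univ.filter (fun i => f i = j)).image v

/-- The effect of a move on a configuration. -/
def apply : Move V k → Conf V k → Conf V k
  | .save _ _ v, C => ⟨C.red, C.blue ∪ Finset.univ.image v⟩
  | .load _ f v, C => ⟨addRed C f v, C.blue⟩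
  | .compute _ f v, C => ⟨addRed C f v, C.blue⟩
  | .removeRed j x, C => ⟨Function.update C.red j (C.red j \ {x}), C.blue⟩
  | .removeBlue x, C => ⟨C.red, C.blue \ {x}⟩

/-- When a move may legally be performed in a given configuration. -/
def Legal (E : V → V → Prop) : Conf V k → Move V k → Prop
  | C, .save m f v => m ≤ k ∧ Function.Injective f ∧ ∀ i, v i ∈ C.red (f i)
  | C, .load m f v => m ≤ k ∧ Function.Injective f ∧ ∀ i, v i ∈ C.blue
  | C, .compute m f v =>
      m ≤ k ∧ Function.Injective f ∧ ∀ i, ∀ u, E u (v i) → u ∈ C.red (f i)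
  | _, .removeRed _ _ => True
  | _, .removeBlue _ => True

/-- A configuration respects the fast-memory bound `r` for every processor. -/
def Valid (r : ℕ) (C : Conf V k) : Prop := ∀ j, (C.red j).card ≤ r

/-- `Run E r C ms C'` : starting from configuration `C`, the list of moves `ms`
may be legally executed (respecting the memory bound `r` throughout) and leads
to configuration `C'`. -/
inductive Run (E : V → V → Prop) (r : ℕ) : Conf V k → List (Move V k) → Conf V k → Prop
  | nil (C : Conf V k) : Run E r C [] C
  | cons {C C'' : Conf V k} {mv : Move V k} {ms : List (Move V k)} :
      Legal E C mv → Valid r (apply mv C) → Run E r (apply mv C) ms C'' →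
      Run E r C (mv :: ms) C''

/-- Cost of a single move: `g` for I/O, `1` for compute, `0` for removal. -/
def moveCost (g : ℕ) : Move V k → ℕ
  | .save .. => g
  | .load .. => g
  | .compute .. => 1
  | .removeRed .. => 0
  | .removeBlue .. => 0

/-- Total cost of a sequence of moves. -/
def cost (g : ℕ) (ms : List (Move V k)) : ℕ := (ms.map (moveCost g)).sum

def isIO : Move V k → Bool
  | .save .. => true
  | .load .. => true
  | _ => false

/-- The number of I/O moves in a sequence of moves. -/
def ioCount (ms : List (Move V k)) : ℕ := (ms.filter isIO).length

def isCompute : Move V k → Bool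
  | .compute .. => true
  | _ => false

/-- The number of compute moves in a sequence of moves. -/
def computeCount (ms : List (Move V k)) : ℕ := (ms.filter isCompute).length

/-- A sink of the DAG: a node with no outgoing edge. -/
def IsSink (E : V → V → Prop) (v : V) : Prop := ∀ u, ¬ E v u

/-- A terminal configuration: every sink carries at least one pebble. -/
def Terminal (E : V → V → Prop) (C : Conf V k) : Prop :=
  ∀ v, IsSink E v → v ∈ C.blue ∨ ∃ j, v ∈ C.red j

/-- The initial (all-empty) configuration. -/
def init (V : Type*) (k : ℕ) : Conf V k := ⟨fun _ => ∅, ∅⟩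

/-- `ms` is a pebbling strategy: a legal run from the empty configuration ending
in a terminal configuration. -/
def IsPebbling (E : V → V → Prop) (r : ℕ) (ms : List (Move V k)) : Prop :=
  ∃ Cf, Run E r (init V k) ms Cf ∧ Terminal E Cf

/-- The optimal (minimum) cost of a pebbling strategy with `k` processors,
memory bound `r` per processor, and I/O cost `g`. -/
noncomputable def optCost (E : V → V → Prop) (k r g : ℕ) : ℕ :=
  sInf {c | ∃ ms : List (Move V k), IsPebbling E r ms ∧ cost g ms = c}

/-- The minimum number of I/O moves among all minimum-cost pebbling strategies. -/
noncomputable def optIO (E : V → V → Prop) (k r g : ℕ) : ℕ :=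
  sInf {q | ∃ ms : List (Move V k),
    IsPebbling E r ms ∧ cost g ms = optCost E k r g ∧ ioCount ms = q}

/-- The maximum in-degree `Δ_in` of the DAG. -/
noncomputable def maxInDeg (E : V → V → Prop) [Fintype V] : ℕ :=
  Finset.univ.sup fun v => (Finset.univ.filter fun u => E u v).card

/-- The set of nodes computed by a move. -/
def computes : Move V k → Set V
  | .compute _ _ v => Set.range v
  | _ => ∅

/-- `x` is computed by the move at position `s` of `ms`. -/
def ComputedAt (ms : List (Move V k)) (s : ℕ) (x : V) : Prop :=
  ∃ mv, ms[s]? = some mv ∧ x ∈ computes mv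

/-- The set of nodes computed by some move strictly before position `t`. -/
def computedBefore (ms : List (Move V k)) (t : ℕ) : Set V :=
  {x | ∃ s < t, ComputedAt ms s x}

/-- `x` is ready at position `t`: it has not yet been computed, but all its
in-neighbors have been. -/
def Ready (E : V → V → Prop) (ms : List (Move V k)) (t : ℕ) (x : V) : Prop :=
  x ∉ computedBefore ms t ∧ ∀ u, E u x → u ∈ computedBefore ms t

/-- The number of nodes that are ready at position `t`. -/
noncomputable def readyCount (E : V → V → Prop) [Fintype V]
    (ms : List (Move V k)) (t : ℕ) : ℕ :=
  (Finset.univ.filter (Ready E ms t)).card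

end MPP

namespace Aux12
open MPP Finset
set_option linter.unusedSectionVars false

variable {V : Type*} [DecidableEq V] {k : ℕ}

/-- configuration after the first `s` moves -/
def confAt (ms : List (Move V k)) (s : ℕ) : Conf V k :=
  (ms.take s).foldl (fun C mv => MPP.apply mv C) (MPP.init V k)

lemma confAt_succ (ms : List (Move V k)) (s : ℕ) (h : s < ms.length) :
    confAt ms (s+1) = MPP.apply ms[s] (confAt ms s) := by
  unfold confAt
  rw [List.take_succ, List.getElem?_eq_getElem h, Option.toList_some, List.foldl_append]
  rfl

lemma confAt_stop (ms : List (Move V k)) (s : ℕ) (h : ms.length ≤ s) :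
    confAt ms s = confAt ms ms.length := by
  unfold confAt
  rw [List.take_of_length_le h, List.take_of_length_le (le_refl _)]

lemma run_final {E : V → V → Prop} {r : ℕ} {C C' : Conf V k} {l : List (Move V k)}
    (h : Run E r C l C') :
    C' = l.foldl (fun C mv => MPP.apply mv C) C := by
  induction h with
  | nil C => rfl
  | cons hl hv _ ih => simpa using ih

lemma run_legal {E : V → V → Prop} {r : ℕ} {C C' : Conf V k} {l : List (Move V k)}
    (h : Run E r C l C') :
    ∀ s, (hs : s < l.length) →
      Legal E ((l.take s).foldl (fun C mv => MPP.apply mv C) C) l[s] := by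
  induction h with
  | nil C => intro s hs; simp at hs
  | @cons C C'' mv ms hl hv htail ih =>
      intro s hs
      cases s with
      | zero => simpa using hl
      | succ s =>
          have := ih s (by simpa using hs)
          simpa using this

def CompInstAt (ms : List (Move V k)) (s : ℕ) (p : Fin k) (x : V) : Prop :=
  ∃ (m : ℕ) (f : Fin m → Fin k) (v : Fin m → V) (i : Fin m),
    ms[s]? = some (Move.compute m f v) ∧ f i = p ∧ v i = x

def LoadInstAt (ms : List (Move V k)) (s : ℕ) (p : Fin k) (x : V) : Prop :=
  ∃ (m : ℕ) (f : Fin m → Fin k) (v : Fin m → V) (i : Fin m),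
    ms[s]? = some (Move.load m f v) ∧ f i = p ∧ v i = x

def InstAt (ms : List (Move V k)) (s : ℕ) (p : Fin k) (x : V) : Prop :=
  CompInstAt ms s p x ∨ LoadInstAt ms s p x

def Poss (ms : List (Move V k)) (p : Fin k) (x : V) : Prop := ∃ s, InstAt ms s p x

def PossBefore (ms : List (Move V k)) (s : ℕ) (p : Fin k) (x : V) : Prop :=
  ∃ s' < s, InstAt ms s' p x

def CompBefore (ms : List (Move V k)) (s : ℕ) (x : V) : Prop :=
  ∃ s' < s, ∃ p, CompInstAt ms s' p x

lemma computedAt_iff (ms : List (Move V k)) (s : ℕ) (x : V) :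
    MPP.ComputedAt ms s x ↔ ∃ p, CompInstAt ms s p x := by
  constructor
  · rintro ⟨mv, hmv, hx⟩
    cases mv with
    | compute m f v =>
        obtain ⟨i, hi⟩ := hx
        exact ⟨f i, m, f, v, i, hmv, rfl, hi⟩
    | save m f v => exact absurd hx (by simp [MPP.computes])
    | load m f v => exact absurd hx (by simp [MPP.computes])
    | removeRed j y => exact absurd hx (by simp [MPP.computes])
    | removeBlue y => exact absurd hx (by simp [MPP.computes])
  · rintro ⟨p, m, f, v, i, hmv, hfi, hvi⟩
    exact ⟨Move.compute m f v, hmv, ⟨i, hvi⟩⟩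

section RunFacts

variable {E : V → V → Prop} {r : ℕ} {ms : List (Move V k)} {Cf : Conf V k}
variable (hrun : Run E r (MPP.init V k) ms Cf)

include hrun in
lemma legalAt {s : ℕ} (hs : s < ms.length) : Legal E (confAt ms s) ms[s] :=
  run_legal hrun s hs

lemma possBefore_mono {s s' : ℕ} {p : Fin k} {x : V} (h : PossBefore ms s p x)
    (hss : s ≤ s') : PossBefore ms s' p x := by
  obtain ⟨u, hu, hi⟩ := h; exact ⟨u, lt_of_lt_of_le hu hss, hi⟩

lemma compBefore_mono {s s' : ℕ} {x : V} (h : CompBefore ms s x)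
    (hss : s ≤ s') : CompBefore ms s' x := by
  obtain ⟨u, hu, hi⟩ := h; exact ⟨u, lt_of_lt_of_le hu hss, hi⟩

lemma red_mem_poss : ∀ (s : ℕ) (p : Fin k) (x : V),
    x ∈ (confAt ms s).red p → PossBefore ms s p x := by
  intro s
  induction s with
  | zero => intro p x hx; simp [confAt, MPP.init] at hx
  | succ s ih =>
    intro p x hx
    by_cases hs : s < ms.length
    · rw [confAt_succ ms s hs] at hx
      rcases hmv : ms[s] with ⟨m, f, v⟩ | ⟨m, f, v⟩ | ⟨m, f, v⟩ | ⟨j, y⟩ | ⟨y⟩ <;> rw [hmv] at hx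
      · -- save
        exact possBefore_mono (ih p x hx) (Nat.le_succ s)
      · -- load
        simp only [MPP.apply, MPP.addRed, Finset.mem_union] at hx
        rcases hx with hx | hx
        · exact possBefore_mono (ih p x hx) (Nat.le_succ s)
        · obtain ⟨i, hi, hvi⟩ := Finset.mem_image.1 hx
          simp only [Finset.mem_filter] at hi
          exact ⟨s, Nat.lt_succ_self s,
            Or.inr ⟨m, f, v, i, by rw [List.getElem?_eq_getElem hs, hmv], hi.2, hvi⟩⟩
      · -- compute
        simp only [MPP.apply, MPP.addRed, Finset.mem_union] at hx
        rcases hx with hx | hx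
        · exact possBefore_mono (ih p x hx) (Nat.le_succ s)
        · obtain ⟨i, hi, hvi⟩ := Finset.mem_image.1 hx
          simp only [Finset.mem_filter] at hi
          exact ⟨s, Nat.lt_succ_self s,
            Or.inl ⟨m, f, v, i, by rw [List.getElem?_eq_getElem hs, hmv], hi.2, hvi⟩⟩
      · -- removeRed
        simp only [MPP.apply] at hx
        by_cases hpj : p = j
        · subst hpj
          rw [Function.update_self] at hx
          exact possBefore_mono (ih p x (Finset.mem_sdiff.1 hx).1) (Nat.le_succ s)
        · rw [Function.update_of_ne hpj] at hx
          exact possBefore_mono (ih p x hx) (Nat.le_succ s)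
      · -- removeBlue
        exact possBefore_mono (ih p x hx) (Nat.le_succ s)
    · have heq : confAt ms (s+1) = confAt ms s := by
        rw [confAt_stop ms (s+1) (by omega), confAt_stop ms s (by omega)]
      rw [heq] at hx
      exact possBefore_mono (ih p x hx) (Nat.le_succ s)

include hrun in
lemma computed_of_pebbled : ∀ (s : ℕ) (x : V),
    ((∃ p, x ∈ (confAt ms s).red p) ∨ x ∈ (confAt ms s).blue) → CompBefore ms s x := by
  intro s
  induction s with
  | zero => intro x hx; simp [confAt, MPP.init] at hx
  | succ s ih =>
    intro x hx
    by_cases hs : s < ms.length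
    · have hleg := legalAt hrun hs
      rw [confAt_succ ms s hs] at hx
      rcases hmv : ms[s] with ⟨m, f, v⟩ | ⟨m, f, v⟩ | ⟨m, f, v⟩ | ⟨j, y⟩ | ⟨y⟩ <;> rw [hmv] at hx <;>
        rw [hmv] at hleg
      · -- save : blue grows
        rcases hx with ⟨p, hp⟩ | hb
        · exact compBefore_mono (ih x (Or.inl ⟨p, hp⟩)) (Nat.le_succ s)
        · simp only [MPP.apply, Finset.mem_union] at hb
          rcases hb with hb | hb
          · exact compBefore_mono (ih x (Or.inr hb)) (Nat.le_succ s)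
          · obtain ⟨i, _, hvi⟩ := Finset.mem_image.1 hb
            obtain ⟨_, _, hred⟩ := hleg
            exact compBefore_mono (ih x (Or.inl ⟨f i, hvi ▸ hred i⟩)) (Nat.le_succ s)
      · -- load : red grows from blue
        rcases hx with ⟨p, hp⟩ | hb
        · simp only [MPP.apply, MPP.addRed, Finset.mem_union] at hp
          rcases hp with hp | hp
          · exact compBefore_mono (ih x (Or.inl ⟨p, hp⟩)) (Nat.le_succ s)
          · obtain ⟨i, _, hvi⟩ := Finset.mem_image.1 hp
            obtain ⟨_, _, hblue⟩ := hleg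
            exact compBefore_mono (ih x (Or.inr (hvi ▸ hblue i))) (Nat.le_succ s)
        · exact compBefore_mono (ih x (Or.inr hb)) (Nat.le_succ s)
      · -- compute
        rcases hx with ⟨p, hp⟩ | hb
        · simp only [MPP.apply, MPP.addRed, Finset.mem_union] at hp
          rcases hp with hp | hp
          · exact compBefore_mono (ih x (Or.inl ⟨p, hp⟩)) (Nat.le_succ s)
          · obtain ⟨i, hi, hvi⟩ := Finset.mem_image.1 hp
            simp only [Finset.mem_filter] at hi
            exact ⟨s, Nat.lt_succ_self s, p,
              m, f, v, i, by rw [List.getElem?_eq_getElem hs, hmv], hi.2, hvi⟩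
        · exact compBefore_mono (ih x (Or.inr hb)) (Nat.le_succ s)
      · -- removeRed
        rcases hx with ⟨p, hp⟩ | hb
        · simp only [MPP.apply] at hp
          by_cases hpj : p = j
          · subst hpj
            rw [Function.update_self] at hp
            exact compBefore_mono (ih x (Or.inl ⟨p, (Finset.mem_sdiff.1 hp).1⟩))
              (Nat.le_succ s)
          · rw [Function.update_of_ne hpj] at hp
            exact compBefore_mono (ih x (Or.inl ⟨p, hp⟩)) (Nat.le_succ s)
        · exact compBefore_mono (ih x (Or.inr hb)) (Nat.le_succ s)
      · -- removeBlue
        rcases hx with ⟨p, hp⟩ | hb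
        · exact compBefore_mono (ih x (Or.inl ⟨p, hp⟩)) (Nat.le_succ s)
        · simp only [MPP.apply] at hb
          exact compBefore_mono (ih x (Or.inr (Finset.mem_sdiff.1 hb).1)) (Nat.le_succ s)
    · have heq : confAt ms (s+1) = confAt ms s := by
        rw [confAt_stop ms (s+1) (by omega), confAt_stop ms s (by omega)]
      rw [heq] at hx
      exact compBefore_mono (ih x hx) (Nat.le_succ s)

include hrun in
lemma inst_computed {s : ℕ} {p : Fin k} {x : V} (h : InstAt ms s p x) :
    CompBefore ms (s+1) x := by
  rcases h with h | h
  · exact ⟨s, Nat.lt_succ_self s, p, h⟩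
  · obtain ⟨m, f, v, i, hmv, hfi, hvi⟩ := h
    have hs : s < ms.length := by
      have := List.getElem?_eq_some_iff.1 hmv
      exact this.1
    have hleg := legalAt hrun hs
    rw [List.getElem?_eq_getElem hs] at hmv
    rw [Option.some.inj hmv] at hleg
    obtain ⟨_, _, hblue⟩ := hleg
    exact compBefore_mono (computed_of_pebbled hrun s x (Or.inr (hvi ▸ hblue i)))
      (Nat.le_succ s)

end RunFacts

/-- first time a node is computed -/
noncomputable def tau (ms : List (Move V k)) (x : V) : ℕ :=
  sInf {s | MPP.ComputedAt ms s x}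

def Computed (ms : List (Move V k)) (x : V) : Prop := ∃ s, MPP.ComputedAt ms s x

lemma tau_spec {ms : List (Move V k)} {x : V} (hx : Computed ms x) :
    MPP.ComputedAt ms (tau ms x) x := Nat.sInf_mem hx

lemma tau_min {ms : List (Move V k)} {x : V} {s : ℕ} (h : MPP.ComputedAt ms s x) :
    tau ms x ≤ s := Nat.sInf_le h

lemma compBefore_tau {ms : List (Move V k)} {s : ℕ} {x : V} (h : CompBefore ms s x) :
    Computed ms x ∧ tau ms x < s := by
  obtain ⟨s', hs', p, hc⟩ := h
  have : MPP.ComputedAt ms s' x := (computedAt_iff ms s' x).2 ⟨p, hc⟩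
  exact ⟨⟨s', this⟩, lt_of_le_of_lt (tau_min this) hs'⟩

section TauFacts

variable {E : V → V → Prop} {r : ℕ} {ms : List (Move V k)} {Cf : Conf V k}
variable (hrun : Run E r (MPP.init V k) ms Cf)

include hrun in
lemma edge_tau {x u : V} (hx : Computed ms x) (hu : E u x) :
    Computed ms u ∧ tau ms u < tau ms x := by
  have hca := tau_spec hx
  obtain ⟨p, m, f, v, i, hmv, hfi, hvi⟩ := (computedAt_iff ms (tau ms x) x).1 hca
  have hs : tau ms x < ms.length := (List.getElem?_eq_some_iff.1 hmv).1
  have hleg := legalAt hrun hs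
  rw [List.getElem?_eq_getElem hs] at hmv
  rw [Option.some.inj hmv] at hleg
  obtain ⟨_, _, hpred⟩ := hleg
  have hured : u ∈ (confAt ms (tau ms x)).red (f i) := hpred i u (hvi ▸ hu)
  obtain ⟨s', hs', hinst⟩ := red_mem_poss (tau ms x) (f i) u hured
  have := inst_computed hrun hinst
  have h2 := compBefore_tau this
  exact ⟨h2.1, by omega⟩

end TauFacts

end Aux12
namespace Aux12
open MPP Finset
set_option linter.unusedSectionVars false

/-- the zipper graph on `18*T` nodes: two chains of length `9*T`
(side = value mod 2, position = value div 2), with cross edges at the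
start of each block of 9 positions. -/
def EG (T : ℕ) : Fin (18*T) → Fin (18*T) → Prop :=
  fun u v => (v : ℕ)/2 = (u : ℕ)/2 + 1 ∧ ((u : ℕ) % 2 = (v : ℕ) % 2 ∨ ((v : ℕ)/2) % 9 = 0)

def pos {n : ℕ} (x : Fin n) : ℕ := x.val / 2
def sd {n : ℕ} (x : Fin n) : ℕ := x.val % 2

def nd (T : ℕ) (hT : 0 < T) (σ π : ℕ) : Fin (18*T) :=
  ⟨(2*π+σ) % (18*T), Nat.mod_lt _ (by omega)⟩

section Graph

variable {T : ℕ} (hT : 0 < T)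

lemma nd_val {σ π : ℕ} (hσ : σ < 2) (hπ : π < 9*T) : (nd T hT σ π).val = 2*π + σ := by
  simp only [nd]
  exact Nat.mod_eq_of_lt (by omega)

lemma pos_nd {σ π : ℕ} (hσ : σ < 2) (hπ : π < 9*T) : pos (nd T hT σ π) = π := by
  simp only [pos, nd_val hT hσ hπ]; omega

lemma sd_nd {σ π : ℕ} (hσ : σ < 2) (hπ : π < 9*T) : sd (nd T hT σ π) = σ := by
  simp only [sd, nd_val hT hσ hπ]; omega

lemma pos_lt (x : Fin (18*T)) : pos x < 9*T := by
  have := x.isLt; simp only [pos]; omega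

lemma sd_lt (x : Fin (18*T)) : sd x < 2 := by
  have := x.isLt; simp only [sd]; omega

lemma nd_decode (x : Fin (18*T)) : nd T hT (sd x) (pos x) = x := by
  apply Fin.ext
  rw [nd_val hT (sd_lt x) (pos_lt x)]
  simp only [pos, sd]; omega

lemma nd_inj {σ σ' π π' : ℕ} (hσ : σ < 2) (hσ' : σ' < 2) (hπ : π < 9*T) (hπ' : π' < 9*T)
    (h : nd T hT σ π = nd T hT σ' π') : σ = σ' ∧ π = π' := by
  have := congrArg Fin.val h
  rw [nd_val hT hσ hπ, nd_val hT hσ' hπ'] at this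
  omega

lemma edge_elim {u v : Fin (18*T)} (h : EG T u v) :
    pos v = pos u + 1 ∧ (sd u = sd v ∨ pos v % 9 = 0) := h

lemma edge_chain {σ π : ℕ} (hσ : σ < 2) (h : π + 1 < 9*T) :
    EG T (nd T hT σ π) (nd T hT σ (π+1)) := by
  constructor
  · show (nd T hT σ (π+1)).val / 2 = (nd T hT σ π).val / 2 + 1
    rw [nd_val hT hσ h, nd_val hT hσ (by omega)]; omega
  · left
    show (nd T hT σ π).val % 2 = (nd T hT σ (π+1)).val % 2
    rw [nd_val hT hσ h, nd_val hT hσ (by omega)]; omega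

lemma edge_cross {σ σ' π : ℕ} (hσ : σ < 2) (hσ' : σ' < 2) (h : π + 1 < 9*T)
    (hb : (π + 1) % 9 = 0) :
    EG T (nd T hT σ π) (nd T hT σ' (π+1)) := by
  constructor
  · show (nd T hT σ' (π+1)).val / 2 = (nd T hT σ π).val / 2 + 1
    rw [nd_val hT hσ' h, nd_val hT hσ (by omega)]; omega
  · right
    show (nd T hT σ' (π+1)).val / 2 % 9 = 0
    rw [nd_val hT hσ' h]; omega

lemma trans_pos {u v : Fin (18*T)} (h : Relation.TransGen (EG T) u v) : pos u < pos v := by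
  induction h with
  | single h => have := edge_elim h; omega
  | tail _ h ih => have := edge_elim h; omega

lemma isDag_EG (T : ℕ) : IsDag (EG T) := by
  intro x hx
  exact absurd (trans_pos hx) (lt_irrefl _)

lemma isSink_top {x : Fin (18*T)} (h : pos x = 9*T - 1) : IsSink (EG T) x := by
  intro u hu
  have h1 := edge_elim (T := T) hu
  have := pos_lt u
  omega

end Graph

section AllComputed

variable {T k : ℕ} (hT : 0 < T) {r : ℕ} {ms : List (Move (Fin (18*T)) k)}
  {Cf : Conf (Fin (18*T)) k}
variable (hrun : Run (EG T) r (MPP.init (Fin (18*T)) k) ms Cf)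
variable (hterm : Terminal (EG T) Cf)

include hT hrun hterm in
lemma all_computed : ∀ x : Fin (18*T), Computed ms x := by
  have hCf : Cf = confAt ms ms.length := by
    have := run_final hrun
    unfold confAt
    rw [List.take_of_length_le (le_refl _)]
    exact this
  have main : ∀ d : ℕ, ∀ x : Fin (18*T), 9*T - 1 ≤ pos x + d → Computed ms x := by
    intro d
    induction d with
    | zero =>
        intro x hx
        have hpx : pos x = 9*T - 1 := by have := pos_lt x; omega
        have hsink := isSink_top hpx
        have hpeb := hterm x hsink
        rw [hCf] at hpeb
        have : CompBefore ms ms.length x := by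
          apply computed_of_pebbled hrun
          tauto
        exact (compBefore_tau this).1
    | succ d ih =>
        intro x hx
        by_cases hd : 9*T - 1 ≤ pos x + d
        · exact ih x hd
        · have hpx : pos x + d + 1 = 9*T - 1 := by omega
          set y := nd T hT (sd x) (pos x + 1) with hy
          have hylt : pos x + 1 < 9*T := by have := pos_lt x; omega
          have hcy : Computed ms y := by
            apply ih
            rw [pos_nd hT (sd_lt x) hylt]; omega
          have hedge : EG T x y := by
            conv_lhs => rw [← nd_decode hT x]
            exact edge_chain hT (sd_lt x) hylt
          exact (edge_tau hrun hcy hedge).1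
  intro x
  exact main (9*T) x (by omega)

include hrun in
lemma tau_chain_lt (hAll : ∀ x : Fin (18*T), Computed ms x) {σ : ℕ} (hσ : σ < 2) :
    ∀ π' π : ℕ, π < π' → π' < 9*T →
      tau ms (nd T hT σ π) < tau ms (nd T hT σ π') := by
  intro π'
  induction π' with
  | zero => intro π h1 h2; omega
  | succ π' ih =>
      intro π h1 h2
      have hedge : EG T (nd T hT σ π') (nd T hT σ (π'+1)) := edge_chain hT hσ h2
      have hlt : tau ms (nd T hT σ π') < tau ms (nd T hT σ (π'+1)) :=
        (edge_tau hrun (hAll _) hedge).2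
      rcases Nat.lt_or_ge π π' with h | h
      · exact lt_trans (ih π h (by omega)) hlt
      · have : π = π' := by omega
        subst this; exact hlt

include hrun in
lemma tau_chain_le (hAll : ∀ x : Fin (18*T), Computed ms x) {σ : ℕ} (hσ : σ < 2)
    {π π' : ℕ} (h : π ≤ π') (h2 : π' < 9*T) :
    tau ms (nd T hT σ π) ≤ tau ms (nd T hT σ π') := by
  rcases Nat.lt_or_ge π π' with hlt | hge
  · exact le_of_lt (tau_chain_lt hT hrun hAll hσ π' π hlt h2)
  · have : π = π' := by omega
    subst this; exact le_refl _

include hrun in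
lemma tau_pos_lt_of_tau_lt (hAll : ∀ x : Fin (18*T), Computed ms x) {σ : ℕ} (hσ : σ < 2)
    {π π' : ℕ} (hπ : π < 9*T) (hπ' : π' < 9*T)
    (h : tau ms (nd T hT σ π) < tau ms (nd T hT σ π')) : π < π' := by
  by_contra hc
  push_neg at hc
  exact absurd (tau_chain_le hT hrun hAll hσ hc hπ) (by omega)

end AllComputed

end Aux12
namespace Aux12
open MPP Finset
set_option linter.unusedSectionVars false

lemma filter_length_eq_card {α : Type*} (l : List α) (p : α → Bool) :
    (l.filter p).length =
      ((Finset.range l.length).filter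
        (fun s => ∃ mv, l[s]? = some mv ∧ p mv = true)).card := by
  induction l using List.reverseRecOn with
  | nil => simp
  | append_singleton l a ih =>
      rw [List.filter_append, List.length_append, List.length_append]
      simp only [List.length_cons, List.length_nil]
      rw [Finset.range_add_one, Finset.filter_insert]
      have hcongr : (Finset.range l.length).filter
          (fun s => ∃ mv, (l ++ [a])[s]? = some mv ∧ p mv = true)
          = (Finset.range l.length).filter
          (fun s => ∃ mv, l[s]? = some mv ∧ p mv = true) := by
        ext s
        simp only [Finset.mem_filter, Finset.mem_range]
        constructor
        · rintro ⟨hs, mv, hmv, hp⟩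
          rw [List.getElem?_append, if_pos hs] at hmv
          exact ⟨hs, mv, hmv, hp⟩
        · rintro ⟨hs, mv, hmv, hp⟩
          refine ⟨hs, mv, ?_, hp⟩
          rw [List.getElem?_append, if_pos hs]
          exact hmv
      have hlast : (l ++ [a])[l.length]? = some a := by
        rw [List.getElem?_append_right (le_refl _)]
        simp
      by_cases hpa : p a = true
      · rw [if_pos ⟨a, hlast, hpa⟩, Finset.card_insert_of_notMem (by simp),
          hcongr, ← ih]
        simp [List.filter, hpa]
      · rw [if_neg ?_, hcongr, ← ih]
        · simp [List.filter, hpa]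
        · rintro ⟨mv, hmv, hp⟩
          rw [hlast] at hmv
          obtain rfl := Option.some.inj hmv
          exact hpa hp

lemma cost_eq {V : Type*} [DecidableEq V] {k : ℕ} (g : ℕ) (l : List (Move V k)) :
    MPP.cost g l = computeCount l + g * ioCount l := by
  induction l with
  | nil => simp [MPP.cost, computeCount, ioCount]
  | cons mv l ih =>
      have h1 : MPP.cost g (mv :: l) = MPP.moveCost g mv + MPP.cost g l := by
        simp [MPP.cost]
      rw [h1, ih]
      cases mv <;>
        simp [MPP.moveCost, MPP.computeCount, MPP.ioCount, MPP.isCompute, MPP.isIO, List.filter_cons] <;>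
        ring

section Count2

noncomputable def compIdx {V : Type*} [DecidableEq V] {k : ℕ} (ms : List (Move V k)) :
    Finset ℕ :=
  (Finset.range ms.length).filter
    (fun s => ∃ m f v, ms[s]? = some (Move.compute m f v))

noncomputable def loadIdx {V : Type*} [DecidableEq V] {k : ℕ} (ms : List (Move V k)) :
    Finset ℕ :=
  (Finset.range ms.length).filter
    (fun s => ∃ m f v, ms[s]? = some (Move.load m f v))

lemma card_compIdx {V : Type*} [DecidableEq V] {k : ℕ} (ms : List (Move V k)) :
    (compIdx ms).card = computeCount ms := by
  unfold compIdx computeCount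
  rw [filter_length_eq_card]
  congr 1
  ext s
  simp only [Finset.mem_filter, Finset.mem_range]
  constructor
  · rintro ⟨hs, m, f, v, hmv⟩
    exact ⟨hs, Move.compute m f v, hmv, rfl⟩
  · rintro ⟨hs, mv, hmv, hp⟩
    refine ⟨hs, ?_⟩
    cases mv with
    | compute m f v => exact ⟨m, f, v, hmv⟩
    | save m f v => simp [MPP.isCompute] at hp
    | load m f v => simp [MPP.isCompute] at hp
    | removeRed j y => simp [MPP.isCompute] at hp
    | removeBlue y => simp [MPP.isCompute] at hp

lemma card_loadIdx_le {V : Type*} [DecidableEq V] {k : ℕ} (ms : List (Move V k)) :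
    (loadIdx ms).card ≤ ioCount ms := by
  unfold loadIdx ioCount
  rw [filter_length_eq_card]
  apply Finset.card_le_card
  intro s hs
  simp only [Finset.mem_filter, Finset.mem_range] at hs ⊢
  obtain ⟨h1, m, f, v, hmv⟩ := hs
  exact ⟨h1, Move.load m f v, hmv, rfl⟩

variable {r : ℕ} {ms : List (Move (Fin (18*T)) 2)} {Cf : Conf (Fin (18*T)) 2}
variable (hrun : Run (EG T) r (MPP.init (Fin (18*T)) 2) ms Cf)

include hrun in
lemma comp_inst_unique {s : ℕ} {p : Fin 2} {x y : Fin (18*T)}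
    (h1 : CompInstAt ms s p x) (h2 : CompInstAt ms s p y) : x = y := by
  obtain ⟨m, f, v, i, hmv, hfi, hvi⟩ := h1
  obtain ⟨m', f', v', i', hmv', hfi', hvi'⟩ := h2
  have hs : s < ms.length := (List.getElem?_eq_some_iff.1 hmv).1
  rw [List.getElem?_eq_getElem hs] at hmv hmv'
  have heq := (Option.some.inj hmv).symm.trans (Option.some.inj hmv')
  injection heq with hm hf hv
  subst hm
  rw [eq_of_heq hf] at hfi
  rw [eq_of_heq hv] at hvi
  have hleg := legalAt hrun hs
  rw [Option.some.inj hmv'] at hleg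
  obtain ⟨_, hinj, _⟩ := hleg
  have : i = i' := hinj (hfi.trans hfi'.symm)
  rw [← hvi, ← hvi', this]

include hrun in
lemma load_inst_unique {s : ℕ} {p : Fin 2} {x y : Fin (18*T)}
    (h1 : LoadInstAt ms s p x) (h2 : LoadInstAt ms s p y) : x = y := by
  obtain ⟨m, f, v, i, hmv, hfi, hvi⟩ := h1
  obtain ⟨m', f', v', i', hmv', hfi', hvi'⟩ := h2
  have hs : s < ms.length := (List.getElem?_eq_some_iff.1 hmv).1
  rw [List.getElem?_eq_getElem hs] at hmv hmv'
  have heq := (Option.some.inj hmv).symm.trans (Option.some.inj hmv')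
  injection heq with hm hf hv
  subst hm
  rw [eq_of_heq hf] at hfi
  rw [eq_of_heq hv] at hvi
  have hleg := legalAt hrun hs
  rw [Option.some.inj hmv'] at hleg
  obtain ⟨_, hinj, _⟩ := hleg
  have : i = i' := hinj (hfi.trans hfi'.symm)
  rw [← hvi, ← hvi', this]

/-- canonical processsor of the first computation -/
noncomputable def zp (ms : List (Move (Fin (18*T)) 2)) (x : Fin (18*T)) : Fin 2 :=
  if h : ∃ p, CompInstAt ms (tau ms x) p x then h.choose else 0

lemma zp_spec {x : Fin (18*T)} (hx : Computed ms x) :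
    CompInstAt ms (tau ms x) (zp ms x) x := by
  have h : ∃ p, CompInstAt ms (tau ms x) p x :=
    (computedAt_iff ms (tau ms x) x).1 (tau_spec hx)
  rw [zp, dif_pos h]
  exact h.choose_spec

/-- values having a non-canonical compute instance -/
noncomputable def NCV (T : ℕ) (ms : List (Move (Fin (18*T)) 2)) : Finset (Fin (18*T)) :=
  Finset.univ.filter
    (fun x => ∃ s p, CompInstAt ms s p x ∧ ¬(s = tau ms x ∧ p = zp ms x))

/-- values loaded at some point -/
noncomputable def LoadVals (T : ℕ) (ms : List (Move (Fin (18*T)) 2)) : Finset (Fin (18*T)) :=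
  Finset.univ.filter (fun x => ∃ s p, LoadInstAt ms s p x)

noncomputable def ncPick (ms : List (Move (Fin (18*T)) 2)) (x : Fin (18*T)) : ℕ × Fin 2 :=
  if h : ∃ s p, CompInstAt ms s p x ∧ ¬(s = tau ms x ∧ p = zp ms x) then
    (h.choose, h.choose_spec.choose)
  else (0, 0)

lemma ncPick_spec {x : Fin (18*T)} (hx : x ∈ NCV T ms) :
    CompInstAt ms (ncPick ms x).1 (ncPick ms x).2 x ∧
      ¬((ncPick ms x).1 = tau ms x ∧ (ncPick ms x).2 = zp ms x) := by
  rw [NCV, Finset.mem_filter] at hx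
  have h := hx.2
  rw [ncPick, dif_pos h]
  exact h.choose_spec.choose_spec

noncomputable def lvPick (ms : List (Move (Fin (18*T)) 2)) (x : Fin (18*T)) : ℕ × Fin 2 :=
  if h : ∃ s p, LoadInstAt ms s p x then (h.choose, h.choose_spec.choose)
  else (0, 0)

lemma lvPick_spec {x : Fin (18*T)} (hx : x ∈ LoadVals T ms) :
    LoadInstAt ms (lvPick ms x).1 (lvPick ms x).2 x := by
  rw [LoadVals, Finset.mem_filter] at hx
  have h := hx.2
  rw [lvPick, dif_pos h]
  exact h.choose_spec.choose_spec

include hrun in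
lemma count_insts (hAll : ∀ x : Fin (18*T), Computed ms x) :
    18*T + (NCV T ms).card ≤ 2 * computeCount ms := by
  classical
  set Iset : Finset (ℕ × Fin 2) :=
    ((Finset.range ms.length) ×ˢ (Finset.univ : Finset (Fin 2))).filter
      (fun sp => ∃ x, CompInstAt ms sp.1 sp.2 x) with hI
  have hIle : Iset.card ≤ 2 * computeCount ms := by
    have hsub : Iset ⊆ (compIdx ms) ×ˢ (Finset.univ : Finset (Fin 2)) := by
      rintro ⟨s, p⟩ hsp
      rw [hI, Finset.mem_filter] at hsp
      obtain ⟨hmem, x, m, f, v, i, hmv, _, _⟩ := hsp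
      rw [Finset.mem_product] at hmem ⊢
      refine ⟨?_, Finset.mem_univ _⟩
      rw [compIdx, Finset.mem_filter]
      exact ⟨hmem.1, m, f, v, hmv⟩
    calc Iset.card ≤ _ := Finset.card_le_card hsub
      _ = (compIdx ms).card * 2 := by
          rw [Finset.card_product]; simp
      _ ≤ 2 * computeCount ms := by rw [card_compIdx]; omega
  set S1 := Finset.univ.image (fun x : Fin (18*T) => (tau ms x, zp ms x)) with hS1
  set S2 := (NCV T ms).image (ncPick ms) with hS2
  have hcard1 : S1.card = 18*T := by
    rw [hS1, Finset.card_image_of_injOn, Finset.card_univ, Fintype.card_fin]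
    intro x _ y _ hxy
    have h1 : tau ms x = tau ms y := congrArg Prod.fst hxy
    have h2 : zp ms x = zp ms y := congrArg Prod.snd hxy
    exact comp_inst_unique hrun (h1 ▸ h2 ▸ zp_spec (hAll x)) (zp_spec (hAll y))
  have hcard2 : S2.card = (NCV T ms).card := by
    rw [hS2]
    apply Finset.card_image_of_injOn
    intro x hx y hy hxy
    have h1 := (ncPick_spec (ms := ms) hx).1
    have h2 := (ncPick_spec (ms := ms) hy).1
    rw [hxy] at h1
    exact comp_inst_unique hrun h1 h2
  have hdisj : Disjoint S1 S2 := by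
    rw [Finset.disjoint_left]
    rintro ⟨s, p⟩ h1 h2
    rw [hS1, Finset.mem_image] at h1
    rw [hS2, Finset.mem_image] at h2
    obtain ⟨y, _, hy⟩ := h1
    obtain ⟨x, hxN, hx⟩ := h2
    have hy1 : tau ms y = s := congrArg Prod.fst hy
    have hy2 : zp ms y = p := congrArg Prod.snd hy
    have hyy : CompInstAt ms s p y := hy1 ▸ hy2 ▸ zp_spec (hAll y)
    have hxx := ncPick_spec (ms := ms) hxN
    rw [hx] at hxx
    have hxy : x = y := comp_inst_unique hrun hxx.1 hyy
    subst hxy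
    exact hxx.2 ⟨hy1.symm, hy2.symm⟩
  have hsub1 : S1 ⊆ Iset := by
    intro sp hsp
    rw [hS1, Finset.mem_image] at hsp
    obtain ⟨x, _, hx⟩ := hsp
    subst hx
    have hspec := zp_spec (ms := ms) (hAll x)
    rw [hI, Finset.mem_filter, Finset.mem_product]
    obtain ⟨m, f, v, i, hmv, hh1, hh2⟩ := hspec
    exact ⟨⟨Finset.mem_range.2 (List.getElem?_eq_some_iff.1 hmv).1, Finset.mem_univ _⟩,
      x, m, f, v, i, hmv, hh1, hh2⟩
  have hsub2 : S2 ⊆ Iset := by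
    intro sp hsp
    rw [hS2, Finset.mem_image] at hsp
    obtain ⟨x, hxN, hx⟩ := hsp
    subst hx
    have hspec := (ncPick_spec (ms := ms) hxN).1
    rw [hI, Finset.mem_filter, Finset.mem_product]
    obtain ⟨m, f, v, i, hmv, hh1, hh2⟩ := hspec
    exact ⟨⟨Finset.mem_range.2 (List.getElem?_eq_some_iff.1 hmv).1, Finset.mem_univ _⟩,
      x, m, f, v, i, hmv, hh1, hh2⟩
  calc 18*T + (NCV T ms).card = S1.card + S2.card := by rw [hcard1, hcard2]
    _ = (S1 ∪ S2).card := (Finset.card_union_of_disjoint hdisj).symm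
    _ ≤ Iset.card := Finset.card_le_card (Finset.union_subset hsub1 hsub2)
    _ ≤ 2 * computeCount ms := hIle

include hrun in
lemma count_loadvals : (LoadVals T ms).card ≤ 2 * ioCount ms := by
  classical
  have hinj : Set.InjOn (lvPick ms) (LoadVals T ms) := by
    intro x hx y hy hxy
    have h1 := lvPick_spec (ms := ms) hx
    have h2 := lvPick_spec (ms := ms) hy
    rw [hxy] at h1
    exact load_inst_unique hrun h1 h2
  have hmaps : ∀ x ∈ LoadVals T ms, lvPick ms x ∈ (loadIdx ms) ×ˢ (Finset.univ : Finset (Fin 2)) := by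
    intro x hx
    have hspec := lvPick_spec (ms := ms) hx
    obtain ⟨m, f, v, i, hmv, _, _⟩ := hspec
    rw [Finset.mem_product]
    refine ⟨?_, Finset.mem_univ _⟩
    rw [loadIdx, Finset.mem_filter]
    exact ⟨Finset.mem_range.2 (List.getElem?_eq_some_iff.1 hmv).1, m, f, v, hmv⟩
  calc (LoadVals T ms).card ≤ ((loadIdx ms) ×ˢ (Finset.univ : Finset (Fin 2))).card :=
        Finset.card_le_card_of_injOn _ hmaps hinj
    _ = (loadIdx ms).card * 2 := by rw [Finset.card_product]; simp
    _ ≤ 2 * ioCount ms := by have := card_loadIdx_le ms; omega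

end Count2

end Aux12
namespace Aux12
open MPP Finset
set_option linter.unusedSectionVars false
set_option linter.unusedVariables false

lemma fin2_cases {p p' q : Fin 2} (h : p ≠ p') : q = p ∨ q = p' := by
  have h1 := p.isLt; have h2 := p'.isLt; have h3 := q.isLt
  have hne : p.val ≠ p'.val := fun hc => h (Fin.ext hc)
  have : q.val = p.val ∨ q.val = p'.val := by omega
  rcases this with h | h
  · exact Or.inl (Fin.ext h)
  · exact Or.inr (Fin.ext h)

section Pairs

variable {T : ℕ} (hT : 0 < T)
variable {r : ℕ} {ms : List (Move (Fin (18*T)) 2)} {Cf : Conf (Fin (18*T)) 2}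
variable (hrun : Run (EG T) r (MPP.init (Fin (18*T)) 2) ms Cf)
variable (hAll : ∀ x : Fin (18*T), Computed ms x)

/-- a-side nodes involved in a two-new-nodes compute move -/
noncomputable def PairA (T : ℕ) (ms : List (Move (Fin (18*T)) 2)) : Finset (Fin (18*T)) :=
  Finset.univ.filter (fun x => sd x = 0 ∧ ∃ y, y ≠ x ∧ tau ms y = tau ms x)

noncomputable def pairIdx (T : ℕ) (ms : List (Move (Fin (18*T)) 2)) : Finset ℕ :=
  (Finset.range ms.length).filter
    (fun s => ∃ x y : Fin (18*T), x ≠ y ∧ tau ms x = s ∧ tau ms y = s)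

/-- paired block indices -/
noncomputable def PB (T : ℕ) (ms : List (Move (Fin (18*T)) 2)) : Finset ℕ :=
  (Finset.Icc 1 (T-1)).filter
    (fun t => ∃ x ∈ PairA T ms, 9*t ≤ pos x ∧ pos x < 9*t+9)

include hrun hAll in
lemma count_base : 18*T ≤ computeCount ms + (pairIdx T ms).card := by
  classical
  have himg : ∀ x : Fin (18*T), tau ms x ∈ compIdx ms := by
    intro x
    obtain ⟨p, m, f, v, i, hmv, _, _⟩ := (computedAt_iff ms _ x).1 (tau_spec (hAll x))
    rw [compIdx, Finset.mem_filter]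
    exact ⟨Finset.mem_range.2 (List.getElem?_eq_some_iff.1 hmv).1, m, f, v, hmv⟩
  have hn : (Finset.univ : Finset (Fin (18*T))).card =
      ∑ s ∈ compIdx ms, (Finset.univ.filter (fun x => tau ms x = s)).card :=
    Finset.card_eq_sum_card_fiberwise (fun x _ => himg x)
  have hfib : ∀ s ∈ compIdx ms,
      (Finset.univ.filter (fun x : Fin (18*T) => tau ms x = s)).card
        ≤ 1 + (if s ∈ pairIdx T ms then 1 else 0) := by
    intro s hs
    set F := Finset.univ.filter (fun x : Fin (18*T) => tau ms x = s) with hF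
    have hcard2 : F.card ≤ 2 := by
      by_contra hc
      push_neg at hc
      obtain ⟨a, b, c, ha, hb, hc', hab, hac, hbc⟩ := Finset.two_lt_card_iff.1 hc
      rw [hF, Finset.mem_filter] at ha hb hc'
      have hca : MPP.ComputedAt ms s a := ha.2 ▸ tau_spec (hAll a)
      have hcb : MPP.ComputedAt ms s b := hb.2 ▸ tau_spec (hAll b)
      have hcc : MPP.ComputedAt ms s c := hc'.2 ▸ tau_spec (hAll c)
      obtain ⟨mv, hmv, hain⟩ := hca
      obtain ⟨mv', hmv', hbin⟩ := hcb
      obtain ⟨mv'', hmv'', hcin⟩ := hcc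
      rw [hmv] at hmv' hmv''
      obtain rfl := Option.some.inj hmv'
      obtain rfl := Option.some.inj hmv''
      have hslen : s < ms.length := (List.getElem?_eq_some_iff.1 hmv).1
      cases mv with
      | compute m f v =>
          obtain ⟨ia, hia⟩ := hain
          obtain ⟨ib, hib⟩ := hbin
          obtain ⟨ic, hic⟩ := hcin
          have hleg := legalAt hrun hslen
          rw [List.getElem?_eq_getElem hslen] at hmv
          rw [Option.some.inj hmv] at hleg
          obtain ⟨hm, _, _⟩ := hleg
          have h3 : ({ia, ib, ic} : Finset (Fin m)).card = 3 := by
            rw [Finset.card_insert_of_notMem, Finset.card_insert_of_notMem,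
              Finset.card_singleton]
            · simp only [Finset.mem_singleton]
              intro hibc; exact hbc (by rw [← hib, ← hic, hibc])
            · simp only [Finset.mem_insert, Finset.mem_singleton]
              rintro (h | h)
              · exact hab (by rw [← hia, ← hib, h])
              · exact hac (by rw [← hia, ← hic, h])
          have hle := Finset.card_le_univ ({ia, ib, ic} : Finset (Fin m))
          rw [h3] at hle
          have h4 : Fintype.card (Fin m) = m := by simp
          omega
      | save m f v => exact absurd hain (by simp [MPP.computes])
      | load m f v => exact absurd hain (by simp [MPP.computes])
      | removeRed j y => exact absurd hain (by simp [MPP.computes])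
      | removeBlue y => exact absurd hain (by simp [MPP.computes])
    by_cases hpair : s ∈ pairIdx T ms
    · rw [if_pos hpair]; omega
    · rw [if_neg hpair]
      by_contra hcc
      push_neg at hcc
      have h2 : 1 < F.card := by omega
      obtain ⟨a, ha, b, hb, hab⟩ := Finset.one_lt_card.1 h2
      rw [hF, Finset.mem_filter] at ha hb
      apply hpair
      rw [pairIdx, Finset.mem_filter]
      refine ⟨?_, a, b, hab, ha.2, hb.2⟩
      rw [← ha.2]
      have := himg a
      rw [compIdx, Finset.mem_filter] at this
      exact this.1
  have hsum : ∑ s ∈ compIdx ms, (Finset.univ.filter (fun x : Fin (18*T) => tau ms x = s)).card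
      ≤ (compIdx ms).card + (pairIdx T ms).card := by
    calc ∑ s ∈ compIdx ms, (Finset.univ.filter (fun x : Fin (18*T) => tau ms x = s)).card
        ≤ ∑ s ∈ compIdx ms, (1 + if s ∈ pairIdx T ms then 1 else 0) :=
          Finset.sum_le_sum hfib
      _ = (compIdx ms).card + ∑ s ∈ compIdx ms, (if s ∈ pairIdx T ms then 1 else 0) := by
          rw [Finset.sum_add_distrib, Finset.sum_const, smul_eq_mul, mul_one]
      _ ≤ (compIdx ms).card + (pairIdx T ms).card := by
          have : ∑ s ∈ compIdx ms, (if s ∈ pairIdx T ms then 1 else 0)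
              = ((compIdx ms).filter (fun s => s ∈ pairIdx T ms)).card := by
            rw [Finset.card_filter]
          rw [this]
          have hsub : (compIdx ms).filter (fun s => s ∈ pairIdx T ms) ⊆ pairIdx T ms := by
            intro s hs
            exact (Finset.mem_filter.1 hs).2
          have := Finset.card_le_card hsub
          omega
  have huniv : (Finset.univ : Finset (Fin (18*T))).card = 18*T := by
    rw [Finset.card_univ, Fintype.card_fin]
  rw [← card_compIdx]
  omega

include hT hrun hAll in
lemma pair_sides {x y : Fin (18*T)} (hne : x ≠ y) (heq : tau ms x = tau ms y) :
    sd x ≠ sd y := by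
  intro hsd
  have hpos : pos x ≠ pos y := by
    intro hp
    apply hne
    rw [← nd_decode hT x, ← nd_decode hT y, hsd, hp]
  rcases Nat.lt_or_ge (pos x) (pos y) with h | h
  · have := tau_chain_lt hT hrun hAll (sd_lt x) (pos y) (pos x) h (pos_lt y)
    rw [nd_decode hT x, hsd, nd_decode hT y] at this
    omega
  · have hlt : pos y < pos x := by omega
    have := tau_chain_lt hT hrun hAll (sd_lt y) (pos x) (pos y) hlt (pos_lt x)
    rw [nd_decode hT y, ← hsd, nd_decode hT x] at this
    omega

include hT hrun hAll in
lemma pairIdx_le_pairA : (pairIdx T ms).card ≤ (PairA T ms).card := by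
  apply Finset.card_le_card_of_surjOn (tau ms)
  intro s hs
  rw [Finset.mem_coe, pairIdx, Finset.mem_filter] at hs
  obtain ⟨_, x, y, hne, hx, hy⟩ := hs
  have hsides := pair_sides hT hrun hAll hne (hx.trans hy.symm)
  have hsx := sd_lt x
  have hsy := sd_lt y
  rcases Nat.eq_zero_or_pos (sd x) with h0 | h0
  · refine ⟨x, ?_, hx⟩
    rw [Finset.mem_coe, PairA, Finset.mem_filter]
    exact ⟨Finset.mem_univ _, h0, y, fun hc => hne hc.symm, hy.trans hx.symm⟩
  · have h0y : sd y = 0 := by omega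
    refine ⟨y, ?_, hy⟩
    rw [Finset.mem_coe, PairA, Finset.mem_filter]
    exact ⟨Finset.mem_univ _, h0y, x, hne, hx.trans hy.symm⟩

include hT in
lemma blockA_card (t : ℕ) :
    (Finset.univ.filter (fun x : Fin (18*T) => sd x = 0 ∧ 9*t ≤ pos x ∧ pos x < 9*t+9)).card
      ≤ 9 := by
  have : ∀ x ∈ Finset.univ.filter
      (fun x : Fin (18*T) => sd x = 0 ∧ 9*t ≤ pos x ∧ pos x < 9*t+9),
      pos x - 9*t ∈ Finset.range 9 := by
    intro x hx
    rw [Finset.mem_filter] at hx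
    rw [Finset.mem_range]
    omega
  calc _ ≤ (Finset.range 9).card := by
        apply Finset.card_le_card_of_injOn _ this
        intro x hx y hy hxy
        rw [Finset.mem_coe, Finset.mem_filter] at hx hy
        have hxy' : pos x - 9*t = pos y - 9*t := hxy
        have hp : pos x = pos y := by omega
        rw [← nd_decode hT x, ← nd_decode hT y, hx.2.1, hy.2.1, hp]
    _ = 9 := Finset.card_range 9

include hT in
lemma blockA0_card :
    (Finset.univ.filter (fun x : Fin (18*T) => sd x = 0 ∧ pos x < 9)).card ≤ 9 := by
  have h := blockA_card hT (T := T) 0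
  simp only [Nat.mul_zero, Nat.zero_le, true_and, Nat.zero_add] at h
  exact h

include hT in
lemma pairA_le : (PairA T ms).card ≤ 9 + 9 * (PB T ms).card := by
  classical
  have hsub : PairA T ms ⊆
      (Finset.univ.filter (fun x : Fin (18*T) => sd x = 0 ∧ pos x < 9))
      ∪ (PB T ms).biUnion (fun t =>
          Finset.univ.filter (fun x : Fin (18*T) => sd x = 0 ∧ 9*t ≤ pos x ∧ pos x < 9*t+9)) := by
    intro x hx
    have hxmem := hx
    rw [PairA, Finset.mem_filter] at hx
    rw [Finset.mem_union]
    rcases Nat.lt_or_ge (pos x) 9 with h9 | h9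
    · left
      rw [Finset.mem_filter]
      exact ⟨Finset.mem_univ _, hx.2.1, h9⟩
    · right
      rw [Finset.mem_biUnion]
      refine ⟨pos x / 9, ?_, ?_⟩
      · rw [PB, Finset.mem_filter, Finset.mem_Icc]
        have hplt := pos_lt x
        refine ⟨⟨by omega, by omega⟩, x, hxmem, by omega, by omega⟩
      · rw [Finset.mem_filter]
        exact ⟨Finset.mem_univ _, hx.2.1, by omega, by omega⟩
  calc (PairA T ms).card ≤ _ := Finset.card_le_card hsub
    _ ≤ (Finset.univ.filter (fun x : Fin (18*T) => sd x = 0 ∧ pos x < 9)).card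
        + ((PB T ms).biUnion _).card := Finset.card_union_le _ _
    _ ≤ 9 + 9 * (PB T ms).card := by
        have h1 := blockA0_card (T := T) hT
        have h2 : ((PB T ms).biUnion (fun t =>
            Finset.univ.filter
              (fun x : Fin (18*T) => sd x = 0 ∧ 9*t ≤ pos x ∧ pos x < 9*t+9))).card
            ≤ ∑ t ∈ PB T ms, 9 := by
          apply le_trans (Finset.card_biUnion_le)
          exact Finset.sum_le_sum (fun t _ => blockA_card hT t)
        rw [Finset.sum_const, smul_eq_mul] at h2
        omega

end Pairs

end Aux12
namespace Aux12
open MPP Finset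
set_option linter.unusedSectionVars false
set_option linter.unusedVariables false

section Monster

variable {T : ℕ} (hT : 0 < T)
variable {r : ℕ} {ms : List (Move (Fin (18*T)) 2)} {Cf : Conf (Fin (18*T)) 2}
variable (hrun : Run (EG T) r (MPP.init (Fin (18*T)) 2) ms Cf)
variable (hAll : ∀ x : Fin (18*T), Computed ms x)

lemma PBL_card :
    ((PB T ms).filter
      (fun t => ∃ x ∈ LoadVals T ms, 9*(t-1) ≤ pos x ∧ pos x < 9*t+9)).card
      ≤ 2 * (LoadVals T ms).card := by
  classical
  have hsub : (PB T ms).filter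
      (fun t => ∃ x ∈ LoadVals T ms, 9*(t-1) ≤ pos x ∧ pos x < 9*t+9)
      ⊆ (LoadVals T ms).biUnion (fun x => {pos x / 9, pos x / 9 + 1}) := by
    intro t ht
    rw [Finset.mem_filter] at ht
    obtain ⟨htPB, x, hxLV, h1, h2⟩ := ht
    have ht1 : 1 ≤ t := by
      rw [PB, Finset.mem_filter, Finset.mem_Icc] at htPB
      exact htPB.1.1
    rw [Finset.mem_biUnion]
    refine ⟨x, hxLV, ?_⟩
    simp only [Finset.mem_insert, Finset.mem_singleton]
    omega
  calc _ ≤ _ := Finset.card_le_card hsub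
    _ ≤ ∑ x ∈ LoadVals T ms, ({pos x / 9, pos x / 9 + 1} : Finset ℕ).card :=
        Finset.card_biUnion_le
    _ ≤ ∑ x ∈ LoadVals T ms, 2 := by
        apply Finset.sum_le_sum
        intro x _
        apply le_trans (Finset.card_insert_le _ _)
        simp
    _ = 2 * (LoadVals T ms).card := by
        rw [Finset.sum_const, smul_eq_mul]; ring

include hrun in
lemma poss_pred {s : ℕ} {p : Fin 2} {x u : Fin (18*T)} (hc : CompInstAt ms s p x)
    (hu : EG T u x) : Poss ms p u := by
  obtain ⟨m, f, v, i, hmv, hfi, hvi⟩ := hc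
  have hs : s < ms.length := (List.getElem?_eq_some_iff.1 hmv).1
  have hleg := legalAt hrun hs
  rw [List.getElem?_eq_getElem hs] at hmv
  rw [Option.some.inj hmv] at hleg
  obtain ⟨_, _, hpred⟩ := hleg
  have hmem := hpred i u (by rw [hvi]; exact hu)
  rw [hfi] at hmem
  obtain ⟨s', _, hi⟩ := red_mem_poss s p u hmem
  exact ⟨s', hi⟩

include hT hrun in
lemma poss_step {ρ : Fin 2} {σ π : ℕ} (hσ : σ < 2) (hπ1 : 1 ≤ π) (hπ : π < 9*T)
    (hnl : ¬∃ s p, LoadInstAt ms s p (nd T hT σ π))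
    (hp : Poss ms ρ (nd T hT σ π)) : Poss ms ρ (nd T hT σ (π-1)) := by
  obtain ⟨s, hinst⟩ := hp
  rcases hinst with hcomp | hload
  · have hedge : EG T (nd T hT σ (π-1)) (nd T hT σ π) := by
      have h := edge_chain hT hσ (π := π-1) (by omega)
      rw [show π - 1 + 1 = π from by omega] at h
      exact h
    exact poss_pred hrun hcomp hedge
  · exact absurd ⟨s, ρ, hload⟩ hnl

include hT hrun hAll in
lemma monster {t : ℕ} (ht1 : 1 ≤ t) (ht2 : t ≤ T - 1) (hT2 : 2 ≤ T)
    (hnoload : ¬∃ x ∈ LoadVals T ms, 9*(t-1) ≤ pos x ∧ pos x < 9*t+9)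
    (hpair : ∃ x ∈ PairA T ms, 9*t ≤ pos x ∧ pos x < 9*t+9) :
    9 ≤ ((NCV T ms).filter (fun x => 9*(t-1) ≤ pos x ∧ pos x < 9*t)).card := by
  classical
  have hNL : ∀ (σ' π : ℕ), σ' < 2 → 9*(t-1) ≤ π → π < 9*t+9 →
      ¬∃ s p, LoadInstAt ms s p (nd T hT σ' π) := by
    intro σ' π hσ' hlo hhi
    rintro ⟨s, p, hl⟩
    apply hnoload
    refine ⟨nd T hT σ' π, ?_, ?_, ?_⟩
    · rw [LoadVals, Finset.mem_filter]
      exact ⟨Finset.mem_univ _, s, p, hl⟩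
    · rw [pos_nd hT hσ' (by omega)]; exact hlo
    · rw [pos_nd hT hσ' (by omega)]; exact hhi
  have hdesc : ∀ (σ' : ℕ), σ' < 2 → ∀ (j π : ℕ), π = (9*t-1) + j → π < 9*t+9 →
      ∀ ρ, Poss ms ρ (nd T hT σ' π) → Poss ms ρ (nd T hT σ' (9*t-1)) := by
    intro σ' hσ' j
    induction j with
    | zero =>
        intro π hπeq _ ρ hp
        rw [show π = 9*t-1 from by omega] at hp
        exact hp
    | succ j ih =>
        intro π hπeq hπlt ρ hp
        have hstep := poss_step hT hrun hσ' (π := π) (by omega) (by omega)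
          (hNL σ' π hσ' (by omega) hπlt) hp
        exact ih (π-1) (by omega) (by omega) ρ hstep
  obtain ⟨x, hxPA, hxl, hxr⟩ := hpair
  rw [PairA, Finset.mem_filter] at hxPA
  obtain ⟨-, hsdx, y, hyne, htau⟩ := hxPA
  have hsdy : sd y = 1 := by
    have hne : x ≠ y := fun h => hyne h.symm
    have := pair_sides hT hrun hAll hne htau.symm
    have h1 := sd_lt y
    omega
  have hxnd : nd T hT 0 (pos x) = x := by rw [← hsdx]; exact nd_decode hT x
  have hynd : nd T hT 1 (pos y) = y := by rw [← hsdy]; exact nd_decode hT y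
  have hcx := zp_spec (ms := ms) (hAll x)
  have hcy : CompInstAt ms (tau ms x) (zp ms y) y := htau ▸ zp_spec (ms := ms) (hAll y)
  have hpp' : zp ms x ≠ zp ms y := by
    intro h
    exact hyne (comp_inst_unique hrun (h ▸ hcy) hcx)
  have hPalt : pos x < 9*T := pos_lt x
  have hPblt : pos y < 9*T := pos_lt y
  -- cross edge into the start of block t
  have e1 : EG T (nd T hT 1 (9*t-1)) (nd T hT 0 (9*t)) := by
    have h := edge_cross hT (σ := 1) (σ' := 0) (π := 9*t-1) (by omega) (by omega)
      (by omega) (by omega)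
    rw [show 9*t-1+1 = 9*t from by omega] at h
    exact h
  have echain : EG T (nd T hT 0 (9*t-1)) (nd T hT 0 (9*t)) := by
    have h := edge_chain hT (σ := 0) (π := 9*t-1) (by omega) (by omega)
    rw [show 9*t-1+1 = 9*t from by omega] at h
    exact h
  have t1 : tau ms (nd T hT 1 (9*t-1)) < tau ms (nd T hT 0 (9*t)) :=
    (edge_tau hrun (hAll _) e1).2
  have t2 : tau ms (nd T hT 0 (9*t)) ≤ tau ms x := by
    conv_rhs => rw [← hxnd]
    exact tau_chain_le hT hrun hAll (by omega) hxl hPalt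
  have hPb1 : 9*t ≤ pos y := by
    by_contra hc
    push_neg at hc
    have hy9 : tau ms y ≤ tau ms (nd T hT 1 (9*t-1)) := by
      conv_lhs => rw [← hynd]
      exact tau_chain_le hT hrun hAll (by omega) (by omega) (by omega)
    omega
  have hPb2 : pos y < 9*t+9 := by
    have hβ1 : 9*t ≤ 9 * (pos y / 9) := by omega
    have e2 : EG T (nd T hT 0 (9 * (pos y / 9) - 1)) (nd T hT 1 (9 * (pos y / 9))) := by
      have h := edge_cross hT (σ := 0) (σ' := 1) (π := 9 * (pos y / 9) - 1)
        (by omega) (by omega) (by omega) (by omega)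
      rw [show 9 * (pos y / 9) - 1 + 1 = 9 * (pos y / 9) from by omega] at h
      exact h
    have t3 : tau ms (nd T hT 0 (9 * (pos y / 9) - 1))
        < tau ms (nd T hT 1 (9 * (pos y / 9))) := (edge_tau hrun (hAll _) e2).2
    have t4 : tau ms (nd T hT 1 (9 * (pos y / 9))) ≤ tau ms y := by
      conv_rhs => rw [← hynd]
      exact tau_chain_le hT hrun hAll (by omega) (by omega) (by omega)
    have hb1 : 9 * (pos y / 9) - 1 < pos x := by
      by_contra hc
      push_neg at hc
      have : tau ms x ≤ tau ms (nd T hT 0 (9 * (pos y / 9) - 1)) := by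
        conv_lhs => rw [← hxnd]
        exact tau_chain_le hT hrun hAll (by omega) (by omega) (by omega)
      omega
    omega
  -- possession of chain predecessors by the two (distinct) processors
  have hpx : Poss ms (zp ms x) (nd T hT 0 (pos x - 1)) := by
    apply poss_pred hrun hcx
    have h := edge_chain hT (σ := 0) (π := pos x - 1) (by omega) (by omega)
    rw [show pos x - 1 + 1 = pos x from by omega, hxnd] at h
    exact h
  have hpy : Poss ms (zp ms y) (nd T hT 1 (pos y - 1)) := by
    apply poss_pred hrun hcy
    have h := edge_chain hT (σ := 1) (π := pos y - 1) (by omega) (by omega)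
    rw [show pos y - 1 + 1 = pos y from by omega, hynd] at h
    exact h
  have hdx : Poss ms (zp ms x) (nd T hT 0 (9*t-1)) :=
    hdesc 0 (by omega) (pos x - 1 - (9*t-1)) (pos x - 1) (by omega) (by omega) _ hpx
  have hdy : Poss ms (zp ms y) (nd T hT 1 (9*t-1)) :=
    hdesc 1 (by omega) (pos y - 1 - (9*t-1)) (pos y - 1) (by omega) (by omega) _ hpy
  -- merge at the start of block t
  have hcm := zp_spec (ms := ms) (hAll (nd T hT 0 (9*t)))
  have hqa : Poss ms (zp ms (nd T hT 0 (9*t))) (nd T hT 0 (9*t-1)) :=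
    poss_pred hrun hcm echain
  have hqb : Poss ms (zp ms (nd T hT 0 (9*t))) (nd T hT 1 (9*t-1)) :=
    poss_pred hrun hcm e1
  have hboth : ∃ σc, σc < 2 ∧ ∀ ρ : Fin 2, Poss ms ρ (nd T hT σc (9*t-1)) := by
    rcases fin2_cases hpp' (q := zp ms (nd T hT 0 (9*t))) with hq | hq
    · refine ⟨1, by omega, fun ρ => ?_⟩
      rcases fin2_cases hpp' (q := ρ) with hρ | hρ
      · rw [hρ, ← hq]; exact hqb
      · rw [hρ]; exact hdy
    · refine ⟨0, by omega, fun ρ => ?_⟩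
      rcases fin2_cases hpp' (q := ρ) with hρ | hρ
      · rw [hρ]; exact hdx
      · rw [hρ, ← hq]; exact hqa
  obtain ⟨σc, hσc, hbothp⟩ := hboth
  have hcasc : ∀ d : ℕ, d ≤ 8 → ∀ ρ : Fin 2, Poss ms ρ (nd T hT σc (9*t-1-d)) := by
    intro d
    induction d with
    | zero => intro _ ρ; simpa using hbothp ρ
    | succ d ih =>
        intro hd ρ
        have hprev := ih (by omega) ρ
        have h := poss_step hT hrun hσc (π := 9*t-1-d) (by omega) (by omega)
          (hNL σc _ hσc (by omega) (by omega)) hprev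
        rw [show 9*t-1-d-1 = 9*t-1-(d+1) from by omega] at h
        exact h
  have hncv : ∀ d : ℕ, d ≤ 8 → nd T hT σc (9*t-1-d) ∈ NCV T ms := by
    intro d hd
    obtain ⟨ρ, hρ⟩ : ∃ ρ : Fin 2, ρ ≠ zp ms (nd T hT σc (9*t-1-d)) := by
      by_cases h : zp ms (nd T hT σc (9*t-1-d)) = 0
      · exact ⟨1, by rw [h]; decide⟩
      · exact ⟨0, fun hc => h hc.symm⟩
    obtain ⟨s0, hinst⟩ := hcasc d hd ρ
    rcases hinst with hcomp | hload
    · rw [NCV, Finset.mem_filter]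
      exact ⟨Finset.mem_univ _, s0, ρ, hcomp, fun hp2 => hρ hp2.2⟩
    · exact absurd ⟨s0, ρ, hload⟩ (hNL σc _ hσc (by omega) (by omega))
  have hsub : (Finset.range 9).image (fun d => nd T hT σc (9*t-1-d))
      ⊆ (NCV T ms).filter (fun x => 9*(t-1) ≤ pos x ∧ pos x < 9*t) := by
    intro u hu
    rw [Finset.mem_image] at hu
    obtain ⟨d, hd, rfl⟩ := hu
    rw [Finset.mem_range] at hd
    rw [Finset.mem_filter]
    refine ⟨hncv d (by omega), ?_, ?_⟩
    · rw [pos_nd hT hσc (by omega)]; omega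
    · rw [pos_nd hT hσc (by omega)]; omega
  have hcard : ((Finset.range 9).image fun d => nd T hT σc (9*t-1-d)).card = 9 := by
    rw [Finset.card_image_of_injOn, Finset.card_range]
    intro d hd d' hd' hdd
    rw [Finset.mem_coe, Finset.mem_range] at hd hd'
    have h := (nd_inj hT hσc hσc (by omega) (by omega) hdd).2
    omega
  calc (9:ℕ) = _ := hcard.symm
    _ ≤ _ := Finset.card_le_card hsub

include hT hrun in
lemma main_count (hT2 : 2 ≤ T) (hterm : Terminal (EG T) Cf) :
    2*(18*T) ≤ 3 * computeCount ms + 9 + 36 * ioCount ms := by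
  classical
  have hAll := all_computed hT hrun hterm
  set PBL := (PB T ms).filter
    (fun t => ∃ x ∈ LoadVals T ms, 9*(t-1) ≤ pos x ∧ pos x < 9*t+9) with hPBLd
  set PBN := (PB T ms).filter
    (fun t => ¬ ∃ x ∈ LoadVals T ms, 9*(t-1) ≤ pos x ∧ pos x < 9*t+9) with hPBNd
  have hsplit : PBL.card + PBN.card = (PB T ms).card :=
    Finset.card_filter_add_card_filter_not _
  have h1 := count_base hrun hAll
  have h2 := pairIdx_le_pairA hT hrun hAll
  have h3 := pairA_le hT (ms := ms)
  have h4 : PBL.card ≤ 2 * (LoadVals T ms).card := PBL_card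
  have h5 : (LoadVals T ms).card ≤ 2 * ioCount ms := count_loadvals hrun
  have h6 : 9 * PBN.card ≤ (NCV T ms).card := by
    have hdisj : ∀ t ∈ PBN, ∀ t' ∈ PBN, t ≠ t' →
        Disjoint ((NCV T ms).filter (fun x => 9*(t-1) ≤ pos x ∧ pos x < 9*t))
          ((NCV T ms).filter (fun x => 9*(t'-1) ≤ pos x ∧ pos x < 9*t')) := by
      intro t ht t' ht' hne
      rw [Finset.disjoint_left]
      intro x hx hx'
      rw [Finset.mem_filter] at hx hx'
      have ht1 : 1 ≤ t := by
        rw [hPBNd, Finset.mem_filter, PB, Finset.mem_filter, Finset.mem_Icc] at ht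
        exact ht.1.1.1
      have ht1' : 1 ≤ t' := by
        rw [hPBNd, Finset.mem_filter, PB, Finset.mem_filter, Finset.mem_Icc] at ht'
        exact ht'.1.1.1
      exact hne (by omega)
    calc 9 * PBN.card = ∑ _t ∈ PBN, 9 := by
          rw [Finset.sum_const, smul_eq_mul, mul_comm]
      _ ≤ ∑ t ∈ PBN, ((NCV T ms).filter (fun x => 9*(t-1) ≤ pos x ∧ pos x < 9*t)).card := by
          apply Finset.sum_le_sum
          intro t ht
          rw [hPBNd, Finset.mem_filter] at ht
          obtain ⟨htPB, hnl⟩ := ht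
          rw [PB, Finset.mem_filter, Finset.mem_Icc] at htPB
          exact monster hT hrun hAll htPB.1.1 htPB.1.2 hT2 hnl htPB.2
      _ = (PBN.biUnion (fun t =>
            (NCV T ms).filter (fun x => 9*(t-1) ≤ pos x ∧ pos x < 9*t))).card :=
          (Finset.card_biUnion hdisj).symm
      _ ≤ (NCV T ms).card := by
          apply Finset.card_le_card
          intro x hx
          rw [Finset.mem_biUnion] at hx
          obtain ⟨t, _, hx⟩ := hx
          exact (Finset.mem_filter.1 hx).1
  have h7 := count_insts hrun hAll
  omega

end Monster

end Aux12
namespace Aux12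
open MPP Finset
set_option linter.unusedSectionVars false
set_option linter.unusedVariables false

lemma valid_any {V : Type*} [DecidableEq V] [Fintype V] {k r : ℕ}
    (h : Fintype.card V ≤ r) (C : Conf V k) : Valid r C := by
  intro j
  exact le_trans (Finset.card_le_univ _) h

section Upper1

variable {T : ℕ} (hT : 0 < T) {r : ℕ}

def mk1 (T : ℕ) (hT : 0 < T) (i : ℕ) : Move (Fin (18*T)) 1 :=
  Move.compute 1 (fun _ => 0) (fun _ => nd T hT (i % 2) (i / 2))

def ms1 (T : ℕ) (hT : 0 < T) : List (Move (Fin (18*T)) 1) :=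
  (List.range (18*T)).map (mk1 T hT)

def SS (T : ℕ) (j : ℕ) : Finset (Fin (18*T)) := Finset.univ.filter (fun x => x.val < j)

lemma apply_mk1 (j : ℕ) (hj : j < 18*T) :
    MPP.apply (mk1 T hT j) ⟨fun _ => SS T j, ∅⟩
      = (⟨fun _ => SS T (j+1), ∅⟩ : Conf (Fin (18*T)) 1) := by
  simp only [mk1, MPP.apply]
  congr 1
  funext p
  ext z
  simp only [MPP.addRed, Finset.mem_union, SS, Finset.mem_filter, Finset.mem_univ,
    true_and, Finset.mem_image]
  have hndval : (nd T hT (j % 2) (j / 2)).val = j := by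
    rw [nd_val hT (by omega) (by omega)]; omega
  constructor
  · rintro (hz | ⟨i, hi, rfl⟩)
    · omega
    · omega
  · intro hz
    by_cases hzj : z.val < j
    · left; exact hzj
    · right
      refine ⟨0, ?_, ?_⟩
      · exact Subsingleton.elim _ _
      · apply Fin.ext
        omega

lemma run1_suffix (hr : 18*T ≤ r) :
    ∀ (d j : ℕ), j + d = 18*T →
      Run (EG T) r ⟨fun _ => SS T j, ∅⟩ (((List.range (18*T)).drop j).map (mk1 T hT))
        ⟨fun _ => SS T (18*T), ∅⟩ := by
  intro d
  induction d with
  | zero =>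
      intro j hj
      have hj' : j = 18*T := by omega
      subst hj'
      rw [List.drop_of_length_le (by simp)]
      simp only [List.map_nil]
      exact Run.nil _
  | succ d ih =>
      intro j hj
      have hjlt : j < 18*T := by omega
      have hdropeq : (List.range (18*T)).drop j = j :: (List.range (18*T)).drop (j+1) := by
        rw [List.drop_eq_getElem_cons (by simp [hjlt])]
        congr 1
        simp
      rw [hdropeq, List.map_cons]
      apply Run.cons
      · refine ⟨le_refl 1, fun a b _ => Subsingleton.elim a b, ?_⟩
        intro i u hu
        have hedge := edge_elim (T := T) hu
        show u ∈ SS T j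
        rw [SS, Finset.mem_filter]
        refine ⟨Finset.mem_univ _, ?_⟩
        have hp : pos (nd T hT (j % 2) (j / 2)) = j / 2 := pos_nd hT (by omega) (by omega)
        rw [hp] at hedge
        have h1 : pos u + 1 = j / 2 := by omega
        have h2 := sd_lt u
        simp only [pos, sd] at h1 h2
        omega
      · exact valid_any (by simpa using hr) _
      · rw [apply_mk1 hT j hjlt]
        exact ih (j+1) (by omega)

lemma run1 (hr : 18*T ≤ r) :
    Run (EG T) r (MPP.init (Fin (18*T)) 1) (ms1 T hT) ⟨fun _ => SS T (18*T), ∅⟩ := by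
  have h0 : (MPP.init (Fin (18*T)) 1) = ⟨fun _ => SS T 0, ∅⟩ := by
    unfold MPP.init
    congr 1
    funext p
    ext z
    simp [SS]
  rw [h0]
  exact run1_suffix hT hr (18*T) 0 (by omega)

lemma term1 : Terminal (EG T) (⟨fun _ => SS T (18*T), ∅⟩ : Conf (Fin (18*T)) 1) := by
  intro v hv
  right
  refine ⟨0, ?_⟩
  rw [SS, Finset.mem_filter]
  exact ⟨Finset.mem_univ _, v.isLt⟩

lemma cost_ms1 (g : ℕ) : MPP.cost g (ms1 T hT) = 18*T := by
  unfold ms1 MPP.cost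
  rw [List.map_map]
  have h : (MPP.moveCost g ∘ mk1 T hT) = fun _ => 1 := by funext i; rfl
  rw [h, List.map_const', List.sum_replicate, List.length_range, smul_eq_mul, mul_one]

lemma io_ms1 : ioCount (ms1 T hT) = 0 := by
  unfold ioCount ms1
  rw [List.length_eq_zero_iff, List.filter_eq_nil_iff]
  intro mv hmv
  rw [List.mem_map] at hmv
  obtain ⟨i, _, rfl⟩ := hmv
  simp [mk1, MPP.isIO]

lemma pebbling1 (hr : 18*T ≤ r) : IsPebbling (EG T) r (ms1 T hT) :=
  ⟨(⟨fun _ => SS T (18*T), ∅⟩ : Conf (Fin (18*T)) 1), run1 hT hr, term1 (T := T)⟩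

end Upper1

section Lower1

variable {T : ℕ} (hT : 0 < T)
variable {r g : ℕ} {ms : List (Move (Fin (18*T)) 1)} {Cf : Conf (Fin (18*T)) 1}
variable (hrun : Run (EG T) r (MPP.init (Fin (18*T)) 1) ms Cf)
variable (hterm : Terminal (EG T) Cf)

include hT hrun hterm in
lemma lower1 : 18*T ≤ computeCount ms := by
  classical
  have hAll := all_computed hT hrun hterm
  have hinj : Set.InjOn (tau ms) (Finset.univ : Finset (Fin (18*T))) := by
    intro x _ y _ hxy
    by_contra hne
    have hx := tau_spec (hAll x)
    have hy' := tau_spec (hAll y)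
    rw [← hxy] at hy'
    obtain ⟨mv, hmv, hxin⟩ := hx
    obtain ⟨mv', hmv', hyin⟩ := hy'
    rw [hmv] at hmv'
    obtain rfl := Option.some.inj hmv'
    cases mv with
    | compute m f v =>
        obtain ⟨ix, hix⟩ := hxin
        obtain ⟨iy, hiy⟩ := hyin
        have hslen : tau ms x < ms.length := (List.getElem?_eq_some_iff.1 hmv).1
        have hleg := legalAt hrun hslen
        rw [List.getElem?_eq_getElem hslen] at hmv
        rw [Option.some.inj hmv] at hleg
        obtain ⟨hm, _, _⟩ := hleg
        have hne' : ix ≠ iy := fun h => hne (by rw [← hix, ← hiy, h])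
        have h2 : ({ix, iy} : Finset (Fin m)).card = 2 := by
          rw [Finset.card_insert_of_notMem (by simp [hne']), Finset.card_singleton]
        have hle := Finset.card_le_univ ({ix, iy} : Finset (Fin m))
        have h4 : Fintype.card (Fin m) = m := by simp
        omega
    | save m f v => exact absurd hxin (by simp [MPP.computes])
    | load m f v => exact absurd hxin (by simp [MPP.computes])
    | removeRed j y => exact absurd hxin (by simp [MPP.computes])
    | removeBlue y => exact absurd hxin (by simp [MPP.computes])
  have himgcard : (Finset.univ.image (tau ms)).card = 18*T := by
    rw [Finset.card_image_of_injOn hinj, Finset.card_univ, Fintype.card_fin]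
  have hsub : Finset.univ.image (tau ms) ⊆ compIdx ms := by
    intro s hs
    rw [Finset.mem_image] at hs
    obtain ⟨x, _, rfl⟩ := hs
    obtain ⟨p, m, f, v, i, hmv, _, _⟩ := (computedAt_iff ms _ x).1 (tau_spec (hAll x))
    rw [compIdx, Finset.mem_filter]
    exact ⟨Finset.mem_range.2 (List.getElem?_eq_some_iff.1 hmv).1, m, f, v, hmv⟩
  calc 18*T = _ := himgcard.symm
    _ ≤ (compIdx ms).card := Finset.card_le_card hsub
    _ = computeCount ms := card_compIdx ms

end Lower1

section Opt1

variable {T : ℕ} (hT : 0 < T) {r g : ℕ}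

include hT in
lemma optCost1_eq (hr : 18*T ≤ r) : optCost (EG T) 1 r g = 18*T := by
  unfold MPP.optCost
  have hmem : 18*T ∈ {c | ∃ ms : List (Move (Fin (18*T)) 1),
      IsPebbling (EG T) r ms ∧ MPP.cost g ms = c} :=
    ⟨ms1 T hT, pebbling1 hT hr, cost_ms1 hT g⟩
  apply le_antisymm
  · exact Nat.sInf_le hmem
  · apply le_csInf ⟨18*T, hmem⟩
    rintro c ⟨ms, ⟨Cf, hrun, hterm⟩, rfl⟩
    have hlow := lower1 hT hrun hterm
    rw [cost_eq]
    omega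

include hT in
lemma optIO1_eq (hr : 18*T ≤ r) : optIO (EG T) 1 r g = 0 := by
  unfold MPP.optIO
  apply Nat.sInf_eq_zero.2
  left
  show ∃ ms : List (Move (Fin (18*T)) 1), IsPebbling (EG T) r ms ∧
    MPP.cost g ms = optCost (EG T) 1 r g ∧ ioCount ms = 0
  exact ⟨ms1 T hT, pebbling1 hT hr, by rw [cost_ms1 hT g, optCost1_eq hT hr], io_ms1 hT⟩

end Opt1

end Aux12
namespace Aux12
open MPP Finset
set_option linter.unusedSectionVars false
set_option linter.unusedVariables false

lemma run_append {V : Type*} [DecidableEq V] {k : ℕ} {E : V → V → Prop} {r : ℕ}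
    {C C' C'' : Conf V k} {l1 l2 : List (Move V k)}
    (h1 : Run E r C l1 C') (h2 : Run E r C' l2 C'') : Run E r C (l1 ++ l2) C'' := by
  induction h1 with
  | nil C => simpa using h2
  | cons hl hv htail ih => exact Run.cons hl hv (ih h2)

section Upper2

variable {T : ℕ} (hT : 0 < T) {r : ℕ}

def cmov (T : ℕ) (hT : 0 < T) (t j : ℕ) : Move (Fin (18*T)) 2 :=
  Move.compute 2 id ![nd T hT 0 (9*t+j), nd T hT 1 (9*t+j)]

def smov (T : ℕ) (hT : 0 < T) (t : ℕ) : Move (Fin (18*T)) 2 :=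
  Move.save 2 id ![nd T hT 0 (9*t-1), nd T hT 1 (9*t-1)]

def lmov (T : ℕ) (hT : 0 < T) (t : ℕ) : Move (Fin (18*T)) 2 :=
  Move.load 2 id ![nd T hT 1 (9*t-1), nd T hT 0 (9*t-1)]

def blk (T : ℕ) (hT : 0 < T) (t : ℕ) : List (Move (Fin (18*T)) 2) :=
  (if t = 0 then [] else [smov T hT t, lmov T hT t]) ++ (List.range 9).map (cmov T hT t)

def ms2 (T : ℕ) (hT : 0 < T) : List (Move (Fin (18*T)) 2) :=
  ((List.range T).map (blk T hT)).flatten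

def P0 (T t : ℕ) : Finset (Fin (18*T)) :=
  Finset.univ.filter (fun v => (sd v = 0 ∧ pos v < 9*t) ∨
    (sd v = 1 ∧ pos v % 9 = 8 ∧ pos v + 9 < 9*t))

def P1 (T t : ℕ) : Finset (Fin (18*T)) :=
  Finset.univ.filter (fun v => (sd v = 1 ∧ pos v < 9*t) ∨
    (sd v = 0 ∧ pos v % 9 = 8 ∧ pos v + 9 < 9*t))

def BL (T t : ℕ) : Finset (Fin (18*T)) :=
  Finset.univ.filter (fun v => pos v % 9 = 8 ∧ pos v + 9 < 9*t)

def G0 (T t j : ℕ) : Finset (Fin (18*T)) :=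
  Finset.univ.filter (fun v => (sd v = 0 ∧ pos v < 9*t+j) ∨
    (sd v = 1 ∧ pos v % 9 = 8 ∧ pos v < 9*t))

def G1 (T t j : ℕ) : Finset (Fin (18*T)) :=
  Finset.univ.filter (fun v => (sd v = 1 ∧ pos v < 9*t+j) ∨
    (sd v = 0 ∧ pos v % 9 = 8 ∧ pos v < 9*t))

def BLS (T t : ℕ) : Finset (Fin (18*T)) :=
  Finset.univ.filter (fun v => pos v % 9 = 8 ∧ pos v < 9*t)

def confB (T t : ℕ) : Conf (Fin (18*T)) 2 := ⟨![P0 T t, P1 T t], BL T t⟩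

def confG (T t j : ℕ) : Conf (Fin (18*T)) 2 := ⟨![G0 T t j, G1 T t j], BLS T t⟩

lemma mem_val_iff {σ π : ℕ} (hσ : σ < 2) (hπ : π < 9*T) (z : Fin (18*T)) :
    z = nd T hT σ π ↔ z.val = 2*π + σ := by
  rw [Fin.ext_iff, nd_val hT hσ hπ]

lemma apply_cmov (t j : ℕ) (ht : t < T) (hj : j < 9) :
    MPP.apply (cmov T hT t j) (confG T t j) = confG T t (j+1) := by
  have hlt : 9*t+j < 9*T := by omega
  simp only [cmov, MPP.apply, confG]
  congr 1
  funext p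
  ext z
  simp only [MPP.addRed, Finset.mem_union, Finset.mem_image, Finset.mem_filter,
    Finset.mem_univ, true_and, id_eq, Fin.exists_fin_two, Matrix.cons_val_zero,
    Matrix.cons_val_one, Matrix.head_cons, G0, G1]
  rcases fin2_cases (p := (0 : Fin 2)) (p' := (1 : Fin 2)) (by decide) (q := p)
    with hp | hp <;> subst hp
  · simp only [Matrix.cons_val_zero, Matrix.cons_val_one, Matrix.head_cons,
      show ((0:Fin 2) = 0) = True from by simp, show ((1:Fin 2) = 0) = False from by simp,
      true_and, false_and, or_false, G0, G1, P0, P1, Finset.mem_filter,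
      Finset.mem_univ, true_and]
    rw [show (nd T hT 0 (9*t+j) = z) ↔ (z = nd T hT 0 (9*t+j)) from eq_comm,
      mem_val_iff (σ := 0) (π := 9*t+j) hT (by omega) hlt z]
    simp only [pos, sd]
    omega
  · simp only [Matrix.cons_val_zero, Matrix.cons_val_one, Matrix.head_cons,
      show ((0:Fin 2) = 1) = False from by simp, show ((1:Fin 2) = 1) = True from by simp,
      true_and, false_and, false_or, G0, G1, P0, P1, Finset.mem_filter,
      Finset.mem_univ, true_and]
    rw [show (nd T hT 1 (9*t+j) = z) ↔ (z = nd T hT 1 (9*t+j)) from eq_comm,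
      mem_val_iff (σ := 1) (π := 9*t+j) hT (by omega) hlt z]
    simp only [pos, sd]
    omega

lemma legal_cmov (t j : ℕ) (ht : t < T) (hj : j < 9) :
    Legal (EG T) (confG T t j) (cmov T hT t j) := by
  have hlt : 9*t+j < 9*T := by omega
  refine ⟨le_refl 2, fun a b h => h, ?_⟩
  intro i u hu
  have hi := i.isLt
  rcases fin2_cases (p := (0 : Fin 2)) (p' := (1 : Fin 2)) (by decide) (q := i)
    with hp | hp <;> subst hp
  · have hu' : EG T u (nd T hT 0 (9*t+j)) := by simpa using hu
    have hedge := edge_elim (T := T) hu'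
    rw [pos_nd hT (by omega) hlt, sd_nd hT (by omega) hlt] at hedge
    show u ∈ (confG T t j).red _
    have : (confG T t j).red (id (0 : Fin 2)) = G0 T t j := rfl
    rw [this, G0, Finset.mem_filter]
    refine ⟨Finset.mem_univ _, ?_⟩
    have hsdu := sd_lt u
    simp only [pos, sd] at hedge hsdu ⊢
    omega
  · have hu' : EG T u (nd T hT 1 (9*t+j)) := by simpa using hu
    have hedge := edge_elim (T := T) hu'
    rw [pos_nd hT (by omega) hlt, sd_nd hT (by omega) hlt] at hedge
    show u ∈ (confG T t j).red _
    have : (confG T t j).red (id (1 : Fin 2)) = G1 T t j := rfl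
    rw [this, G1, Finset.mem_filter]
    refine ⟨Finset.mem_univ _, ?_⟩
    have hsdu := sd_lt u
    simp only [pos, sd] at hedge hsdu ⊢
    omega

lemma run_cmovs (hr : 18*T ≤ r) (t : ℕ) (ht : t < T) :
    ∀ (d j : ℕ), j + d = 9 →
      Run (EG T) r (confG T t j) (((List.range 9).drop j).map (cmov T hT t))
        (confG T t 9) := by
  intro d
  induction d with
  | zero =>
      intro j hj
      have hj' : j = 9 := by omega
      subst hj'
      rw [List.drop_of_length_le (by simp)]
      exact Run.nil _
  | succ d ih =>
      intro j hj
      have hjlt : j < 9 := by omega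
      have hdropeq : (List.range 9).drop j = j :: (List.range 9).drop (j+1) := by
        rw [List.drop_eq_getElem_cons (by simp [hjlt])]
        congr 1
        simp
      rw [hdropeq, List.map_cons]
      apply Run.cons (legal_cmov hT t j ht hjlt)
      · exact valid_any (by simpa using hr) _
      · rw [apply_cmov hT t j ht hjlt]
        exact ih (j+1) (by omega)

lemma legal_smov (t : ℕ) (ht1 : 1 ≤ t) (ht : t < T) :
    Legal (EG T) (confB T t) (smov T hT t) := by
  refine ⟨le_refl 2, fun a b h => h, ?_⟩
  intro i
  rcases fin2_cases (p := (0 : Fin 2)) (p' := (1 : Fin 2)) (by decide) (q := i)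
    with hp | hp <;> subst hp
  · show (![nd T hT 0 (9*t-1), nd T hT 1 (9*t-1)] (0 : Fin 2)) ∈ (confB T t).red _
    simp only [Matrix.cons_val_zero]
    have : (confB T t).red (id (0 : Fin 2)) = P0 T t := rfl
    rw [this, P0, Finset.mem_filter]
    refine ⟨Finset.mem_univ _, Or.inl ⟨?_, ?_⟩⟩
    · rw [sd_nd hT (by omega) (by omega)]
    · rw [pos_nd hT (by omega) (by omega)]; omega
  · show (![nd T hT 0 (9*t-1), nd T hT 1 (9*t-1)] (1 : Fin 2)) ∈ (confB T t).red _
    simp only [Matrix.cons_val_one, Matrix.head_cons, Matrix.cons_val_zero]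
    have : (confB T t).red (id (1 : Fin 2)) = P1 T t := rfl
    rw [this, P1, Finset.mem_filter]
    refine ⟨Finset.mem_univ _, Or.inl ⟨?_, ?_⟩⟩
    · rw [sd_nd hT (by omega) (by omega)]
    · rw [pos_nd hT (by omega) (by omega)]; omega

lemma apply_smov (t : ℕ) (ht1 : 1 ≤ t) (ht : t < T) :
    MPP.apply (smov T hT t) (confB T t) = ⟨![P0 T t, P1 T t], BLS T t⟩ := by
  simp only [smov, MPP.apply, confB]
  congr 1
  ext z
  simp only [Finset.mem_union, Finset.mem_image, Finset.mem_univ, true_and,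
    Fin.exists_fin_two, Matrix.cons_val_zero, Matrix.cons_val_one, Matrix.head_cons,
    BL, BLS, Finset.mem_filter]
  rw [show (nd T hT 0 (9*t-1) = z) ↔ (z = nd T hT 0 (9*t-1)) from eq_comm,
    show (nd T hT 1 (9*t-1) = z) ↔ (z = nd T hT 1 (9*t-1)) from eq_comm,
    mem_val_iff (σ := 0) (π := 9*t-1) hT (by omega) (by omega) z,
    mem_val_iff (σ := 1) (π := 9*t-1) hT (by omega) (by omega) z]
  simp only [pos, sd]
  omega

lemma legal_lmov (t : ℕ) (ht1 : 1 ≤ t) (ht : t < T) :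
    Legal (EG T) (⟨![P0 T t, P1 T t], BLS T t⟩ : Conf (Fin (18*T)) 2) (lmov T hT t) := by
  refine ⟨le_refl 2, fun a b h => h, ?_⟩
  intro i
  show (![nd T hT 1 (9*t-1), nd T hT 0 (9*t-1)] i) ∈ BLS T t
  rcases fin2_cases (p := (0 : Fin 2)) (p' := (1 : Fin 2)) (by decide) (q := i)
    with hp | hp <;> subst hp <;>
    simp only [Matrix.cons_val_zero, Matrix.cons_val_one, Matrix.head_cons] <;>
    rw [BLS, Finset.mem_filter] <;>
    refine ⟨Finset.mem_univ _, ?_, ?_⟩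
  · rw [pos_nd hT (by omega) (by omega)]; omega
  · rw [pos_nd hT (by omega) (by omega)]; omega
  · rw [pos_nd hT (by omega) (by omega)]; omega
  · rw [pos_nd hT (by omega) (by omega)]; omega

lemma apply_lmov (t : ℕ) (ht1 : 1 ≤ t) (ht : t < T) :
    MPP.apply (lmov T hT t) (⟨![P0 T t, P1 T t], BLS T t⟩ : Conf (Fin (18*T)) 2)
      = confG T t 0 := by
  simp only [lmov, MPP.apply, confG]
  congr 1
  funext p
  ext z
  simp only [MPP.addRed, Finset.mem_union, Finset.mem_image, Finset.mem_filter,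
    Finset.mem_univ, true_and, id_eq, Fin.exists_fin_two, Matrix.cons_val_zero,
    Matrix.cons_val_one, Matrix.head_cons, G0, G1, P0, P1]
  rcases fin2_cases (p := (0 : Fin 2)) (p' := (1 : Fin 2)) (by decide) (q := p)
    with hp | hp <;> subst hp
  · simp only [Matrix.cons_val_zero, Matrix.cons_val_one, Matrix.head_cons,
      show ((0:Fin 2) = 0) = True from by simp, show ((1:Fin 2) = 0) = False from by simp,
      true_and, false_and, or_false, G0, G1, P0, P1, Finset.mem_filter,
      Finset.mem_univ, true_and]
    rw [show (nd T hT 1 (9*t-1) = z) ↔ (z = nd T hT 1 (9*t-1)) from eq_comm,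
      mem_val_iff (σ := 1) (π := 9*t-1) hT (by omega) (by omega) z]
    simp only [pos, sd]
    omega
  · simp only [Matrix.cons_val_zero, Matrix.cons_val_one, Matrix.head_cons,
      show ((0:Fin 2) = 1) = False from by simp, show ((1:Fin 2) = 1) = True from by simp,
      true_and, false_and, false_or, G0, G1, P0, P1, Finset.mem_filter,
      Finset.mem_univ, true_and]
    rw [show (nd T hT 0 (9*t-1) = z) ↔ (z = nd T hT 0 (9*t-1)) from eq_comm,
      mem_val_iff (σ := 0) (π := 9*t-1) hT (by omega) (by omega) z]
    simp only [pos, sd]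
    omega

lemma confG9_eq (t : ℕ) : confG T t 9 = confB T (t+1) := by
  simp only [confG, confB]
  congr 1
  · funext p
    rcases fin2_cases (p := (0 : Fin 2)) (p' := (1 : Fin 2)) (by decide) (q := p)
      with hp | hp <;> subst hp <;>
      simp only [Matrix.cons_val_zero, Matrix.cons_val_one, Matrix.head_cons] <;>
      ext z <;>
      simp only [G0, G1, P0, P1, Finset.mem_filter, Finset.mem_univ, true_and] <;>
      omega
  · ext z
    simp only [BLS, BL, Finset.mem_filter, Finset.mem_univ, true_and]
    omega

lemma confB0_eq : confB T 0 = confG T 0 0 := by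
  simp only [confG, confB]
  congr 1
  · funext p
    rcases fin2_cases (p := (0 : Fin 2)) (p' := (1 : Fin 2)) (by decide) (q := p)
      with hp | hp <;> subst hp <;>
      simp only [Matrix.cons_val_zero, Matrix.cons_val_one, Matrix.head_cons] <;>
      ext z <;>
      simp only [G0, G1, P0, P1, Finset.mem_filter, Finset.mem_univ, true_and] <;>
      omega
  · ext z
    simp only [BLS, BL, Finset.mem_filter, Finset.mem_univ, true_and]
    omega

lemma run_blk (hr : 18*T ≤ r) (t : ℕ) (ht : t < T) :
    Run (EG T) r (confB T t) (blk T hT t) (confB T (t+1)) := by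
  rcases Nat.eq_zero_or_pos t with ht0 | ht1
  · subst ht0
    rw [blk, if_pos rfl, List.nil_append, ← confG9_eq, confB0_eq]
    exact run_cmovs hT hr 0 ht 9 0 (by omega)
  · rw [blk, if_neg (by omega)]
    rw [show ([smov T hT t, lmov T hT t] ++ (List.range 9).map (cmov T hT t))
      = smov T hT t :: lmov T hT t :: (List.range 9).map (cmov T hT t) from rfl]
    apply Run.cons (legal_smov hT t ht1 ht)
    · exact valid_any (by simpa using hr) _
    · rw [apply_smov hT t ht1 ht]
      apply Run.cons (legal_lmov hT t ht1 ht)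
      · exact valid_any (by simpa using hr) _
      · rw [apply_lmov hT t ht1 ht, ← confG9_eq]
        exact run_cmovs hT hr t ht 9 0 (by omega)

lemma run2_suffix (hr : 18*T ≤ r) :
    ∀ (d t : ℕ), t + d = T →
      Run (EG T) r (confB T t) (((List.range T).drop t).map (blk T hT)).flatten
        (confB T T) := by
  intro d
  induction d with
  | zero =>
      intro t htT
      have ht' : t = T := by omega
      subst ht'
      rw [List.drop_of_length_le (by simp)]
      exact Run.nil _
  | succ d ih =>
      intro t htT
      have htlt : t < T := by omega
      have hdropeq : (List.range T).drop t = t :: (List.range T).drop (t+1) := by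
        rw [List.drop_eq_getElem_cons (by simp [htlt])]
        congr 1
        simp
      rw [hdropeq, List.map_cons, List.flatten_cons]
      exact run_append (run_blk hT hr t htlt) (ih (t+1) (by omega))

lemma init_eq_confB0 : (MPP.init (Fin (18*T)) 2) = confB T 0 := by
  unfold MPP.init confB
  congr 1
  · funext p
    rcases fin2_cases (p := (0 : Fin 2)) (p' := (1 : Fin 2)) (by decide) (q := p)
      with hp | hp <;> subst hp <;>
      simp only [Matrix.cons_val_zero, Matrix.cons_val_one, Matrix.head_cons] <;>
      ext z <;>
      simp only [P0, P1, Finset.mem_filter, Finset.mem_univ, true_and,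
        Finset.notMem_empty, false_iff] <;>
      omega
  · ext z
    simp only [BL, Finset.mem_filter, Finset.mem_univ, true_and, Finset.notMem_empty,
      false_iff]
    omega

lemma run2 (hr : 18*T ≤ r) :
    Run (EG T) r (MPP.init (Fin (18*T)) 2) (ms2 T hT) (confB T T) := by
  rw [init_eq_confB0, ms2]
  exact run2_suffix hT hr T 0 (by omega)

lemma term2 : Terminal (EG T) (confB T T) := by
  intro v hv
  right
  have hsd := sd_lt v
  have hpos := pos_lt v
  by_cases h : sd v = 0
  · refine ⟨0, ?_⟩
    show v ∈ P0 T T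
    rw [P0, Finset.mem_filter]
    exact ⟨Finset.mem_univ _, Or.inl ⟨h, hpos⟩⟩
  · refine ⟨1, ?_⟩
    show v ∈ P1 T T
    rw [P1, Finset.mem_filter]
    exact ⟨Finset.mem_univ _, Or.inl ⟨by omega, hpos⟩⟩

lemma pebbling2 (hr : 18*T ≤ r) : IsPebbling (EG T) r (ms2 T hT) :=
  ⟨confB T T, run2 hT hr, (term2 (T := T))⟩

lemma ioCount_append {V : Type*} [DecidableEq V] {k : ℕ} (l1 l2 : List (Move V k)) :
    ioCount (l1 ++ l2) = ioCount l1 + ioCount l2 := by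
  simp [ioCount, List.filter_append]

lemma computeCount_append {V : Type*} [DecidableEq V] {k : ℕ} (l1 l2 : List (Move V k)) :
    computeCount (l1 ++ l2) = computeCount l1 + computeCount l2 := by
  simp [computeCount, List.filter_append]

lemma ioCount_blk (t : ℕ) : ioCount (blk T hT t) = if t = 0 then 0 else 2 := by
  rw [blk, ioCount_append]
  have h1 : ioCount ((List.range 9).map (cmov T hT t)) = 0 := by
    unfold ioCount
    rw [List.length_eq_zero_iff, List.filter_eq_nil_iff]
    intro mv hmv
    rw [List.mem_map] at hmv
    obtain ⟨i, _, rfl⟩ := hmv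
    simp [cmov, MPP.isIO]
  rw [h1]
  by_cases h : t = 0
  · simp [h, ioCount]
  · simp [h, ioCount, smov, lmov, List.filter, MPP.isIO]

lemma computeCount_blk (t : ℕ) : computeCount (blk T hT t) = 9 := by
  rw [blk, computeCount_append]
  have h1 : computeCount ((List.range 9).map (cmov T hT t)) = 9 := by
    unfold computeCount
    rw [List.filter_eq_self.2, List.length_map, List.length_range]
    intro mv hmv
    rw [List.mem_map] at hmv
    obtain ⟨i, _, rfl⟩ := hmv
    simp [cmov, MPP.isCompute]
  rw [h1]
  by_cases h : t = 0
  · simp [h, computeCount]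
  · simp [h, computeCount, smov, lmov, List.filter, MPP.isCompute]

lemma ioCount_join {V : Type*} [DecidableEq V] {k : ℕ} (L : List (List (Move V k))) :
    ioCount L.flatten = (L.map ioCount).sum := by
  induction L with
  | nil => simp [ioCount]
  | cons l L ih => rw [List.flatten_cons, ioCount_append, ih, List.map_cons, List.sum_cons]

lemma computeCount_join {V : Type*} [DecidableEq V] {k : ℕ} (L : List (List (Move V k))) :
    computeCount L.flatten = (L.map computeCount).sum := by
  induction L with
  | nil => simp [computeCount]
  | cons l L ih =>
      rw [List.flatten_cons, computeCount_append, ih, List.map_cons, List.sum_cons]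

lemma sum_ite_range (T : ℕ) :
    ((List.range T).map (fun t => if t = 0 then 0 else 2)).sum = 2*(T-1) := by
  induction T with
  | zero => simp
  | succ T ih =>
      rw [List.range_succ, List.map_append, List.sum_append, ih]
      rcases Nat.eq_zero_or_pos T with h | h
      · subst h; simp
      · simp only [List.map_cons, List.map_nil, List.sum_cons, List.sum_nil]
        rw [if_neg (by omega)]
        omega

lemma ioCount_ms2 : ioCount (ms2 T hT) = 2*(T-1) := by
  rw [ms2, ioCount_join, List.map_map]
  have h : (ioCount ∘ blk T hT) = fun t => if t = 0 then 0 else 2 := by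
    funext t
    exact ioCount_blk hT t
  rw [h, sum_ite_range]

lemma computeCount_ms2 : computeCount (ms2 T hT) = 9*T := by
  rw [ms2, computeCount_join, List.map_map]
  have h : (computeCount ∘ blk T hT) = fun _ => 9 := by
    funext t
    exact computeCount_blk hT t
  rw [h, List.map_const', List.sum_replicate, List.length_range, smul_eq_mul, mul_comm]

lemma cost_ms2 : MPP.cost 1 (ms2 T hT) = 11*T - 2 := by
  rw [cost_eq, computeCount_ms2 hT, ioCount_ms2 hT]
  omega

end Upper2

end Aux12
namespace Aux12
open MPP Finset
set_option linter.unusedSectionVars false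
set_option linter.unusedVariables false

section Final

variable {T : ℕ} (hT : 0 < T) {r : ℕ}

include hT in
lemma optCost2_le (hr : 18*T ≤ r) : optCost (EG T) 2 r 1 ≤ 11*T - 2 := by
  unfold MPP.optCost
  have hmem : 11*T - 2 ∈ {c | ∃ ms : List (Move (Fin (18*T)) 2),
      IsPebbling (EG T) r ms ∧ MPP.cost 1 ms = c} :=
    ⟨ms2 T hT, pebbling2 hT hr, cost_ms2 hT⟩
  exact Nat.sInf_le hmem

include hT in
lemma optIO2_ge (hT2 : 2 ≤ T) (hr : 18*T ≤ r) :
    3*T ≤ 33 * optIO (EG T) 2 r 1 + 3 := by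
  have hne : {c | ∃ ms : List (Move (Fin (18*T)) 2),
      IsPebbling (EG T) r ms ∧ MPP.cost 1 ms = c}.Nonempty :=
    ⟨11*T-2, ms2 T hT, pebbling2 hT hr, cost_ms2 hT⟩
  obtain ⟨msC, hpebC, hcostC⟩ := Nat.sInf_mem hne
  have hioS : {q | ∃ ms : List (Move (Fin (18*T)) 2),
      IsPebbling (EG T) r ms ∧ MPP.cost 1 ms = optCost (EG T) 2 r 1 ∧
        ioCount ms = q}.Nonempty :=
    ⟨ioCount msC, msC, hpebC, hcostC, rfl⟩
  obtain ⟨ms, hpeb, hcost, hio⟩ := Nat.sInf_mem hioS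
  obtain ⟨Cf, hrun, hterm⟩ := hpeb
  have hmain := main_count hT hrun hT2 hterm
  have hcost_le : MPP.cost 1 ms ≤ 11*T - 2 := by
    rw [hcost]
    exact optCost2_le hT hr
  rw [cost_eq] at hcost_le
  have hopt : optIO (EG T) 2 r 1 = ioCount ms := hio.symm
  rw [hopt]
  omega

end Final

end Aux12


/-- There exist `g ∈ ℤ⁺` and a constant `c > 0` such that for
infinitely many `n` there is a DAG `G` on `n` nodes for which, with unbounded
fast memory (any `r ≥ n`): `OPT_IO⁽¹⁾ = 0` while `OPT_IO⁽²⁾ ≥ c·n`, where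
`OPT_IO⁽ᵏ⁾` is the minimum number of I/O moves among minimum-cost pebbling
strategies with `k` processors. -/
theorem stmt12 :
    ∃ (g : ℕ) (c : ℝ), 0 < g ∧ 0 < c ∧
      ∀ N : ℕ, ∃ n ≥ N, ∃ E : Fin n → Fin n → Prop, IsDag E ∧
        ∀ r : ℕ, n ≤ r →
          MPP.optIO E 1 r g = 0 ∧ c * n ≤ (MPP.optIO E 2 r g : ℝ) := by
  refine ⟨1, 1/396, one_pos, by norm_num, ?_⟩
  intro N
  have hT2 : 2 ≤ max 2 N := le_max_left _ _
  have hT0 : 0 < max 2 N := by omega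
  have hN : N ≤ 18 * max 2 N := by
    have := le_max_right 2 N
    omega
  refine ⟨18 * max 2 N, hN, Aux12.EG (max 2 N), Aux12.isDag_EG (max 2 N), ?_⟩
  intro r hr
  constructor
  · exact Aux12.optIO1_eq hT0 hr
  · have h := Aux12.optIO2_ge hT0 hT2 hr
    have hcast : 3 * ((max 2 N : ℕ) : ℝ) ≤ 33 * (MPP.optIO (Aux12.EG (max 2 N)) 2 r 1 : ℝ) + 3 := by
      exact_mod_cast h
    have hT2' : (2:ℝ) ≤ ((max 2 N : ℕ) : ℝ) := by exact_mod_cast hT2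
    rw [show ((18 * max 2 N : ℕ) : ℝ) = 18 * ((max 2 N : ℕ) : ℝ) from by push_cast; ring]
    linarith
end

section
/- For all d, n₀, g ∈ ℤ⁺, the zipper gadget Z(d,n₀,g) with a single processor (k=1) and memory bound r = 2d+2 admits a pebbling strategy that uses no I/O moves and computes every node exactly once; consequently the optimal MPP cost with k=1 and r = 2d+2 equals n, the number of nodes of Z(d,n₀,g). -/
open scoped Classical

/-- Vertices of the zipper gadget `Z(d, n₀, g)`: input-group nodes `u j`
(`j < d` is group `S₁`, `d ≤ j < 2d` is group `S₂`), main-chain nodes `v i`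
(0-based, so `v 0` is the paper's `v₁`), and chain nodes `w j t`
(`t = 0, …, 2g−1`) attached in front of `u j`. -/
inductive ZipV (d n₀ g : ℕ) where
  | u (j : Fin (2 * d))
  | v (i : Fin n₀)
  | w (j : Fin (2 * d)) (t : Fin (2 * g))
  deriving DecidableEq

/-- Edges of the zipper gadget `Z(d, n₀, g)`: the chain `w j 0 → … → w j (2g−1) → u j`
in front of each input node, the main chain `v 0 → v 1 → …`, and an edge from
every node of `S₁` to `v i` for even `i` (the paper's odd `i`, 1-based) and from
every node of `S₂` to `v i` for odd `i`. -/
def ZipE (d n₀ g : ℕ) : ZipV d n₀ g → ZipV d n₀ g → Prop :=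
  fun x y => match x, y with
  | .w j t, .w j' t' => j = j' ∧ (t' : ℕ) = (t : ℕ) + 1
  | .w j t, .u j' => j = j' ∧ (t : ℕ) = 2 * g - 1
  | .u j, .v i => ((j : ℕ) < d ∧ (i : ℕ) % 2 = 0) ∨ (d ≤ (j : ℕ) ∧ (i : ℕ) % 2 = 1)
  | .v i, .v i' => (i' : ℕ) = (i : ℕ) + 1
  | _, _ => False

section Aux1
open MPP
variable {V : Type*} [DecidableEq V]

def C1 (s : Finset V) : MPP.Conf V 1 := ⟨fun _ => s, ∅⟩

inductive Instr (V : Type*) where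
  | comp : V → Instr V
  | rem : V → Instr V

def Instr.toMove : Instr V → MPP.Move V 1
  | .comp x => .compute 1 (fun _ => 0) (fun _ => x)
  | .rem x => .removeRed 0 x

def Instr.cv : Instr V → Option V
  | .comp x => some x
  | .rem _ => none

lemma apply_comp (x : V) (s : Finset V) :
    MPP.apply ((Instr.comp x).toMove) (C1 s) = C1 (insert x s) := by
  simp only [Instr.toMove, MPP.apply, C1]
  congr 1
  funext j
  have hj : j = 0 := Subsingleton.elim _ _
  subst hj
  simp only [MPP.addRed]
  have h1 : Finset.image (fun _ : Fin 1 => x)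
      (Finset.filter (fun _ : Fin 1 => True) Finset.univ) = {x} := by simp
  rw [h1, Finset.union_comm, ← Finset.insert_eq]

lemma apply_rem (x : V) (s : Finset V) :
    MPP.apply ((Instr.rem x).toMove) (C1 s) = C1 (s \ {x}) := by
  simp only [Instr.toMove, MPP.apply, C1]
  congr 1
  funext j
  have hj : j = 0 := Subsingleton.elim _ _
  subst hj
  simp

lemma run_comp {E : V → V → Prop} {r : ℕ} {s : Finset V} {x : V}
    (h1 : ∀ u, E u x → u ∈ s) (h2 : (insert x s).card ≤ r)
    {l : List (Instr V)} {C' : MPP.Conf V 1}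
    (h : MPP.Run E r (C1 (insert x s)) (l.map Instr.toMove) C') :
    MPP.Run E r (C1 s) ((Instr.comp x :: l).map Instr.toMove) C' := by
  rw [List.map_cons]
  refine MPP.Run.cons ?_ ?_ ?_
  · exact ⟨le_refl 1, Function.injective_of_subsingleton _, fun i u hu => h1 u hu⟩
  · rw [apply_comp]; intro j; exact h2
  · rw [apply_comp]; exact h

lemma run_rem {E : V → V → Prop} {r : ℕ} {s : Finset V} {x : V}
    (h2 : s.card ≤ r)
    {l : List (Instr V)} {C' : MPP.Conf V 1}
    (h : MPP.Run E r (C1 (s \ {x})) (l.map Instr.toMove) C') :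
    MPP.Run E r (C1 s) ((Instr.rem x :: l).map Instr.toMove) C' := by
  rw [List.map_cons]
  refine MPP.Run.cons trivial ?_ ?_
  · rw [apply_rem]; intro j
    exact le_trans (Finset.card_le_card (Finset.sdiff_subset)) h2
  · rw [apply_rem]; exact h

lemma run_append {k : ℕ} {E : V → V → Prop} {r : ℕ} {C C' C'' : MPP.Conf V k}
    {l1 l2 : List (MPP.Move V k)}
    (h1 : MPP.Run E r C l1 C') (h2 : MPP.Run E r C' l2 C'') :
    MPP.Run E r C (l1 ++ l2) C'' := by
  induction h1 with
  | nil => simpa using h2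
  | cons hl hv _ ih => exact MPP.Run.cons hl hv (ih h2)

lemma cost_toMove (g : ℕ) : ∀ l : List (Instr V),
    MPP.cost g (l.map Instr.toMove) = (l.filterMap Instr.cv).length
  | [] => rfl
  | .comp x :: l => by
      have ih := cost_toMove g l
      simp only [MPP.cost, List.map_map, List.map_cons, List.sum_cons, Function.comp,
        Instr.toMove, MPP.moveCost, List.filterMap_cons, Instr.cv, List.length_cons] at ih ⊢
      omega
  | .rem x :: l => by
      have ih := cost_toMove g l
      simp only [MPP.cost, List.map_map, List.map_cons, List.sum_cons, Function.comp,
        Instr.toMove, MPP.moveCost, List.filterMap_cons, Instr.cv, List.length_cons] at ih ⊢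
      omega

lemma io_toMove : ∀ l : List (Instr V), MPP.ioCount (l.map Instr.toMove) = 0
  | [] => rfl
  | .comp x :: l => by
      have := io_toMove l
      simp only [MPP.ioCount, List.map_cons, List.filter_cons] at this ⊢
      simpa [Instr.toMove, MPP.isIO] using this
  | .rem x :: l => by
      have := io_toMove l
      simp only [MPP.ioCount, List.map_cons, List.filter_cons] at this ⊢
      simpa [Instr.toMove, MPP.isIO] using this

lemma computedAt_iff (l : List (Instr V)) (s : ℕ) (x : V) :
    MPP.ComputedAt (l.map Instr.toMove) s x ↔
      ∃ i, l[s]? = some i ∧ Instr.cv i = some x := by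
  unfold MPP.ComputedAt
  rw [List.getElem?_map]
  constructor
  · rintro ⟨mv, hmv, hx⟩
    obtain ⟨i, hi, hmap⟩ := Option.map_eq_some_iff.mp hmv
    refine ⟨i, hi, ?_⟩
    cases i with
    | comp y =>
        simp only [Instr.toMove] at hmap
        subst hmap
        simp only [MPP.computes, Set.mem_range] at hx
        obtain ⟨_, rfl⟩ := hx
        rfl
    | rem y =>
        simp only [Instr.toMove] at hmap
        subst hmap
        simp [MPP.computes] at hx
  · rintro ⟨i, hi, hcv⟩
    cases i with
    | comp y =>
        simp only [Instr.cv, Option.some.injEq] at hcv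
        subst hcv
        refine ⟨(Instr.comp y).toMove, by rw [hi]; rfl, ?_⟩
        show y ∈ MPP.computes ((Instr.comp y).toMove)
        simp only [Instr.toMove, MPP.computes]
        exact ⟨0, rfl⟩
    | rem y => simp [Instr.cv] at hcv

lemma exists_unique_filterMap {α β : Type*} (f : α → Option β) :
    ∀ (l : List α), (l.filterMap f).Nodup → ∀ b ∈ l.filterMap f,
      ∃! s : ℕ, ∃ a, l[s]? = some a ∧ f a = some b
  | [], _, b, hb => by simp at hb
  | a :: l, hnd, b, hb => by
      rcases hfa : f a with _ | b'
      · rw [List.filterMap_cons_none hfa] at hnd hb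
        obtain ⟨s, hs, hu⟩ := exists_unique_filterMap f l hnd b hb
        refine ⟨s + 1, by simpa using hs, ?_⟩
        rintro t ⟨a', ha', hfa'⟩
        match t with
        | 0 =>
            simp only [List.getElem?_cons_zero, Option.some.injEq] at ha'
            subst ha'
            rw [hfa] at hfa'; exact absurd hfa' (by simp)
        | t + 1 =>
            simp only [List.getElem?_cons_succ] at ha'
            have := hu t ⟨a', ha', hfa'⟩
            omega
      · rw [List.filterMap_cons_some hfa] at hnd hb
        have hnd' := hnd
        rw [List.nodup_cons] at hnd'
        by_cases hbb : b = b'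
        · subst hbb
          refine ⟨0, ⟨a, by simp, hfa⟩, ?_⟩
          rintro t ⟨a', ha', hfa'⟩
          match t with
          | 0 => rfl
          | t + 1 =>
              simp only [List.getElem?_cons_succ] at ha'
              exfalso
              exact hnd'.1 (List.mem_filterMap.mpr ⟨a', List.mem_of_getElem? ha', hfa'⟩)
        · have hb' : b ∈ l.filterMap f := by
            rcases List.mem_cons.mp hb with h | h
            · exact absurd h hbb
            · exact h
          obtain ⟨s, hs, hu⟩ := exists_unique_filterMap f l hnd'.2 b hb'
          refine ⟨s + 1, by simpa using hs, ?_⟩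
          rintro t ⟨a', ha', hfa'⟩
          match t with
          | 0 =>
              simp only [List.getElem?_cons_zero, Option.some.injEq] at ha'
              subst ha'
              rw [hfa] at hfa'
              exact absurd (Option.some.inj hfa').symm hbb
          | t + 1 =>
              simp only [List.getElem?_cons_succ] at ha'
              have := hu t ⟨a', ha', hfa'⟩
              omega

end Aux1
section Aux2
open MPP
variable {V : Type*} [DecidableEq V] {k : ℕ}

/-- nodes pebbled in a configuration -/
def pebbled (C : MPP.Conf V k) (x : V) : Prop := (∃ j, x ∈ C.red j) ∨ x ∈ C.blue

lemma pebbled_apply {E : V → V → Prop} {C : MPP.Conf V k} {mv : MPP.Move V k}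
    (hleg : MPP.Legal E C mv) {x : V} (h : pebbled (MPP.apply mv C) x) :
    pebbled C x ∨ x ∈ MPP.computes mv := by
  cases mv with
  | save m f v =>
      rcases h with ⟨j, hj⟩ | hb
      · exact Or.inl (Or.inl ⟨j, hj⟩)
      · simp only [MPP.apply, Finset.mem_union] at hb
        rcases hb with hb | hb
        · exact Or.inl (Or.inr hb)
        · obtain ⟨i, _, rfl⟩ := Finset.mem_image.mp hb
          exact Or.inl (Or.inl ⟨f i, hleg.2.2 i⟩)
  | load m f v =>
      rcases h with ⟨j, hj⟩ | hb
      · simp only [MPP.apply, MPP.addRed, Finset.mem_union] at hj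
        rcases hj with hj | hj
        · exact Or.inl (Or.inl ⟨j, hj⟩)
        · obtain ⟨i, _, rfl⟩ := Finset.mem_image.mp hj
          exact Or.inl (Or.inr (hleg.2.2 i))
      · exact Or.inl (Or.inr hb)
  | compute m f v =>
      rcases h with ⟨j, hj⟩ | hb
      · simp only [MPP.apply, MPP.addRed, Finset.mem_union] at hj
        rcases hj with hj | hj
        · exact Or.inl (Or.inl ⟨j, hj⟩)
        · obtain ⟨i, _, rfl⟩ := Finset.mem_image.mp hj
          exact Or.inr ⟨i, rfl⟩
      · exact Or.inl (Or.inr hb)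
  | removeRed j0 x0 =>
      rcases h with ⟨j, hj⟩ | hb
      · simp only [MPP.apply] at hj
        by_cases hjj : j = j0
        · subst hjj
          rw [Function.update_self] at hj
          exact Or.inl (Or.inl ⟨j, (Finset.mem_sdiff.mp hj).1⟩)
        · rw [Function.update_of_ne hjj] at hj
          exact Or.inl (Or.inl ⟨j, hj⟩)
      · exact Or.inl (Or.inr hb)
  | removeBlue x0 =>
      rcases h with ⟨j, hj⟩ | hb
      · exact Or.inl (Or.inl ⟨j, hj⟩)
      · simp only [MPP.apply, Finset.mem_sdiff] at hb
        exact Or.inl (Or.inr hb.1)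

/-- nodes computed somewhere in a move list -/
def compSet (ms : List (MPP.Move V k)) : Set V := {x | ∃ mv ∈ ms, x ∈ MPP.computes mv}

lemma compSet_mono {ms ms' : List (MPP.Move V k)} (h : ∀ mv ∈ ms, mv ∈ ms') :
    compSet ms ⊆ compSet ms' := fun _ ⟨mv, hmv, hx⟩ => ⟨mv, h mv hmv, hx⟩

lemma pebbled_run {E : V → V → Prop} {r : ℕ} {C C' : MPP.Conf V k}
    {l : List (MPP.Move V k)} (h : MPP.Run E r C l C') :
    ∀ x, pebbled C' x → pebbled C x ∨ x ∈ compSet l := by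
  induction h with
  | nil => exact fun x hx => Or.inl hx
  | @cons C C'' mv ms hleg hval _ ih =>
      intro x hx
      rcases ih x hx with h1 | h1
      · rcases pebbled_apply hleg h1 with h2 | h2
        · exact Or.inl h2
        · exact Or.inr ⟨mv, List.mem_cons_self, h2⟩
      · obtain ⟨mv', hmv', hx'⟩ := h1
        exact Or.inr ⟨mv', List.mem_cons_of_mem _ hmv', hx'⟩

lemma legal_at {E : V → V → Prop} {r : ℕ} {C C' : MPP.Conf V k}
    {l : List (MPP.Move V k)} (h : MPP.Run E r C l C') :
    ∀ s mv, l[s]? = some mv → ∃ D, MPP.Run E r C (l.take s) D ∧ MPP.Legal E D mv := by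
  induction h with
  | nil => intro s mv h; simp at h
  | @cons C C'' mv0 ms hleg hval hrun ih =>
      intro s mv h
      match s with
      | 0 =>
          simp only [List.getElem?_cons_zero, Option.some.injEq] at h
          subst h
          exact ⟨C, MPP.Run.nil C, hleg⟩
      | s + 1 =>
          simp only [List.getElem?_cons_succ] at h
          obtain ⟨D, hD, hDleg⟩ := ih s mv h
          exact ⟨D, MPP.Run.cons hleg hval hD, hDleg⟩

lemma pebbled_init (x : V) : ¬ pebbled (MPP.init V k) x := by
  rintro (⟨j, hj⟩ | hb)
  · simp [MPP.init] at hj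
  · simp [MPP.init] at hb

lemma computed_closed {E : V → V → Prop} {r : ℕ} {Cf : MPP.Conf V k}
    {ms : List (MPP.Move V k)} (h : MPP.Run E r (MPP.init V k) ms Cf) :
    ∀ x ∈ compSet ms, ∀ u, E u x → u ∈ compSet ms := by
  rintro x ⟨mv, hmv, hx⟩ u hu
  obtain ⟨s, hs⟩ := List.mem_iff_getElem?.mp hmv
  obtain ⟨D, hD, hleg⟩ := legal_at h s mv hs
  cases mv with
  | compute m f v =>
      obtain ⟨i, rfl⟩ := hx
      have hured : u ∈ D.red (f i) := hleg.2.2 i u hu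
      have : pebbled D u := Or.inl ⟨f i, hured⟩
      rcases pebbled_run hD u this with h1 | h1
      · exact absurd h1 (pebbled_init u)
      · exact compSet_mono (fun mv' hmv' => (List.take_subset _ _) hmv') h1
  | save m f v => simp [MPP.computes] at hx
  | load m f v => simp [MPP.computes] at hx
  | removeRed j0 x0 => simp [MPP.computes] at hx
  | removeBlue x0 => simp [MPP.computes] at hx

lemma reach_compSet {E : V → V → Prop} {r : ℕ} {Cf : MPP.Conf V k}
    {ms : List (MPP.Move V k)} (h : MPP.Run E r (MPP.init V k) ms Cf)
    {x z : V} (hreach : Relation.ReflTransGen E x z) (hz : z ∈ compSet ms) :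
    x ∈ compSet ms := by
  induction hreach using Relation.ReflTransGen.head_induction_on with
  | refl => exact hz
  | head hxy _ ih => exact computed_closed h _ ih _ hxy

/-- every node of the final configuration of a pebbling is computed somewhere -/
lemma pebbled_final_computed {E : V → V → Prop} {r : ℕ} {Cf : MPP.Conf V k}
    {ms : List (MPP.Move V k)} (h : MPP.Run E r (MPP.init V k) ms Cf)
    {x : V} (hx : pebbled Cf x) : x ∈ compSet ms := by
  rcases pebbled_run h x hx with h1 | h1
  · exact absurd h1 (pebbled_init x)
  · exact h1

/-- at a legal compute position of a 1-processor run, at most one node is computed -/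
lemma computes_subsingleton {E : V → V → Prop} {r : ℕ} {C C' : MPP.Conf V 1}
    {l : List (MPP.Move V 1)} (h : MPP.Run E r C l C')
    {s : ℕ} {mv : MPP.Move V 1} (hs : l[s]? = some mv)
    {x y : V} (hx : x ∈ MPP.computes mv) (hy : y ∈ MPP.computes mv) : x = y := by
  obtain ⟨D, _, hleg⟩ := legal_at h s mv hs
  cases mv with
  | compute m f v =>
      obtain ⟨i, rfl⟩ := hx
      obtain ⟨i', rfl⟩ := hy
      have hm : m ≤ 1 := hleg.1
      congr 1
      have h1 : (i : ℕ) = 0 := by omega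
      have h2 : (i' : ℕ) = 0 := by omega
      exact Fin.ext (h1.trans h2.symm)
  | save m f v => simp [MPP.computes] at hx
  | load m f v => simp [MPP.computes] at hx
  | removeRed j0 x0 => simp [MPP.computes] at hx
  | removeBlue x0 => simp [MPP.computes] at hx

/-- the number of compute positions is at most the cost -/
lemma computeIdx_card_le_cost (g : ℕ) :
    ∀ l : List (MPP.Move V k),
      ((Finset.range l.length).filter
        (fun s => ∃ mv, l[s]? = some mv ∧ MPP.isCompute mv = true)).card ≤ MPP.cost g l := by
  intro l
  induction l with
  | nil => simp
  | cons mv l ih =>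
      have hsub : (Finset.range (mv :: l).length).filter
            (fun s => ∃ mv', (mv :: l)[s]? = some mv' ∧ MPP.isCompute mv' = true)
          ⊆ insert 0 (((Finset.range l.length).filter
            (fun s => ∃ mv', l[s]? = some mv' ∧ MPP.isCompute mv' = true)).image (· + 1)) := by
        intro s hs
        simp only [Finset.mem_filter, Finset.mem_range, List.length_cons] at hs
        match s with
        | 0 => exact Finset.mem_insert_self 0 _
        | t + 1 =>
            refine Finset.mem_insert_of_mem (Finset.mem_image.mpr ⟨t, ?_, rfl⟩)
            simp only [Finset.mem_filter, Finset.mem_range]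
            exact ⟨by omega, by simpa using hs.2⟩
      have h2 : MPP.cost g (mv :: l) = MPP.moveCost g mv + MPP.cost g l := by
        simp [MPP.cost]
      by_cases hc : MPP.isCompute mv = true
      · have h1 : ((Finset.range (mv :: l).length).filter
              (fun s => ∃ mv', (mv :: l)[s]? = some mv' ∧ MPP.isCompute mv' = true)).card
            ≤ 1 + ((Finset.range l.length).filter
              (fun s => ∃ mv', l[s]? = some mv' ∧ MPP.isCompute mv' = true)).card := by
          refine le_trans (Finset.card_le_card hsub) ?_
          refine le_trans (Finset.card_insert_le _ _) ?_
          have := Finset.card_image_le (s := (Finset.range l.length).filter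
              (fun s => ∃ mv', l[s]? = some mv' ∧ MPP.isCompute mv' = true)) (f := (· + 1))
          omega
        have h3 : MPP.moveCost g mv = 1 := by
          cases mv with
          | compute m f v => rfl
          | save m f v => simp [MPP.isCompute] at hc
          | load m f v => simp [MPP.isCompute] at hc
          | removeRed j0 x0 => simp [MPP.isCompute] at hc
          | removeBlue x0 => simp [MPP.isCompute] at hc
        omega
      · have hsub2 : (Finset.range (mv :: l).length).filter
            (fun s => ∃ mv', (mv :: l)[s]? = some mv' ∧ MPP.isCompute mv' = true)
            ⊆ ((Finset.range l.length).filter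
              (fun s => ∃ mv', l[s]? = some mv' ∧ MPP.isCompute mv' = true)).image (· + 1) := by
          intro s hs
          have hs' := hsub hs
          rcases Finset.mem_insert.mp hs' with h0 | h1
          · subst h0
            simp only [Finset.mem_filter, Finset.mem_range] at hs
            obtain ⟨_, mv', hmv', hcomp⟩ := hs
            simp only [List.getElem?_cons_zero, Option.some.injEq] at hmv'
            subst hmv'
            exact absurd hcomp hc
          · exact h1
        have h1 : ((Finset.range (mv :: l).length).filter
              (fun s => ∃ mv', (mv :: l)[s]? = some mv' ∧ MPP.isCompute mv' = true)).card
            ≤ ((Finset.range l.length).filter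
              (fun s => ∃ mv', l[s]? = some mv' ∧ MPP.isCompute mv' = true)).card :=
          le_trans (Finset.card_le_card hsub2) Finset.card_image_le
        omega

end Aux2
namespace ZipAux
open MPP

variable {d n₀ g : ℕ}

def uu (hd : 0 < d) (i : ℕ) : ZipV d n₀ g := .u ⟨i % (2*d), Nat.mod_lt _ (by omega)⟩

def ww (hd : 0 < d) (hg : 0 < g) (j t : ℕ) : ZipV d n₀ g :=
  .w ⟨j % (2*d), Nat.mod_lt _ (by omega)⟩ ⟨t % (2*g), Nat.mod_lt _ (by omega)⟩

def vv (hn : 0 < n₀) (i : ℕ) : ZipV d n₀ g := .v ⟨i % n₀, Nat.mod_lt _ hn⟩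

def U (hd : 0 < d) (j : ℕ) : Finset (ZipV d n₀ g) := (Finset.range j).image (uu hd)

variable (hd : 0 < d) (hn : 0 < n₀) (hg : 0 < g)

lemma U_card (j : ℕ) : (U (d := d) (n₀ := n₀) (g := g) hd j).card ≤ j :=
  le_trans Finset.card_image_le (by simp)

lemma mem_U {x : ZipV d n₀ g} {j : ℕ} : x ∈ U hd j ↔ ∃ i, i < j ∧ uu hd i = x := by
  simp [U]

lemma U_succ (j : ℕ) : U (d := d) (n₀ := n₀) (g := g) hd (j+1) = insert (uu hd j) (U hd j) := by
  simp [U, Finset.range_add_one, Finset.image_insert]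

lemma ww_notin_U (j t j' : ℕ) : ww (d := d) (n₀ := n₀) (g := g) hd hg j t ∉ U hd j' := by
  rw [mem_U]
  rintro ⟨i, _, h⟩
  simp [uu, ww] at h

lemma vv_notin_U (i j' : ℕ) : vv (d := d) (n₀ := n₀) (g := g) hn i ∉ U hd j' := by
  rw [mem_U]
  rintro ⟨i', _, h⟩
  simp [uu, vv] at h

lemma ww_ne_uu (j t j' : ℕ) : ww (d := d) (n₀ := n₀) (g := g) hd hg j t ≠ uu hd j' := by
  simp [uu, ww]

lemma ww_ne_ww {j t t' : ℕ} (ht : t < 2*g) (ht' : t' < 2*g) (hne : t ≠ t') :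
    ww (d := d) (n₀ := n₀) (g := g) hd hg j t ≠ ww hd hg j t' := by
  simp only [ww, ne_eq, ZipV.w.injEq, Fin.mk.injEq]
  rintro ⟨-, h⟩
  rw [Nat.mod_eq_of_lt ht, Nat.mod_eq_of_lt ht'] at h
  exact hne h

lemma vv_ne_vv {i i' : ℕ} (hi : i < n₀) (hi' : i' < n₀) (hne : i ≠ i') :
    vv (d := d) (n₀ := n₀) (g := g) hn i ≠ vv hn i' := by
  simp only [vv, ne_eq, ZipV.v.injEq, Fin.mk.injEq]
  rw [Nat.mod_eq_of_lt hi, Nat.mod_eq_of_lt hi']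
  exact hne

lemma u_mem_U (jf : Fin (2*d)) : (ZipV.u jf : ZipV d n₀ g) ∈ U hd (2*d) := by
  rw [mem_U]
  exact ⟨jf.val, jf.isLt, by simp [uu, Nat.mod_eq_of_lt jf.isLt]⟩

lemma inNbr_ww0 (j : ℕ) (x : ZipV d n₀ g) : ¬ ZipE d n₀ g x (ww hd hg j 0) := by
  intro hx
  cases x with
  | w j'' t'' =>
      simp only [ww, ZipE] at hx
      have := hx.2
      have h0 : 0 % (2*g) = 0 := Nat.zero_mod _
      omega
  | u j'' => simp [ww, ZipE] at hx
  | v i'' => simp [ww, ZipE] at hx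

lemma inNbr_ww_succ {j t : ℕ} (ht : t + 1 < 2*g) (x : ZipV d n₀ g)
    (hx : ZipE d n₀ g x (ww hd hg j (t+1))) : x = ww hd hg j t := by
  cases x with
  | w j'' t'' =>
      simp only [ww, ZipE] at hx
      obtain ⟨h1, h2⟩ := hx
      rw [Nat.mod_eq_of_lt ht] at h2
      simp only [ww, ZipV.w.injEq]
      refine ⟨h1.symm ▸ rfl, ?_⟩
      apply Fin.ext
      simp only
      rw [Nat.mod_eq_of_lt (by omega : t < 2*g)]
      omega
  | u j'' => simp [ww, ZipE] at hx
  | v i'' => simp [ww, ZipE] at hx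

lemma inNbr_uu (j : ℕ) (x : ZipV d n₀ g)
    (hx : ZipE d n₀ g x (uu hd j)) : x = ww hd hg j (2*g-1) := by
  cases x with
  | w j'' t'' =>
      simp only [uu, ZipE] at hx
      obtain ⟨h1, h2⟩ := hx
      simp only [ww, ZipV.w.injEq]
      refine ⟨h1 ▸ rfl, ?_⟩
      apply Fin.ext
      simp only
      rw [Nat.mod_eq_of_lt (by omega : 2*g-1 < 2*g)]
      omega
  | u j'' => simp [uu, ZipE] at hx
  | v i'' => simp [uu, ZipE] at hx

lemma inNbr_vv0 (x : ZipV d n₀ g)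
    (hx : ZipE d n₀ g x (vv hn 0)) : ∃ jf : Fin (2*d), x = ZipV.u jf := by
  cases x with
  | w j'' t'' => simp [vv, ZipE] at hx
  | u j'' => exact ⟨j'', rfl⟩
  | v i'' =>
      simp only [vv, ZipE] at hx
      have h0 : 0 % n₀ = 0 := Nat.zero_mod _
      omega

lemma inNbr_vv_succ {a : ℕ} (ha : a + 1 < n₀) (x : ZipV d n₀ g)
    (hx : ZipE d n₀ g x (vv hn (a+1))) :
    x = vv hn a ∨ ∃ jf : Fin (2*d), x = ZipV.u jf := by
  cases x with
  | w j'' t'' => simp [vv, ZipE] at hx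
  | u j'' => exact Or.inr ⟨j'', rfl⟩
  | v i'' =>
      simp only [vv, ZipE] at hx
      rw [Nat.mod_eq_of_lt ha] at hx
      left
      simp only [vv, ZipV.v.injEq]
      apply Fin.ext
      simp only
      rw [Nat.mod_eq_of_lt (by omega : a < n₀)]
      omega

/-- the pebbling program -/
def Aseg (j : ℕ) : ℕ → ℕ → List (Instr (ZipV d n₀ g))
  | 0, t => [.comp (uu hd j), .rem (ww hd hg j t)]
  | c+1, t => .comp (ww hd hg j (t+1)) :: .rem (ww hd hg j t) :: Aseg j c (t+1)

def chain (j : ℕ) : List (Instr (ZipV d n₀ g)) :=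
  .comp (ww hd hg j 0) :: Aseg hd hg j (2*g-1) 0

def chains : ℕ → ℕ → List (Instr (ZipV d n₀ g))
  | 0, _ => []
  | c+1, j => chain hd hg j ++ chains c (j+1)

def Bseg : ℕ → ℕ → List (Instr (ZipV d n₀ g))
  | 0, _ => []
  | c+1, a => .comp (vv hn (a+1)) :: .rem (vv hn a) :: Bseg c (a+1)

def prog : List (Instr (ZipV d n₀ g)) :=
  chains hd hg (2*d) 0 ++ (.comp (vv hn 0) :: Bseg hn (n₀-1) 0)

section Run

variable {E : ZipV d n₀ g → ZipV d n₀ g → Prop}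

lemma insert_insert_sdiff {α : Type*} [DecidableEq α] {s : Finset α} {x y : α}
    (hxy : x ≠ y) (hxs : x ∉ s) : insert y (insert x s) \ {x} = insert y s := by
  ext a
  simp only [Finset.mem_sdiff, Finset.mem_insert, Finset.mem_singleton]
  constructor
  · rintro ⟨(rfl | rfl | h), hax⟩
    · exact Or.inl rfl
    · exact absurd rfl hax
    · exact Or.inr h
  · rintro (rfl | h)
    · exact ⟨Or.inl rfl, fun hax => hxy (hax ▸ rfl)⟩
    · exact ⟨Or.inr (Or.inr h), fun hax => hxs (hax ▸ h)⟩

lemma run_Aseg (j : ℕ) (hj : j < 2*d) :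
    ∀ c t, t + c + 1 = 2*g →
      MPP.Run (ZipE d n₀ g) (2*d+2)
        (C1 (insert (ww hd hg j t) (U hd j)))
        ((Aseg hd hg j c t).map Instr.toMove)
        (C1 (U hd (j+1)))
  | 0, t, ht => by
      rw [Aseg]
      have hcard0 : (U (d := d) (n₀ := n₀) (g := g) hd j).card ≤ 2*d := le_trans (U_card hd j) (by omega)
      refine run_comp (x := uu hd j) (s := insert (ww hd hg j t) (U hd j)) ?_ ?_ ?_
      · intro u hu
        rw [inNbr_uu hd hg j u hu]
        have : t = 2*g - 1 := by omega
        rw [← this]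
        exact Finset.mem_insert_self _ _
      · refine le_trans (Finset.card_insert_le _ _) ?_
        refine le_trans (Nat.add_le_add_right (Finset.card_insert_le _ _) 1) ?_
        omega
      · refine run_rem ?_ ?_
        · refine le_trans (Finset.card_insert_le _ _) ?_
          refine le_trans (Nat.add_le_add_right (Finset.card_insert_le _ _) 1) ?_
          omega
        · have hset : insert (uu (d := d) (n₀ := n₀) (g := g) hd j) (insert (ww hd hg j t) (U hd j)) \ {ww hd hg j t}
              = U hd (j+1) := by
            rw [insert_insert_sdiff (ww_ne_uu hd hg j t j) (ww_notin_U hd hg j t j), U_succ]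
          rw [hset, List.map_nil]
          exact MPP.Run.nil _
  | c+1, t, ht => by
      rw [Aseg]
      have hcard0 : (U (d := d) (n₀ := n₀) (g := g) hd j).card ≤ 2*d := le_trans (U_card hd j) (by omega)
      have hmap : ((Instr.comp (ww hd hg j (t+1)) :: Instr.rem (ww hd hg j t) :: Aseg hd hg j c (t+1)) : List (Instr (ZipV d n₀ g)))
          = Instr.comp (ww hd hg j (t+1)) :: (Instr.rem (ww hd hg j t) :: Aseg hd hg j c (t+1)) := rfl
      refine run_comp ?_ ?_ ?_
      · intro u hu
        rw [inNbr_ww_succ hd hg (by omega) u hu]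
        exact Finset.mem_insert_self _ _
      · refine le_trans (Finset.card_insert_le _ _) ?_
        refine le_trans (Nat.add_le_add_right (Finset.card_insert_le _ _) 1) ?_
        omega
      · refine run_rem ?_ ?_
        · refine le_trans (Finset.card_insert_le _ _) ?_
          refine le_trans (Nat.add_le_add_right (Finset.card_insert_le _ _) 1) ?_
          omega
        · have hset : insert (ww (d := d) (n₀ := n₀) (g := g) hd hg j (t+1)) (insert (ww hd hg j t) (U hd j)) \ {ww hd hg j t}
              = insert (ww hd hg j (t+1)) (U hd j) := by
            exact insert_insert_sdiff
              (ww_ne_ww hd hg (by omega) (by omega) (by omega))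
              (ww_notin_U hd hg j t j)
          rw [hset]
          exact run_Aseg j hj c (t+1) (by omega)

lemma run_chain (j : ℕ) (hj : j < 2*d) :
    MPP.Run (ZipE d n₀ g) (2*d+2) (C1 (U hd j))
      ((chain hd hg j).map Instr.toMove) (C1 (U hd (j+1))) := by
  rw [chain]
  refine run_comp ?_ ?_ ?_
  · intro u hu
    exact absurd hu (inNbr_ww0 hd hg j u)
  · refine le_trans (Finset.card_insert_le _ _) ?_
    have := U_card (d := d) (n₀ := n₀) (g := g) hd j
    omega
  · exact run_Aseg hd hg j hj (2*g-1) 0 (by omega)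

lemma run_chains : ∀ c j, j + c = 2*d →
    MPP.Run (ZipE d n₀ g) (2*d+2) (C1 (U hd j))
      ((chains hd hg c j).map Instr.toMove) (C1 (U hd (2*d)))
  | 0, j, hj => by
      rw [chains]
      have : j = 2*d := by omega
      subst this
      exact MPP.Run.nil _
  | c+1, j, hj => by
      rw [chains, List.map_append]
      exact run_append (run_chain hd hg j (by omega)) (run_chains c (j+1) (by omega))

lemma run_Bseg : ∀ c a, a + c + 1 = n₀ →
    MPP.Run (ZipE d n₀ g) (2*d+2)
      (C1 (insert (vv hn a) (U hd (2*d))))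
      ((Bseg hn c a).map Instr.toMove)
      (C1 (insert (vv hn (n₀-1)) (U hd (2*d))))
  | 0, a, ha => by
      rw [Bseg]
      have : a = n₀ - 1 := by omega
      subst this
      exact MPP.Run.nil _
  | c+1, a, ha => by
      rw [Bseg]
      have hcard0 : (U (d := d) (n₀ := n₀) (g := g) hd (2*d)).card ≤ 2*d := U_card hd (2*d)
      refine run_comp ?_ ?_ ?_
      · intro u hu
        rcases inNbr_vv_succ hn (by omega) u hu with h | ⟨jf, rfl⟩
        · rw [h]; exact Finset.mem_insert_self _ _
        · exact Finset.mem_insert_of_mem (u_mem_U hd jf)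
      · refine le_trans (Finset.card_insert_le _ _) ?_
        refine le_trans (Nat.add_le_add_right (Finset.card_insert_le _ _) 1) ?_
        omega
      · refine run_rem ?_ ?_
        · refine le_trans (Finset.card_insert_le _ _) ?_
          refine le_trans (Nat.add_le_add_right (Finset.card_insert_le _ _) 1) ?_
          omega
        · have hset : insert (vv (d := d) (n₀ := n₀) (g := g) hn (a+1)) (insert (vv hn a) (U hd (2*d))) \ {vv hn a}
              = insert (vv hn (a+1)) (U hd (2*d)) := by
            exact insert_insert_sdiff
              (vv_ne_vv hn (by omega) (by omega) (by omega))
              (vv_notin_U hd hn a (2*d))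
          rw [hset]
          exact run_Bseg c (a+1) (by omega)

lemma run_prog :
    MPP.Run (ZipE d n₀ g) (2*d+2) (MPP.init (ZipV d n₀ g) 1)
      ((prog hd hn hg).map Instr.toMove)
      (C1 (insert (vv hn (n₀-1)) (U hd (2*d)))) := by
  have hinit : MPP.init (ZipV d n₀ g) 1 = C1 ∅ := rfl
  have hU0 : (U (d := d) (n₀ := n₀) (g := g) hd 0) = ∅ := by simp [U]
  rw [hinit, ← hU0, prog, List.map_append]
  refine run_append (run_chains hd hg (2*d) 0 (by omega)) ?_
  have hcard0 : (U (d := d) (n₀ := n₀) (g := g) hd (2*d)).card ≤ 2*d := U_card hd (2*d)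
  refine run_comp ?_ ?_ ?_
  · intro u hu
    obtain ⟨jf, rfl⟩ := inNbr_vv0 hn u hu
    exact u_mem_U hd jf
  · refine le_trans (Finset.card_insert_le _ _) ?_
    omega
  · exact run_Bseg hd hn (n₀-1) 0 (by omega)

lemma terminal_final :
    MPP.Terminal (ZipE d n₀ g) (C1 (insert (vv hn (n₀-1)) (U hd (2*d)))) := by
  intro x hx
  right
  refine ⟨0, ?_⟩
  show x ∈ insert (vv hn (n₀-1)) (U hd (2*d))
  cases x with
  | u jf => exact Finset.mem_insert_of_mem (u_mem_U hd jf)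
  | v i =>
      have : (i : ℕ) = n₀ - 1 := by
        by_contra hne
        have hlt : (i : ℕ) + 1 < n₀ := by have := i.isLt; omega
        exact hx (ZipV.v ⟨i.val + 1, hlt⟩) (by simp [ZipE])
      have : ZipV.v i = vv (d := d) (n₀ := n₀) (g := g) hn (n₀-1) := by
        simp only [vv, ZipV.v.injEq]
        apply Fin.ext
        simp only
        rw [Nat.mod_eq_of_lt (by omega : n₀ - 1 < n₀)]
        omega
      rw [this]
      exact Finset.mem_insert_self _ _
  | w jf tf =>
      exfalso
      by_cases htf : (tf : ℕ) + 1 < 2*g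
      · exact hx (ZipV.w jf ⟨tf.val + 1, htf⟩) (by simp [ZipE])
      · have : (tf : ℕ) = 2*g - 1 := by have := tf.isLt; omega
        exact hx (ZipV.u jf) (by simp [ZipE, this])

end Run
end ZipAux
namespace ZipAux
open MPP

variable {d n₀ g : ℕ} (hd : 0 < d) (hn : 0 < n₀) (hg : 0 < g)

def LA (j : ℕ) : List (ZipV d n₀ g) := (List.range (2*g)).map (ww hd hg j) ++ [uu hd j]

def LLc : ℕ → ℕ → List (ZipV d n₀ g)
  | 0, _ => []
  | c+1, j => LA hd hg j ++ LLc c (j+1)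

def L : List (ZipV d n₀ g) := LLc hd hg (2*d) 0 ++ (List.range n₀).map (vv hn)

lemma map_range_succ {α : Type*} (f : ℕ → α) (n : ℕ) :
    (List.range (n+1)).map f = f 0 :: (List.range n).map (fun i => f (i+1)) := by
  rw [List.range_succ_eq_map, List.map_cons, List.map_map]
  rfl

lemma fm_Aseg (j : ℕ) : ∀ c t,
    (Aseg (d := d) (n₀ := n₀) (g := g) hd hg j c t).filterMap Instr.cv
      = (List.range c).map (fun i => ww hd hg j (t+1+i)) ++ [uu hd j]
  | 0, t => by simp [Aseg, Instr.cv]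
  | c+1, t => by
      rw [Aseg]
      rw [List.filterMap_cons_some (by rfl), List.filterMap_cons_none (by rfl)]
      rw [fm_Aseg j c (t+1)]
      rw [map_range_succ, List.cons_append]
      congr 2
      apply List.map_congr_left
      intro a _
      congr 1
      omega

lemma fm_chain (j : ℕ) :
    (chain (d := d) (n₀ := n₀) (g := g) hd hg j).filterMap Instr.cv = LA hd hg j := by
  rw [chain, List.filterMap_cons_some (by rfl), fm_Aseg, LA]
  conv_rhs => rw [show 2*g = (2*g - 1) + 1 from by omega]
  rw [map_range_succ, List.cons_append]
  congr 2
  · apply List.map_congr_left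
    intro a _
    congr 1
    omega

lemma fm_chains : ∀ c j,
    (chains (d := d) (n₀ := n₀) (g := g) hd hg c j).filterMap Instr.cv = LLc hd hg c j
  | 0, j => by simp [chains, LLc]
  | c+1, j => by
      rw [chains, LLc, List.filterMap_append, fm_chain, fm_chains c (j+1)]

lemma fm_Bseg : ∀ c a,
    (Bseg (d := d) (n₀ := n₀) (g := g) hn c a).filterMap Instr.cv
      = (List.range c).map (fun i => vv hn (a+1+i))
  | 0, a => by simp [Bseg]
  | c+1, a => by
      rw [Bseg]
      rw [List.filterMap_cons_some (by rfl), List.filterMap_cons_none (by rfl)]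
      rw [fm_Bseg c (a+1)]
      rw [map_range_succ]
      congr 1
      apply List.map_congr_left
      intro b _
      congr 1
      omega

lemma fm_prog :
    (prog (d := d) (n₀ := n₀) (g := g) hd hn hg).filterMap Instr.cv = L hd hn hg := by
  rw [prog, List.filterMap_append, fm_chains, L,
    List.filterMap_cons_some (by rfl), fm_Bseg]
  congr 2
  rw [show List.range n₀ = List.range ((n₀ - 1) + 1) from by rw [Nat.sub_add_cancel hn]]
  rw [map_range_succ]
  congr 1
  apply List.map_congr_left
  intro b _
  congr 1
  omega

lemma mem_LA {x : ZipV d n₀ g} {j : ℕ} :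
    x ∈ LA hd hg j ↔ (∃ t, t < 2*g ∧ x = ww hd hg j t) ∨ x = uu hd j := by
  simp only [LA, List.mem_append, List.mem_map, List.mem_range, List.mem_singleton]
  constructor
  · rintro (⟨t, ht, rfl⟩ | rfl)
    · exact Or.inl ⟨t, ht, rfl⟩
    · exact Or.inr rfl
  · rintro (⟨t, ht, rfl⟩ | rfl)
    · exact Or.inl ⟨t, ht, rfl⟩
    · exact Or.inr rfl

lemma mem_LLc {x : ZipV d n₀ g} : ∀ c j,
    x ∈ LLc (d := d) (n₀ := n₀) (g := g) hd hg c j ↔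
      ∃ j', j ≤ j' ∧ j' < j + c ∧ x ∈ LA hd hg j'
  | 0, j => by simp [LLc]; omega
  | c+1, j => by
      rw [LLc, List.mem_append, mem_LLc c (j+1)]
      constructor
      · rintro (h | ⟨j', h1, h2, h3⟩)
        · exact ⟨j, le_refl j, by omega, h⟩
        · exact ⟨j', by omega, by omega, h3⟩
      · rintro ⟨j', h1, h2, h3⟩
        by_cases hjj : j' = j
        · subst hjj; exact Or.inl h3
        · exact Or.inr ⟨j', by omega, by omega, h3⟩

lemma mem_L (x : ZipV d n₀ g) : x ∈ L hd hn hg := by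
  rw [L, List.mem_append]
  cases x with
  | w jf tf =>
      left
      rw [mem_LLc]
      refine ⟨jf.val, by omega, by simpa using jf.isLt, ?_⟩
      rw [mem_LA]
      refine Or.inl ⟨tf.val, tf.isLt, ?_⟩
      simp only [ww, ZipV.w.injEq]
      exact ⟨Fin.ext (by simp [Nat.mod_eq_of_lt jf.isLt]),
             Fin.ext (by simp [Nat.mod_eq_of_lt tf.isLt])⟩
  | u jf =>
      left
      rw [mem_LLc]
      refine ⟨jf.val, by omega, by simpa using jf.isLt, ?_⟩
      rw [mem_LA]
      refine Or.inr ?_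
      simp only [uu, ZipV.u.injEq]
      exact Fin.ext (by simp [Nat.mod_eq_of_lt jf.isLt])
  | v i =>
      right
      refine List.mem_map.mpr ⟨i.val, List.mem_range.mpr i.isLt, ?_⟩
      simp only [vv, ZipV.v.injEq]
      exact Fin.ext (by simp [Nat.mod_eq_of_lt i.isLt])

lemma ww_idx {j t j' t' : ℕ} (h : ww (d := d) (n₀ := n₀) (g := g) hd hg j t = ww hd hg j' t') :
    j % (2*d) = j' % (2*d) := by
  simp only [ww, ZipV.w.injEq, Fin.mk.injEq] at h
  exact h.1

lemma uu_idx {j j' : ℕ} (h : uu (d := d) (n₀ := n₀) (g := g) hd j = uu hd j') :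
    j % (2*d) = j' % (2*d) := by
  simp only [uu, ZipV.u.injEq, Fin.mk.injEq] at h
  exact h

lemma nodup_LA (j : ℕ) : (LA (d := d) (n₀ := n₀) (g := g) hd hg j).Nodup := by
  rw [LA, List.nodup_append]
  refine ⟨?_, List.nodup_singleton _, ?_⟩
  · refine List.Nodup.map_on ?_ List.nodup_range
    intro t ht t' ht' hww
    rw [List.mem_range] at ht ht'
    by_contra hne
    exact ww_ne_ww hd hg ht ht' hne hww
  · intro a ha _ hb rfl
    rw [List.mem_singleton] at hb
    subst hb
    obtain ⟨t, _, hww⟩ := List.mem_map.mp ha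
    exact ww_ne_uu hd hg j t j hww

lemma LA_disjoint {j j' : ℕ} (hj : j < 2*d) (hj' : j' < 2*d) (hne : j ≠ j') :
    (LA (d := d) (n₀ := n₀) (g := g) hd hg j).Disjoint (LA hd hg j') := by
  intro a ha ha'
  rw [mem_LA] at ha ha'
  have : j % (2*d) = j' % (2*d) := by
    rcases ha with ⟨t, _, rfl⟩ | rfl
    · rcases ha' with ⟨t', _, h⟩ | h
      · exact ww_idx hd hg h
      · exact absurd h (ww_ne_uu hd hg j t j')
    · rcases ha' with ⟨t', _, h⟩ | h
      · exact absurd h.symm (ww_ne_uu hd hg j' t' j)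
      · exact uu_idx hd h
  rw [Nat.mod_eq_of_lt hj, Nat.mod_eq_of_lt hj'] at this
  exact hne this

lemma nodup_LLc : ∀ c j, j + c ≤ 2*d →
    (LLc (d := d) (n₀ := n₀) (g := g) hd hg c j).Nodup
  | 0, j, _ => List.nodup_nil
  | c+1, j, hle => by
      rw [LLc, List.nodup_append]
      refine ⟨nodup_LA hd hg j, nodup_LLc c (j+1) (by omega), ?_⟩
      intro a ha _ ha' rfl
      rw [mem_LLc] at ha'
      obtain ⟨j', h1, h2, h3⟩ := ha'
      exact LA_disjoint hd hg (by omega) (by omega) (by omega) ha h3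

lemma nodup_L : (L (d := d) (n₀ := n₀) (g := g) hd hn hg).Nodup := by
  rw [L, List.nodup_append]
  refine ⟨nodup_LLc hd hg (2*d) 0 (by omega), ?_, ?_⟩
  · refine List.Nodup.map_on ?_ List.nodup_range
    intro i hi i' hi' hvv
    rw [List.mem_range] at hi hi'
    by_contra hne
    exact vv_ne_vv hn hi hi' hne hvv
  · intro a ha _ hb rfl
    rw [mem_LLc] at ha
    obtain ⟨j', _, _, h3⟩ := ha
    rw [mem_LA] at h3
    obtain ⟨i, _, hvv⟩ := List.mem_map.mp hb
    rcases h3 with ⟨t, _, rfl⟩ | rfl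
    · simp [ww, vv] at hvv
    · simp [uu, vv] at hvv

lemma length_LA (j : ℕ) : (LA (d := d) (n₀ := n₀) (g := g) hd hg j).length = 2*g + 1 := by
  simp [LA]

lemma length_LLc : ∀ c j,
    (LLc (d := d) (n₀ := n₀) (g := g) hd hg c j).length = c * (2*g + 1)
  | 0, _ => by simp [LLc]
  | c+1, j => by
      rw [LLc, List.length_append, length_LA, length_LLc c (j+1)]
      ring

lemma length_L : (L (d := d) (n₀ := n₀) (g := g) hd hn hg).length = n₀ + 2*d*(2*g+1) := by
  rw [L, List.length_append, length_LLc, List.length_map, List.length_range]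
  ring

end ZipAux
namespace ZipAux
open MPP

variable {d n₀ g : ℕ}

lemma sink_vlast (hn : 0 < n₀) : MPP.IsSink (ZipE d n₀ g) (ZipV.v ⟨n₀ - 1, by omega⟩) := by
  intro x hx
  cases x with
  | w jf tf => simp [ZipE] at hx
  | u jf => simp [ZipE] at hx
  | v i =>
      simp only [ZipE] at hx
      have := i.isLt
      omega

lemma reach_v (hn : 0 < n₀) : ∀ c (i : Fin n₀), i.val + c + 1 = n₀ →
    Relation.ReflTransGen (ZipE d n₀ g) (ZipV.v i) (ZipV.v ⟨n₀ - 1, by omega⟩)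
  | 0, i, hi => by
      have : i = ⟨n₀ - 1, by omega⟩ := Fin.ext (by simp; omega)
      rw [this]
  | c+1, i, hi => by
      refine Relation.ReflTransGen.head
        (show ZipE d n₀ g (ZipV.v i) (ZipV.v ⟨i.val + 1, by omega⟩) from by simp [ZipE])
        (reach_v hn c ⟨i.val + 1, by omega⟩ (by simp; omega))

lemma reach_u (hn : 0 < n₀) (jf : Fin (2*d)) :
    ∃ z, MPP.IsSink (ZipE d n₀ g) z ∧ Relation.ReflTransGen (ZipE d n₀ g) (ZipV.u jf) z := by
  by_cases h : (jf : ℕ) < d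
  · refine ⟨ZipV.v ⟨n₀ - 1, by omega⟩, sink_vlast hn, ?_⟩
    refine Relation.ReflTransGen.head
      (show ZipE d n₀ g (ZipV.u jf) (ZipV.v ⟨0, hn⟩) from Or.inl ⟨h, by simp⟩) ?_
    exact reach_v hn (n₀ - 1) ⟨0, hn⟩ (by simp; omega)
  · by_cases h2 : 1 < n₀
    · refine ⟨ZipV.v ⟨n₀ - 1, by omega⟩, sink_vlast hn, ?_⟩
      refine Relation.ReflTransGen.head
        (show ZipE d n₀ g (ZipV.u jf) (ZipV.v ⟨1, h2⟩) from Or.inr ⟨by omega, by simp⟩) ?_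
      exact reach_v hn (n₀ - 2) ⟨1, h2⟩ (by simp; omega)
    · refine ⟨ZipV.u jf, ?_, Relation.ReflTransGen.refl⟩
      intro x hx
      cases x with
      | w jf' tf' => simp [ZipE] at hx
      | u jf' => simp [ZipE] at hx
      | v i =>
          simp only [ZipE] at hx
          have := i.isLt
          rcases hx with ⟨h3, _⟩ | ⟨_, h4⟩
          · exact h h3
          · omega

lemma reach_w (hg : 0 < g) (jf : Fin (2*d)) : ∀ c (tf : Fin (2*g)), tf.val + c + 1 = 2*g →
    Relation.ReflTransGen (ZipE d n₀ g) (ZipV.w jf tf) (ZipV.u jf)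
  | 0, tf, htf => by
      refine Relation.ReflTransGen.single ?_
      show (jf = jf ∧ (tf : ℕ) = 2*g - 1)
      exact ⟨rfl, by omega⟩
  | c+1, tf, htf => by
      refine Relation.ReflTransGen.head
        (show ZipE d n₀ g (ZipV.w jf tf) (ZipV.w jf ⟨tf.val + 1, by omega⟩) from ⟨rfl, by simp⟩)
        (reach_w hg jf c ⟨tf.val + 1, by omega⟩ (by simp; omega))

lemma all_reach (hn : 0 < n₀) (hg : 0 < g) (x : ZipV d n₀ g) :
    ∃ z, MPP.IsSink (ZipE d n₀ g) z ∧ Relation.ReflTransGen (ZipE d n₀ g) x z := by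
  cases x with
  | v i => exact ⟨_, sink_vlast hn, reach_v hn (n₀ - 1 - i.val) i (by have := i.isLt; omega)⟩
  | u jf => exact reach_u hn jf
  | w jf tf =>
      obtain ⟨z, hz, hr⟩ := reach_u (d := d) (g := g) hn jf
      exact ⟨z, hz, (reach_w hg jf (2*g - 1 - tf.val) tf (by have := tf.isLt; omega)).trans hr⟩

/-- lower bound: every pebbling costs at least `n` -/
lemma lower_bound (hd : 0 < d) (hn : 0 < n₀) (hg : 0 < g) (ms : List (MPP.Move (ZipV d n₀ g) 1))
    (hms : MPP.IsPebbling (ZipE d n₀ g) (2*d+2) ms) :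
    n₀ + 2*d*(2*g+1) ≤ MPP.cost g ms := by
  obtain ⟨Cf, hrun, hterm⟩ := hms
  -- every node is computed at some position
  have hall : ∀ x : ZipV d n₀ g, ∃ s : ℕ, ∃ mv, ms[s]? = some mv ∧ x ∈ MPP.computes mv := by
    intro x
    obtain ⟨z, hz, hreach⟩ := all_reach hn hg x
    have hzpeb : pebbled Cf z := by
      rcases hterm z hz with h | ⟨j, h⟩
      · exact Or.inr h
      · exact Or.inl ⟨j, h⟩
    have hz2 : z ∈ compSet ms := pebbled_final_computed hrun hzpeb
    have hx : x ∈ compSet ms := reach_compSet hrun hreach hz2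
    obtain ⟨mv, hmv, hxc⟩ := hx
    obtain ⟨s, hs⟩ := List.mem_iff_getElem?.mp hmv
    exact ⟨s, mv, hs, hxc⟩
  choose F hF using hall
  have hinj : ∀ x y : ZipV d n₀ g, F x = F y → x = y := by
    intro x y hxy
    obtain ⟨mv, hmv, hx⟩ := hF x
    obtain ⟨mv', hmv', hy⟩ := hF y
    rw [hxy] at hmv
    rw [hmv] at hmv'
    have := Option.some.inj hmv'
    subst this
    exact computes_subsingleton hrun hmv hx hy
  -- collect indices
  have hmapnodup : ((L hd hn hg).map F).Nodup :=
    List.Nodup.map_on (fun x _ y _ h => hinj x y h) (nodup_L hd hn hg)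
  have hsub : ((L hd hn hg).map F).toFinset ⊆
      (Finset.range ms.length).filter
        (fun s => ∃ mv, ms[s]? = some mv ∧ MPP.isCompute mv = true) := by
    intro s hs
    rw [List.mem_toFinset] at hs
    obtain ⟨x, _, rfl⟩ := List.mem_map.mp hs
    obtain ⟨mv, hmv, hx⟩ := hF x
    refine Finset.mem_filter.mpr ⟨Finset.mem_range.mpr ?_, mv, hmv, ?_⟩
    · by_contra hlen
      have h1 : ms.length ≤ F x := by omega
      rw [List.getElem?_eq_none h1] at hmv
      cases hmv
    · cases mv with
      | compute m f v => rfl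
      | save m f v => simp [MPP.computes] at hx
      | load m f v => simp [MPP.computes] at hx
      | removeRed j0 x0 => simp [MPP.computes] at hx
      | removeBlue x0 => simp [MPP.computes] at hx
  calc n₀ + 2*d*(2*g+1) = (L hd hn hg).length := (length_L hd hn hg).symm
    _ = ((L hd hn hg).map F).length := (List.length_map _).symm
    _ = ((L hd hn hg).map F).toFinset.card := (List.toFinset_card_of_nodup hmapnodup).symm
    _ ≤ _ := Finset.card_le_card hsub
    _ ≤ MPP.cost g ms := computeIdx_card_le_cost g ms

end ZipAux

/-- For all `d, n₀, g ∈ ℤ⁺`, the zipper gadget `Z(d,n₀,g)` with a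
single processor (`k = 1`) and memory bound `r = 2d+2` admits a pebbling strategy
that uses no I/O moves and computes every node exactly once; consequently the
optimal MPP cost with `k = 1` and `r = 2d+2` equals `n = n₀ + 2d(2g+1)`, the
number of nodes of `Z(d,n₀,g)`. -/
theorem stmt14 (d n₀ g : ℕ) (hd : 0 < d) (hn : 0 < n₀) (hg : 0 < g) :
    (∃ ms : List (MPP.Move (ZipV d n₀ g) 1),
        MPP.IsPebbling (ZipE d n₀ g) (2 * d + 2) ms ∧ MPP.ioCount ms = 0 ∧
        ∀ x : ZipV d n₀ g, ∃! s : ℕ, MPP.ComputedAt ms s x) ∧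
    MPP.optCost (ZipE d n₀ g) 1 (2 * d + 2) g = n₀ + 2 * d * (2 * g + 1) := by
  have hpeb : MPP.IsPebbling (ZipE d n₀ g) (2*d+2)
      ((ZipAux.prog hd hn hg).map Instr.toMove) :=
    ⟨_, ZipAux.run_prog hd hn hg, ZipAux.terminal_final hd hn⟩
  have hcost : MPP.cost g ((ZipAux.prog hd hn hg).map Instr.toMove)
      = n₀ + 2*d*(2*g+1) := by
    rw [cost_toMove, ZipAux.fm_prog, ZipAux.length_L]
  constructor
  · refine ⟨(ZipAux.prog hd hn hg).map Instr.toMove, hpeb, io_toMove _, ?_⟩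
    intro x
    have hx : x ∈ (ZipAux.prog hd hn hg).filterMap Instr.cv := by
      rw [ZipAux.fm_prog]; exact ZipAux.mem_L hd hn hg x
    have hnd : ((ZipAux.prog hd hn hg).filterMap Instr.cv).Nodup := by
      rw [ZipAux.fm_prog]; exact ZipAux.nodup_L hd hn hg
    obtain ⟨s, hs, hu⟩ := exists_unique_filterMap Instr.cv _ hnd x hx
    exact ⟨s, (computedAt_iff _ _ _).mpr hs,
      fun t ht => hu t ((computedAt_iff _ _ _).mp ht)⟩
  · apply le_antisymm
    · exact Nat.sInf_le ⟨(ZipAux.prog hd hn hg).map Instr.toMove, hpeb, hcost⟩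
    · refine le_csInf ⟨_, (ZipAux.prog hd hn hg).map Instr.toMove, hpeb, hcost⟩ ?_
      rintro c ⟨ms', hms', rfl⟩
      exact ZipAux.lower_bound hd hn hg ms' hms'
end

section
/- For all d, n₀, g ∈ ℤ⁺ with n₀ ≥ 2, every MPP pebbling strategy of the zipper gadget Z(d,n₀,g) with a single processor (k=1) and memory bound r = d+2 has total cost at least (1 + d·g)·(n₀ − 1). -/
open scoped Classical

namespace ZLB

open MPP

variable {d n₀ g : ℕ}

/-- Family membership: `famN j x` iff `x` is `u j` or one of its chain nodes `w j t`. -/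
def famN (j : Fin (2*d)) : ZipV d n₀ g → Prop
  | .u j' => j' = j
  | .w j' _ => j' = j
  | .v _ => False

/-- Credit weight of a node. -/
def omg : ZipV d n₀ g → ℕ
  | .u _ => g
  | .w _ t => min g ((t : ℕ) + 1)
  | .v _ => 0

noncomputable def cj (j : Fin (2*d)) (R : Finset (ZipV d n₀ g)) : ℕ :=
  (R.filter (famN j)).sup omg

lemma omg_le (x : ZipV d n₀ g) : omg x ≤ g := by
  cases x <;> simp [omg]

lemma famN_unique {j j' : Fin (2*d)} {x : ZipV d n₀ g} (h : famN j x) (h' : famN j' x) :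
    j = j' := by
  cases x with
  | u a => exact h.symm.trans h'
  | w a t => exact h.symm.trans h'
  | v i => exact h.elim

lemma cj_le (j : Fin (2*d)) (R : Finset (ZipV d n₀ g)) : cj j R ≤ g :=
  Finset.sup_le fun x _ => omg_le x

lemma cj_mono {R R' : Finset (ZipV d n₀ g)} (h : R ⊆ R') (j : Fin (2*d)) :
    cj j R ≤ cj j R' :=
  Finset.sup_mono (Finset.filter_subset_filter _ h)

lemma cj_insert_le (j : Fin (2*d)) (x : ZipV d n₀ g) (R : Finset (ZipV d n₀ g)) :
    cj j (insert x R) ≤ max (omg x) (cj j R) := by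
  unfold cj
  by_cases h : famN j x
  · rw [Finset.filter_insert, if_pos h, Finset.sup_insert]
  · rw [Finset.filter_insert, if_neg h]
    exact le_max_right _ _

lemma cj_insert_not {j : Fin (2*d)} {x : ZipV d n₀ g} {R : Finset (ZipV d n₀ g)}
    (h : ¬ famN j x) : cj j (insert x R) = cj j R := by
  unfold cj; rw [Finset.filter_insert, if_neg h]

lemma cj_of_u_mem {j : Fin (2*d)} {R : Finset (ZipV d n₀ g)} (h : ZipV.u j ∈ R) :
    cj j R = g := by
  refine le_antisymm (cj_le j R) ?_
  have hm : ZipV.u j ∈ R.filter (famN j) := Finset.mem_filter.2 ⟨h, rfl⟩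
  exact Finset.le_sup (f := omg) hm

lemma exists_of_cj_ne {j : Fin (2*d)} {R : Finset (ZipV d n₀ g)} (h : cj j R ≠ 0) :
    ∃ x ∈ R, famN j x := by
  by_contra hc
  push_neg at hc
  have he : R.filter (famN j) = ∅ := Finset.filter_eq_empty_iff.2 hc
  simp [cj, he] at h

def needS (d : ℕ) (h : ℕ) : Finset (Fin (2*d)) :=
  Finset.univ.filter (fun j => if h % 2 = 0 then (j:ℕ) < d else d ≤ (j:ℕ))

lemma mem_needS {h : ℕ} {j : Fin (2*d)} :
    j ∈ needS d h ↔ (if h % 2 = 0 then (j:ℕ) < d else d ≤ (j:ℕ)) := by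
  simp [needS]

lemma needS_succ_disj {h : ℕ} {j : Fin (2*d)}
    (h1 : j ∈ needS d h) (h2 : j ∈ needS d (h+1)) : False := by
  rw [mem_needS] at h1 h2
  rcases Nat.mod_two_eq_zero_or_one h with hp | hp
  · have hq : (h+1) % 2 = 1 := by omega
    rw [if_pos hp] at h1
    rw [hq] at h2
    rw [if_neg (by norm_num)] at h2
    omega
  · have hq : (h+1) % 2 = 0 := by omega
    rw [hp] at h1
    rw [if_neg (by norm_num)] at h1
    rw [if_pos hq] at h2
    omega

lemma card_filter_lt :
    ((Finset.univ : Finset (Fin (2*d))).filter (fun j : Fin (2*d) => (j:ℕ) < d)).card = d := by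
  have h2 : ∀ m ∈ Finset.range d, m < 2*d := fun m hm => by
    have := Finset.mem_range.1 hm; omega
  have he : (Finset.univ : Finset (Fin (2*d))).filter (fun j : Fin (2*d) => (j:ℕ) < d)
      = (Finset.range d).attachFin h2 := by
    ext j
    simp [Finset.mem_attachFin]
  rw [he, Finset.card_attachFin, Finset.card_range]

lemma card_needS (h : ℕ) : (needS d h).card = d := by
  rcases Nat.mod_two_eq_zero_or_one h with hp | hp
  · have he : needS d h
        = (Finset.univ : Finset (Fin (2*d))).filter (fun j : Fin (2*d) => (j:ℕ) < d) := by
      ext j; simp [needS, hp]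
    rw [he, card_filter_lt]
  · have hne : needS d h
        = (Finset.univ : Finset (Fin (2*d))).filter (fun j : Fin (2*d) => ¬ (j:ℕ) < d) := by
      ext j; simp [needS, hp, not_lt]
    have hcard : (Finset.univ : Finset (Fin (2*d))).card = 2*d := by simp
    rw [hne, Finset.filter_not, Finset.card_sdiff_of_subset (Finset.filter_subset _ _),
      card_filter_lt]
    omega

lemma sum_le_of_unique {ι : Type*} (s : Finset ι) (f : ι → ℕ) (B : ℕ)
    (hle : ∀ j ∈ s, f j ≤ B)
    (huniq : ∀ j ∈ s, ∀ j' ∈ s, f j ≠ 0 → f j' ≠ 0 → j = j') :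
    ∑ j ∈ s, f j ≤ B := by
  by_cases h : ∃ j₀ ∈ s, f j₀ ≠ 0
  · obtain ⟨j₀, hj₀, hf⟩ := h
    have he : ∑ j ∈ s, f j = f j₀ := by
      refine Finset.sum_eq_single_of_mem j₀ hj₀ (fun b hb hne => ?_)
      by_contra hb0
      exact hne (huniq b hb j₀ hj₀ hb0 hf)
    rw [he]; exact hle j₀ hj₀
  · push_neg at h
    have he : ∑ j ∈ s, f j = 0 := Finset.sum_eq_zero (fun j hj => by simpa using h j hj)
    omega

lemma sum_cj_insert {s : Finset (Fin (2*d))} {x : ZipV d n₀ g}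
    {R : Finset (ZipV d n₀ g)} {B : ℕ}
    (hB : ∀ j, famN j x → cj j (insert x R) ≤ cj j R + B) :
    ∑ j ∈ s, cj j (insert x R) ≤ (∑ j ∈ s, cj j R) + B := by
  by_cases hex : ∃ j₀ ∈ s, famN j₀ x
  · obtain ⟨j₀, hj₀s, hj₀⟩ := hex
    have e1 : ∑ j ∈ s, cj j (insert x R)
        = cj j₀ (insert x R) + ∑ j ∈ s.erase j₀, cj j (insert x R) :=
      (Finset.add_sum_erase s (fun j => cj j (insert x R)) hj₀s).symm
    have e2 : ∑ j ∈ s, cj j R = cj j₀ R + ∑ j ∈ s.erase j₀, cj j R :=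
      (Finset.add_sum_erase s (fun j => cj j R) hj₀s).symm
    have he : ∑ j ∈ s.erase j₀, cj j (insert x R) = ∑ j ∈ s.erase j₀, cj j R :=
      Finset.sum_congr rfl (fun j hj => cj_insert_not
        (fun hf => (Finset.mem_erase.1 hj).1 (famN_unique hf hj₀)))
    have hb := hB j₀ hj₀
    omega
  · push_neg at hex
    have he : ∑ j ∈ s, cj j (insert x R) = ∑ j ∈ s, cj j R :=
      Finset.sum_congr rfl (fun j hj => cj_insert_not (hex j hj))
    omega

lemma sum_split (h : ℕ) (f : Fin (2*d) → ℕ) :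
    ∑ j, f j = (∑ j ∈ needS d h, f j) + ∑ j ∈ needS d (h+1), f j := by
  rcases Nat.mod_two_eq_zero_or_one h with hp | hp
  · have h1 : needS d h = Finset.univ.filter (fun j : Fin (2*d) => (j:ℕ) < d) := by
      ext j; simp [needS, hp]
    have hq : (h+1) % 2 = 1 := by omega
    have h2 : needS d (h+1) = Finset.univ.filter (fun j : Fin (2*d) => ¬ (j:ℕ) < d) := by
      ext j; simp [needS, hq, not_lt]
    rw [h1, h2, Finset.sum_filter_add_sum_filter_not]
  · have hq : (h+1) % 2 = 0 := by omega
    have h1 : needS d h = Finset.univ.filter (fun j : Fin (2*d) => ¬ (j:ℕ) < d) := by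
      ext j; simp [needS, hp, not_lt]
    have h2 : needS d (h+1) = Finset.univ.filter (fun j : Fin (2*d) => (j:ℕ) < d) := by
      ext j; simp [needS, hq]
    rw [h1, h2, add_comm, Finset.sum_filter_add_sum_filter_not]

lemma sum_cj_le (s : Finset (Fin (2*d))) (R : Finset (ZipV d n₀ g)) :
    ∑ j ∈ s, cj j R ≤ s.card * g := by
  calc ∑ j ∈ s, cj j R ≤ ∑ _j ∈ s, g := Finset.sum_le_sum fun j _ => cj_le j R
  _ = s.card * g := by rw [Finset.sum_const, smul_eq_mul]

noncomputable def hgtP (S : Finset (ZipV d n₀ g)) : ℕ :=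
  (Finset.univ.filter (fun i : Fin n₀ => ZipV.v i ∈ S)).sup (fun i => (i:ℕ)+1)

def Rd (C : Conf (ZipV d n₀ g) 1) : Finset (ZipV d n₀ g) := C.red 0

def peb (C : Conf (ZipV d n₀ g) 1) : Finset (ZipV d n₀ g) := C.red 0 ∪ C.blue

noncomputable def hgt (C : Conf (ZipV d n₀ g) 1) : ℕ := hgtP (peb C)

lemma le_hgtP {S : Finset (ZipV d n₀ g)} {i : Fin n₀} (h : ZipV.v i ∈ S) :
    (i:ℕ)+1 ≤ hgtP S := by
  unfold hgtP
  exact Finset.le_sup (f := fun i : Fin n₀ => (i:ℕ)+1)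
    (Finset.mem_filter.2 ⟨Finset.mem_univ _, h⟩)

lemma hgtP_le {S : Finset (ZipV d n₀ g)} {m : ℕ}
    (hm : ∀ i : Fin n₀, ZipV.v i ∈ S → (i:ℕ)+1 ≤ m) : hgtP S ≤ m :=
  Finset.sup_le fun i hi => hm i (Finset.mem_filter.1 hi).2

lemma hgtP_mono {S T : Finset (ZipV d n₀ g)} (h : S ⊆ T) : hgtP S ≤ hgtP T :=
  hgtP_le fun i hi => le_hgtP (h hi)

lemma hgtP_le_n (S : Finset (ZipV d n₀ g)) : hgtP S ≤ n₀ :=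
  hgtP_le fun i _ => i.isLt

lemma hgtP_insert_v {S : Finset (ZipV d n₀ g)} (i : Fin n₀) :
    hgtP (insert (ZipV.v i) S) = max ((i:ℕ)+1) (hgtP S) := by
  apply le_antisymm
  · apply hgtP_le
    intro i' hi'
    rcases Finset.mem_insert.1 hi' with h | h
    · have hii : i' = i := by simpa using h
      subst hii; exact le_max_left _ _
    · exact le_trans (le_hgtP h) (le_max_right _ _)
  · exact max_le (le_hgtP (Finset.mem_insert_self _ _)) (hgtP_mono (Finset.subset_insert _ _))

lemma hgtP_insert_nonv {S : Finset (ZipV d n₀ g)} {x : ZipV d n₀ g}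
    (hx : ∀ i : Fin n₀, x ≠ ZipV.v i) : hgtP (insert x S) = hgtP S := by
  unfold hgtP
  congr 1
  ext i
  simp only [Finset.mem_filter, Finset.mem_univ, true_and, Finset.mem_insert]
  constructor
  · rintro (h | h)
    · exact absurd h.symm (hx i)
    · exact h
  · exact Or.inr

noncomputable def phi (C : Conf (ZipV d n₀ g) 1) : ℕ :=
  if hgt C = 0 then min (d*g + g) (∑ j, cj j (Rd C))
  else (1 + d*g) * hgt C + ∑ j ∈ needS d (hgt C), cj j (Rd C)

lemma phi_congr {C C' : Conf (ZipV d n₀ g) 1} (h1 : Rd C' = Rd C) (h2 : hgt C' = hgt C) :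
    phi C' = phi C := by
  unfold phi; rw [h1, h2]

lemma mem_peb_of_red {C : Conf (ZipV d n₀ g) 1} {x : ZipV d n₀ g}
    (h : x ∈ Rd C) : x ∈ peb C := Finset.mem_union_left _ h

lemma phi_drop {C C' : Conf (ZipV d n₀ g) 1}
    (hR : Rd C' ⊆ Rd C) (hh : hgt C' ≤ hgt C) : phi C' ≤ phi C := by
  unfold phi
  by_cases h0 : hgt C = 0
  · have h0' : hgt C' = 0 := by omega
    rw [if_pos h0, if_pos h0']
    exact min_le_min le_rfl (Finset.sum_le_sum fun j _ => cj_mono hR j)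
  · rw [if_neg h0]
    by_cases h0' : hgt C' = 0
    · rw [if_pos h0']
      have hmono : ∑ j, cj j (Rd C') ≤ ∑ j, cj j (Rd C) :=
        Finset.sum_le_sum fun j _ => cj_mono hR j
      have hsplit := sum_split (d := d) (hgt C) (fun j => cj j (Rd C))
      have hb := sum_cj_le (needS d (hgt C + 1)) (Rd C)
      rw [card_needS] at hb
      have hmin := min_le_right (d*g + g) (∑ j, cj j (Rd C'))
      have hdg : d*g ≤ (1 + d*g) * hgt C := by
        calc d*g ≤ (1 + d*g) * 1 := by omega
        _ ≤ (1 + d*g) * hgt C := Nat.mul_le_mul_left _ (by omega)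
      omega
    · rw [if_neg h0']
      by_cases heq : hgt C' = hgt C
      · rw [heq]
        exact add_le_add le_rfl (Finset.sum_le_sum fun j _ => cj_mono hR j)
      · have hlt : hgt C' < hgt C := lt_of_le_of_ne hh heq
        have h1 : ∑ j ∈ needS d (hgt C'), cj j (Rd C') ≤ d * g := by
          have := sum_cj_le (needS d (hgt C')) (Rd C')
          rwa [card_needS] at this
        have h2 : (1 + d*g) * (hgt C' + 1) ≤ (1 + d*g) * hgt C :=
          Nat.mul_le_mul_left _ (by omega)
        rw [Nat.mul_succ] at h2
        omega

lemma phi_step_insert {C' C : Conf (ZipV d n₀ g) 1} {x : ZipV d n₀ g} {B : ℕ}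
    (hred : Rd C' = insert x (Rd C)) (hh : hgt C' = hgt C)
    (hB : ∀ j, famN j x → cj j (insert x (Rd C)) ≤ cj j (Rd C) + B) :
    phi C' ≤ phi C + B := by
  unfold phi
  rw [hh, hred]
  by_cases h0 : hgt C = 0
  · rw [if_pos h0, if_pos h0]
    have h1 : ∑ j, cj j (insert x (Rd C)) ≤ (∑ j, cj j (Rd C)) + B :=
      sum_cj_insert hB
    rcases le_total (d*g+g) (∑ j, cj j (Rd C)) with hc | hc
    · have := min_le_left (d*g+g) (∑ j, cj j (insert x (Rd C)))
      rw [min_eq_left hc]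
      omega
    · have := min_le_right (d*g+g) (∑ j, cj j (insert x (Rd C)))
      rw [min_eq_right hc]
      omega
  · rw [if_neg h0, if_neg h0]
    have h1 : ∑ j ∈ needS d (hgt C), cj j (insert x (Rd C))
        ≤ (∑ j ∈ needS d (hgt C), cj j (Rd C)) + B := sum_cj_insert hB
    omega

lemma u_injective : Function.Injective (fun j : Fin (2*d) => (ZipV.u j : ZipV d n₀ g)) :=
  fun a b hab => by simpa using hab

lemma flip0 {C C' : Conf (ZipV d n₀ g) 1} {i : Fin n₀}
    (h0 : hgt C = 0)
    (hin : ∀ u', ZipE d n₀ g u' (ZipV.v i) → u' ∈ Rd C)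
    (hV : (insert (ZipV.v i) (Rd C)).card ≤ d + 2)
    (hred : Rd C' = insert (ZipV.v i) (Rd C))
    (hpeb : peb C' = insert (ZipV.v i) (peb C)) :
    phi C' ≤ phi C + 1 := by
  have hi0 : (i:ℕ) = 0 := by
    by_contra hne
    have h1 : 0 < (i:ℕ) := Nat.pos_of_ne_zero hne
    have hlt : (i:ℕ) - 1 < n₀ := by have := i.isLt; omega
    have hE : ZipE d n₀ g (ZipV.v ⟨(i:ℕ)-1, hlt⟩) (ZipV.v i) := by
      simp only [ZipE]
      omega
    have hmem : ZipV.v ⟨(i:ℕ)-1, hlt⟩ ∈ peb C := Finset.mem_union_left _ (hin _ hE)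
    have := le_hgtP hmem
    unfold hgt at h0
    omega
  have hS1 : ∀ j : Fin (2*d), (j:ℕ) < d → ZipV.u j ∈ Rd C := by
    intro j hj
    apply hin
    simp only [ZipE]
    exact Or.inl ⟨hj, by omega⟩
  have hvnot : ZipV.v i ∉ Rd C := by
    intro hc
    have := le_hgtP (mem_peb_of_red hc)
    unfold hgt at h0
    omega
  have hcard : (Rd C).card ≤ d + 1 := by
    rw [Finset.card_insert_of_notMem hvnot] at hV
    omega
  set T : Finset (ZipV d n₀ g) := (needS d 0).image (fun j => ZipV.u j) with hT
  have hTsub : T ⊆ Rd C := by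
    intro x hx
    obtain ⟨j, hj, rfl⟩ := Finset.mem_image.1 hx
    refine hS1 j ?_
    have := mem_needS.1 hj
    simpa using this
  have hTcard : T.card = d := by
    rw [hT, Finset.card_image_of_injective _ u_injective, card_needS]
  have hsd : (Rd C \ T).card ≤ 1 := by
    rw [Finset.card_sdiff_of_subset hTsub]
    omega
  have hs_le : ∑ j ∈ needS d 1, cj j (Rd C) ≤ g := by
    apply sum_le_of_unique _ _ _ (fun j _ => cj_le j _)
    intro j hj j' hj' hne hne'
    obtain ⟨x₁, hx₁R, hx₁f⟩ := exists_of_cj_ne hne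
    obtain ⟨x₂, hx₂R, hx₂f⟩ := exists_of_cj_ne hne'
    have hd1 : d ≤ (j:ℕ) := by have := mem_needS.1 hj; simpa using this
    have hd2 : d ≤ (j':ℕ) := by have := mem_needS.1 hj'; simpa using this
    have hx₁T : x₁ ∉ T := by
      intro hc
      obtain ⟨j₀, hj₀, rfl⟩ := Finset.mem_image.1 hc
      have hjj : j₀ = j := hx₁f
      have : (j₀:ℕ) < d := by have := mem_needS.1 hj₀; simpa using this
      rw [hjj] at this
      omega
    have hx₂T : x₂ ∉ T := by
      intro hc
      obtain ⟨j₀, hj₀, rfl⟩ := Finset.mem_image.1 hc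
      have hjj : j₀ = j' := hx₂f
      have : (j₀:ℕ) < d := by have := mem_needS.1 hj₀; simpa using this
      rw [hjj] at this
      omega
    have hm1 : x₁ ∈ Rd C \ T := Finset.mem_sdiff.2 ⟨hx₁R, hx₁T⟩
    have hm2 : x₂ ∈ Rd C \ T := Finset.mem_sdiff.2 ⟨hx₂R, hx₂T⟩
    have hx12 : x₁ = x₂ := Finset.card_le_one.1 hsd _ hm1 _ hm2
    exact famN_unique hx₁f (hx12 ▸ hx₂f)
  have hS0sum : ∑ j ∈ needS d 0, cj j (Rd C) = d * g := by
    rw [Finset.sum_congr rfl (fun j hj => cj_of_u_mem (hS1 j (by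
      have := mem_needS.1 hj; simpa using this)))]
    rw [Finset.sum_const, card_needS, smul_eq_mul]
  have hcj_after : ∀ j : Fin (2*d), cj j (insert (ZipV.v i) (Rd C)) = cj j (Rd C) :=
    fun j => cj_insert_not (by simp [famN])
  have hhgt' : hgt C' = 1 := by
    unfold hgt
    rw [hpeb, hgtP_insert_v, hi0]
    unfold hgt at h0
    omega
  have hsum_univ : ∑ j, cj j (Rd C) = d*g + ∑ j ∈ needS d 1, cj j (Rd C) := by
    rw [sum_split (d := d) 0 (fun j => cj j (Rd C)), hS0sum]
  unfold phi
  rw [if_pos h0, hhgt', if_neg one_ne_zero, hred]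
  rw [Finset.sum_congr rfl (fun j _ => hcj_after j)]
  rw [hsum_univ, min_eq_right (by omega)]
  omega

lemma flipH {C C' : Conf (ZipV d n₀ g) 1} {i : Fin n₀}
    (h0 : hgt C ≠ 0) (hi : (i:ℕ) = hgt C)
    (hin : ∀ u', ZipE d n₀ g u' (ZipV.v i) → u' ∈ Rd C)
    (hV : (insert (ZipV.v i) (Rd C)).card ≤ d + 2)
    (hred : Rd C' = insert (ZipV.v i) (Rd C))
    (hpeb : peb C' = insert (ZipV.v i) (peb C)) :
    phi C' ≤ phi C + 1 := by
  have hh1 : 1 ≤ hgt C := Nat.pos_of_ne_zero h0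
  have hltn : hgt C - 1 < n₀ := by have := i.isLt; omega
  have hvprev : ZipV.v ⟨hgt C - 1, hltn⟩ ∈ Rd C := by
    apply hin
    simp only [ZipE]
    omega
  have hSgrp : ∀ j ∈ needS d (hgt C), ZipV.u j ∈ Rd C := by
    intro j hj
    apply hin
    simp only [ZipE]
    have hm := mem_needS.1 hj
    rcases Nat.mod_two_eq_zero_or_one (hgt C) with hp | hp
    · rw [if_pos hp] at hm
      exact Or.inl ⟨hm, by omega⟩
    · rw [hp, if_neg (by norm_num)] at hm
      exact Or.inr ⟨hm, by omega⟩
  have hvnot : ZipV.v i ∉ Rd C := by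
    intro hc
    have := le_hgtP (mem_peb_of_red hc)
    unfold hgt at *
    omega
  set T : Finset (ZipV d n₀ g) :=
    insert (ZipV.v ⟨hgt C - 1, hltn⟩)
      (insert (ZipV.v i) ((needS d (hgt C)).image (fun j => ZipV.u j))) with hTdef
  have hTsub : T ⊆ insert (ZipV.v i) (Rd C) := by
    intro x hx
    rcases Finset.mem_insert.1 hx with rfl | hx
    · exact Finset.mem_insert_of_mem hvprev
    rcases Finset.mem_insert.1 hx with rfl | hx
    · exact Finset.mem_insert_self _ _
    obtain ⟨j, hj, rfl⟩ := Finset.mem_image.1 hx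
    exact Finset.mem_insert_of_mem (hSgrp j hj)
  have himg_card : ((needS d (hgt C)).image (fun j => (ZipV.u j : ZipV d n₀ g))).card = d := by
    rw [Finset.card_image_of_injective _ u_injective, card_needS]
  have hvi_img : (ZipV.v i : ZipV d n₀ g) ∉ (needS d (hgt C)).image (fun j => ZipV.u j) := by
    simp
  have hvprev_nmem : (ZipV.v ⟨hgt C - 1, hltn⟩ : ZipV d n₀ g)
      ∉ insert (ZipV.v i) ((needS d (hgt C)).image (fun j => ZipV.u j)) := by
    intro hc
    rcases Finset.mem_insert.1 hc with h | h
    · have h' : (⟨hgt C - 1, hltn⟩ : Fin n₀) = i := by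
        injection h
      have hval : hgt C - 1 = (i:ℕ) := congrArg Fin.val h'
      omega
    · obtain ⟨j, _, hj⟩ := Finset.mem_image.1 h
      exact absurd hj (by simp)
  have hTcard : T.card = d + 2 := by
    rw [hTdef, Finset.card_insert_of_notMem hvprev_nmem,
      Finset.card_insert_of_notMem hvi_img, himg_card]
  have hTeq : T = insert (ZipV.v i) (Rd C) :=
    Finset.eq_of_subset_of_card_le hTsub (by omega)
  have hafter0 : ∀ j ∈ needS d (hgt C + 1), cj j (insert (ZipV.v i) (Rd C)) = 0 := by
    intro j hj
    by_contra hne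
    obtain ⟨x, hxR, hxf⟩ := exists_of_cj_ne hne
    rw [← hTeq] at hxR
    rcases Finset.mem_insert.1 hxR with rfl | hxR
    · exact hxf
    rcases Finset.mem_insert.1 hxR with rfl | hxR
    · exact hxf
    obtain ⟨j₀, hj₀, rfl⟩ := Finset.mem_image.1 hxR
    have hjj : j₀ = j := hxf
    exact needS_succ_disj (hjj ▸ hj₀) hj
  have hbefore : ∑ j ∈ needS d (hgt C), cj j (Rd C) = d * g := by
    rw [Finset.sum_congr rfl (fun j hj => cj_of_u_mem (hSgrp j hj)),
      Finset.sum_const, card_needS, smul_eq_mul]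
  have hhgt' : hgt C' = hgt C + 1 := by
    unfold hgt
    rw [hpeb, hgtP_insert_v, hi]
    unfold hgt
    omega
  unfold phi
  rw [hhgt', if_neg h0, if_neg (by omega), hred]
  rw [Finset.sum_eq_zero hafter0, hbefore, Nat.mul_succ]
  omega

lemma union_singleton' {α : Type*} [DecidableEq α] (s : Finset α) (a : α) :
    s ∪ {a} = insert a s := by
  rw [Finset.insert_eq, Finset.union_comm]

lemma filter_f_eq_zero {m : ℕ} (f : Fin m → Fin 1) :
    Finset.univ.filter (fun i => f i = 0) = Finset.univ :=
  Finset.filter_true_of_mem fun i _ => Subsingleton.elim _ _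

lemma addRed_zero {m : ℕ} (C : Conf (ZipV d n₀ g) 1) (f : Fin m → Fin 1)
    (vv : Fin m → ZipV d n₀ g) :
    addRed C f vv 0 = C.red 0 ∪ Finset.univ.image vv := by
  unfold MPP.addRed
  rw [filter_f_eq_zero]

lemma image_fin_zero (vv : Fin 0 → ZipV d n₀ g) : Finset.univ.image vv = ∅ := by
  simp

lemma image_fin_one (vv : Fin 1 → ZipV d n₀ g) : Finset.univ.image vv = {vv 0} := by
  ext y
  simp only [Finset.mem_image, Finset.mem_univ, true_and, Finset.mem_singleton]
  constructor
  · rintro ⟨i, rfl⟩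
    rw [Subsingleton.elim i 0]
  · rintro rfl
    exact ⟨0, rfl⟩

lemma step (hglb : 0 < g) {C : Conf (ZipV d n₀ g) 1} {mv : Move (ZipV d n₀ g) 1}
    (hL : Legal (ZipE d n₀ g) C mv) (hV : Valid (d+2) (MPP.apply mv C)) :
    phi (MPP.apply mv C) ≤ phi C + moveCost g mv := by
  cases mv with
  | removeBlue x =>
      refine le_trans (phi_drop ?_ ?_) (Nat.le_add_right _ _)
      · exact subset_rfl
      · unfold hgt
        exact hgtP_mono (Finset.union_subset_union subset_rfl Finset.sdiff_subset)
  | removeRed j x =>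
      have hj : j = 0 := Subsingleton.elim _ _
      subst hj
      refine le_trans (phi_drop ?_ ?_) (Nat.le_add_right _ _)
      · have hred : Rd (MPP.apply (Move.removeRed 0 x) C) = C.red 0 \ {x} := by
          show Function.update C.red 0 (C.red 0 \ {x}) 0 = _
          rw [Function.update_self]
        rw [hred]
        exact Finset.sdiff_subset
      · unfold hgt
        apply hgtP_mono
        have hp : peb (MPP.apply (Move.removeRed 0 x) C) = (C.red 0 \ {x}) ∪ C.blue := by
          show Function.update C.red 0 (C.red 0 \ {x}) 0 ∪ C.blue = _
          rw [Function.update_self]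
        rw [hp]
        exact Finset.union_subset_union Finset.sdiff_subset subset_rfl
  | save m f vv =>
      obtain ⟨hm, hf, hv⟩ := hL
      have himg : Finset.univ.image vv ⊆ C.red 0 := by
        intro y hy
        obtain ⟨i2, _, rfl⟩ := Finset.mem_image.1 hy
        have := hv i2
        rwa [Subsingleton.elim (f i2) 0] at this
      have hpeb : peb (MPP.apply (Move.save m f vv) C) = peb C := by
        show C.red 0 ∪ (C.blue ∪ Finset.univ.image vv) = C.red 0 ∪ C.blue
        rw [← Finset.union_assoc]
        exact Finset.union_eq_left.2 (himg.trans Finset.subset_union_left)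
      have hrc : Rd (MPP.apply (Move.save m f vv) C) = Rd C := rfl
      rw [phi_congr hrc (by unfold hgt; rw [hpeb])]
      exact Nat.le_add_right _ _
  | load m f vv =>
      obtain ⟨hm, hf, hv⟩ := hL
      interval_cases m
      · have hredeq : Rd (MPP.apply (Move.load 0 f vv) C) = Rd C := by
          show addRed C f vv 0 = C.red 0
          rw [addRed_zero, image_fin_zero, Finset.union_empty]
        have hpebeq : peb (MPP.apply (Move.load 0 f vv) C) = peb C := by
          show addRed C f vv 0 ∪ C.blue = C.red 0 ∪ C.blue
          rw [addRed_zero, image_fin_zero, Finset.union_empty]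
        rw [phi_congr hredeq (by unfold hgt; rw [hpebeq])]
        exact Nat.le_add_right _ _
      · have hxb : vv 0 ∈ C.blue := hv 0
        have hred1 : Rd (MPP.apply (Move.load 1 f vv) C) = insert (vv 0) (Rd C) := by
          show addRed C f vv 0 = _
          rw [addRed_zero, image_fin_one, union_singleton']
          rfl
        have hpeb : peb (MPP.apply (Move.load 1 f vv) C) = peb C := by
          show addRed C f vv 0 ∪ C.blue = C.red 0 ∪ C.blue
          rw [addRed_zero, image_fin_one, union_singleton', Finset.insert_union]
          exact Finset.insert_eq_self.2 (Finset.mem_union_right _ hxb)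
        refine phi_step_insert hred1 (by unfold hgt; rw [hpeb]) ?_
        intro j _
        refine le_trans (cj_insert_le j (vv 0) (Rd C)) ?_
        have := omg_le (vv 0)
        have hmc : moveCost g (Move.load 1 f vv) = g := rfl
        omega
  | compute m f vv =>
      obtain ⟨hm, hf, hv⟩ := hL
      interval_cases m
      · have hredeq : Rd (MPP.apply (Move.compute 0 f vv) C) = Rd C := by
          show addRed C f vv 0 = C.red 0
          rw [addRed_zero, image_fin_zero, Finset.union_empty]
        have hpebeq : peb (MPP.apply (Move.compute 0 f vv) C) = peb C := by
          show addRed C f vv 0 ∪ C.blue = C.red 0 ∪ C.blue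
          rw [addRed_zero, image_fin_zero, Finset.union_empty]
        rw [phi_congr hredeq (by unfold hgt; rw [hpebeq])]
        exact Nat.le_add_right _ _
      · have hin : ∀ u', ZipE d n₀ g u' (vv 0) → u' ∈ Rd C := by
          intro u' hE
          have := hv 0 u' hE
          rwa [Subsingleton.elim (f 0) 0] at this
        have hred1 : Rd (MPP.apply (Move.compute 1 f vv) C) = insert (vv 0) (Rd C) := by
          show addRed C f vv 0 = _
          rw [addRed_zero, image_fin_one, union_singleton']
          rfl
        have hpeb : peb (MPP.apply (Move.compute 1 f vv) C) = insert (vv 0) (peb C) := by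
          show addRed C f vv 0 ∪ C.blue = _
          rw [addRed_zero, image_fin_one, union_singleton', Finset.insert_union]
          rfl
        have hVc : (insert (vv 0) (Rd C)).card ≤ d + 2 := by
          calc (insert (vv 0) (Rd C)).card
              = (Rd (MPP.apply (Move.compute 1 f vv) C)).card := by rw [hred1]
          _ ≤ d + 2 := hV 0
        rcases hx : vv 0 with j | i | ⟨j, t⟩
        · -- x = u j
          rw [hx] at hin hred1 hpeb hVc
          refine phi_step_insert hred1 ?_ ?_
          · unfold hgt
            rw [hpeb, hgtP_insert_nonv (fun i => by simp)]
          · intro j' hfam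
            have hjj : j = j' := hfam
            subst hjj
            have h2g : 2*g-1 < 2*g := by omega
            have hw : (ZipV.w j ⟨2*g-1, h2g⟩ : ZipV d n₀ g) ∈ Rd C := by
              apply hin
              exact ⟨rfl, rfl⟩
            have hmem : (ZipV.w j (⟨2*g-1, h2g⟩ : Fin (2*g)) : ZipV d n₀ g)
                ∈ (Rd C).filter (famN j) := Finset.mem_filter.2 ⟨hw, rfl⟩
            have hsup := Finset.le_sup (f := omg) hmem
            have homgw : omg (ZipV.w j (⟨2*g-1, h2g⟩ : Fin (2*g)) : ZipV d n₀ g)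
                = min g (2*g-1+1) := rfl
            have homgu : omg (ZipV.u j : ZipV d n₀ g) = g := rfl
            refine le_trans (cj_insert_le _ _ _) ?_
            have hmc : moveCost g (Move.compute 1 f vv) = 1 := rfl
            unfold cj at *
            omega
        · -- x = v i
          rw [hx] at hin hred1 hpeb hVc
          by_cases h0 : hgt C = 0
          · exact flip0 h0 hin hVc hred1 hpeb
          · rcases le_or_gt ((i:ℕ)+1) (hgt C) with hle | hgt2
            · refine phi_step_insert hred1 ?_ (fun j hf => by
                exact absurd hf (by simp [famN]))
              unfold hgt
              rw [hpeb, hgtP_insert_v]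
              exact max_eq_right hle
            · have hi1 : 1 ≤ (i:ℕ) := by omega
              have hlt2 : (i:ℕ)-1 < n₀ := by have := i.isLt; omega
              have hprev : (ZipV.v ⟨(i:ℕ)-1, hlt2⟩ : ZipV d n₀ g) ∈ Rd C := by
                apply hin
                show (i:ℕ) = (i:ℕ)-1+1
                omega
              have hle2 : (i:ℕ)-1+1 ≤ hgtP (peb C) := le_hgtP (mem_peb_of_red hprev)
              have hgt2' : hgtP (peb C) < (i:ℕ)+1 := hgt2
              have hi' : (i:ℕ) = hgtP (peb C) := by omega
              have hi : (i:ℕ) = hgt C := hi' 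
              exact flipH h0 hi hin hVc hred1 hpeb
        · -- x = w j t
          rw [hx] at hin hred1 hpeb hVc
          refine phi_step_insert hred1 ?_ ?_
          · unfold hgt
            rw [hpeb, hgtP_insert_nonv (fun i => by simp)]
          · intro j' hfam
            have hjj : j = j' := hfam
            subst hjj
            refine le_trans (cj_insert_le _ _ _) ?_
            have homg : omg (ZipV.w j t : ZipV d n₀ g) = min g ((t:ℕ)+1) := rfl
            have hmc : moveCost g (Move.compute 1 f vv) = 1 := rfl
            rcases Nat.eq_zero_or_pos (t:ℕ) with ht | ht
            · omega
            · have hlt2 : (t:ℕ) - 1 < 2*g := by have := t.isLt; omega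
              have hw : (ZipV.w j ⟨(t:ℕ)-1, hlt2⟩ : ZipV d n₀ g) ∈ Rd C := by
                apply hin
                refine ⟨rfl, ?_⟩
                show (t:ℕ) = (t:ℕ)-1+1
                omega
              have hmem : (ZipV.w j (⟨(t:ℕ)-1, hlt2⟩ : Fin (2*g)) : ZipV d n₀ g)
                  ∈ (Rd C).filter (famN j) := Finset.mem_filter.2 ⟨hw, rfl⟩
              have hsup := Finset.le_sup (f := omg) hmem
              have homg2 : omg (ZipV.w j (⟨(t:ℕ)-1, hlt2⟩ : Fin (2*g)) : ZipV d n₀ g)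
                  = min g ((t:ℕ)-1+1) := rfl
              unfold cj at *
              omega

lemma run_bound (hglb : 0 < g) {C C' : Conf (ZipV d n₀ g) 1}
    {ms : List (Move (ZipV d n₀ g) 1)}
    (h : Run (ZipE d n₀ g) (d+2) C ms C') : phi C' ≤ phi C + cost g ms := by
  induction h with
  | nil C => simp [MPP.cost]
  | cons hL hV hr ih =>
      rename_i C C'' mv ms'
      have hstep := step hglb hL hV
      have hc : cost g (mv :: ms') = moveCost g mv + cost g ms' := by
        simp [MPP.cost]
      omega

lemma phi_init : phi (MPP.init (ZipV d n₀ g) 1) = 0 := by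
  have h0 : hgt (MPP.init (ZipV d n₀ g) 1) = 0 := by
    refine Nat.le_zero.1 (hgtP_le fun i hi => absurd hi ?_)
    simp [peb, MPP.init]
  unfold phi
  rw [if_pos h0]
  rw [Finset.sum_eq_zero (fun j _ => by
    show cj j (Rd (MPP.init (ZipV d n₀ g) 1)) = 0
    unfold cj Rd MPP.init
    simp)]
  simp

lemma phi_final (hn : 2 ≤ n₀) {Cf : Conf (ZipV d n₀ g) 1}
    (hterm : Terminal (ZipE d n₀ g) Cf) : (1 + d*g) * n₀ ≤ phi Cf := by
  have hsink : IsSink (ZipE d n₀ g) (ZipV.v ⟨n₀-1, by omega⟩ : ZipV d n₀ g) := by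
    intro u hu
    cases u with
    | u j => exact hu
    | v i' =>
        have hval : (i':ℕ) = (n₀-1)+1 := hu
        have := i'.isLt
        omega
    | w j t => exact hu
  have hpebf : (ZipV.v ⟨n₀-1, by omega⟩ : ZipV d n₀ g) ∈ peb Cf := by
    rcases hterm _ hsink with h | ⟨j, h⟩
    · exact Finset.mem_union_right _ h
    · have hj : j = 0 := Subsingleton.elim _ _
      subst hj
      exact mem_peb_of_red h
  have hle' : (n₀-1)+1 ≤ hgt Cf := le_hgtP hpebf
  have hge : hgt Cf ≤ n₀ := hgtP_le_n _
  have hhf : hgt Cf = n₀ := by omega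
  unfold phi
  rw [hhf, if_neg (by omega)]
  exact Nat.le_add_right _ _

end ZLB

/-- For all `d, n₀, g ∈ ℤ⁺` with `n₀ ≥ 2`, every MPP pebbling
strategy of the zipper gadget `Z(d,n₀,g)` with a single processor (`k = 1`) and
memory bound `r = d+2` has total cost at least `(1 + d·g)·(n₀ − 1)`. -/
theorem stmt15 (d n₀ g : ℕ) (hd : 0 < d) (hn : 2 ≤ n₀) (hg : 0 < g) :
    ∀ ms : List (MPP.Move (ZipV d n₀ g) 1),
      MPP.IsPebbling (ZipE d n₀ g) (d + 2) ms →
      (1 + d * g) * (n₀ - 1) ≤ MPP.cost g ms := by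
  intro ms hms
  obtain ⟨Cf, hrun, hterm⟩ := hms
  have hb := ZLB.run_bound hg hrun
  rw [ZLB.phi_init] at hb
  have hfin := ZLB.phi_final hn hterm
  have hmul : (1 + d*g) * (n₀ - 1) ≤ (1 + d*g) * n₀ :=
    Nat.mul_le_mul_left _ (by omega)
  omega
end
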